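/- arXiv:1412.3309 — 5 statements merged into one kernel-verified Lean document; each statement's English description precedes it below -/
import Mathlib

section
/- Let n and s be positive integers. Then μ(n) = s if and only if there exists exactly one s-tuple of integers (d_1, …, d_s) satisfying d_1 > d_2 > … > d_{s−1} ≥ d_s > 0 and n = 2^{d_1} + 2^{d_2} + … + 2^{d_s} − s. -/
/-- binary digit sum -/
def s2 (n : ℕ) : ℕ := (Nat.digits 2 n).sum

@[simp] lemma s2_zero : s2 0 = 0 := by simp [s2]

lemma s2_def (n : ℕ) : s2 n = s2 (n / 2) + n % 2 := by
  rcases Nat.eq_zero_or_pos n with h | h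
  · simp [h]
  · unfold s2
    rw [Nat.digits_def' (by norm_num : 1 < 2) h, List.sum_cons]
    ring

@[simp] lemma s2_one : s2 1 = 1 := by simp [s2]

lemma s2_two_mul (n : ℕ) : s2 (2 * n) = s2 n := by
  rw [s2_def (2 * n)]
  have h1 : 2 * n / 2 = n := by omega
  have h2 : 2 * n % 2 = 0 := by omega
  rw [h1, h2]
  omega

lemma s2_two_mul_add_one (n : ℕ) : s2 (2 * n + 1) = s2 n + 1 := by
  rw [s2_def (2 * n + 1)]
  have h1 : (2 * n + 1) / 2 = n := by omega
  have h2 : (2 * n + 1) % 2 = 1 := by omega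
  rw [h1, h2]

lemma s2_eq_zero (n : ℕ) : s2 n = 0 ↔ n = 0 := by
  induction n using Nat.strong_induction_on with
  | _ n ih =>
    rcases Nat.eq_zero_or_pos n with h | h
    · simp [h]
    · rw [s2_def n]
      constructor
      · intro hz
        have h1 : s2 (n / 2) = 0 := by omega
        have h2 : n / 2 = 0 := (ih (n / 2) (Nat.div_lt_self h one_lt_two)).1 h1
        omega
      · omega

lemma s2_pos (n : ℕ) (h : 0 < n) : 1 ≤ s2 n := by
  have := (s2_eq_zero n).not
  omega

lemma s2_le_self (n : ℕ) : s2 n ≤ n := by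
  induction n using Nat.strong_induction_on with
  | _ n ih =>
    rcases Nat.eq_zero_or_pos n with h | h
    · simp [h]
    · rw [s2_def n]
      have := ih (n / 2) (Nat.div_lt_self h one_lt_two)
      omega

lemma s2_succ_le (n : ℕ) : s2 (n + 1) ≤ s2 n + 1 := by
  induction n using Nat.strong_induction_on with
  | _ n ih =>
    rcases Nat.even_or_odd n with ⟨c, hc⟩ | ⟨c, hc⟩
    · have hc' : n = 2 * c := by omega
      subst hc'
      rw [s2_two_mul_add_one, s2_two_mul]
    · subst hc
      have h1 : 2 * c + 1 + 1 = 2 * (c + 1) := by ring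
      rw [h1, s2_two_mul, s2_two_mul_add_one]
      rcases Nat.eq_zero_or_pos c with h | h
      · simp [h]
      · have := ih c (by omega)
        omega

lemma s2_add_le_aux (N : ℕ) : ∀ a b, a + b ≤ N → s2 (a + b) ≤ s2 a + s2 b := by
  induction N with
  | zero =>
    intro a b h
    have : a = 0 ∧ b = 0 := by omega
    simp [this.1, this.2]
  | succ N ih =>
    intro a b hN
    rcases Nat.eq_zero_or_pos (a + b) with h | h
    · simp [(by omega : a = 0), (by omega : b = 0)]
    · have ha := (Nat.div_add_mod a 2).symm
      have hb := (Nat.div_add_mod b 2).symm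
      have hma : a % 2 = 0 ∨ a % 2 = 1 := by omega
      have hmb : b % 2 = 0 ∨ b % 2 = 1 := by omega
      rw [s2_def a, s2_def b]
      have hlt : a / 2 + b / 2 ≤ N := by omega
      have ihab := ih (a / 2) (b / 2) hlt
      rcases hma with hma | hma <;> rcases hmb with hmb | hmb
      · have h2 : a + b = 2 * (a / 2 + b / 2) := by omega
        rw [h2, s2_two_mul]; omega
      · have h2 : a + b = 2 * (a / 2 + b / 2) + 1 := by omega
        rw [h2, s2_two_mul_add_one]; omega
      · have h2 : a + b = 2 * (a / 2 + b / 2) + 1 := by omega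
        rw [h2, s2_two_mul_add_one]; omega
      · have h2 : a + b = 2 * (a / 2 + b / 2 + 1) := by omega
        rw [h2, s2_two_mul]
        have h3 := s2_succ_le (a / 2 + b / 2)
        omega

lemma s2_add_le (a b : ℕ) : s2 (a + b) ≤ s2 a + s2 b :=
  s2_add_le_aux (a + b) a b le_rfl

lemma s2_le_sub (a b : ℕ) (h : b ≤ a) : s2 a ≤ s2 (a - b) + s2 b := by
  have h1 : a - b + b = a := by omega
  calc s2 a = s2 (a - b + b) := by rw [h1]
    _ ≤ s2 (a - b) + s2 b := s2_add_le _ _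

lemma s2_pow (t : ℕ) : s2 (2 ^ t) = 1 := by
  induction t with
  | zero => simp
  | succ t ih => rw [pow_succ, mul_comm, s2_two_mul, ih]

lemma s2_split (t a b : ℕ) (h : b < 2 ^ t) : s2 (2 ^ t * a + b) = s2 a + s2 b := by
  induction t generalizing b with
  | zero =>
    have hb : b = 0 := by omega
    simp [hb]
  | succ t ih =>
    have hp : (2:ℕ) ^ (t+1) = 2 * 2 ^ t := by ring
    have h2 : b / 2 < 2 ^ t := by omega
    have key : 2 ^ (t+1) * a + b = 2 * (2 ^ t * a + b / 2) + b % 2 := by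
      rw [hp, mul_assoc]
      omega
    rcases (by omega : b % 2 = 0 ∨ b % 2 = 1) with hm | hm
    · rw [key, hm, add_zero, s2_two_mul, ih _ h2, s2_def b, hm, add_zero]
    · rw [key, hm, s2_two_mul_add_one, ih _ h2, s2_def b, hm]
      ring

lemma s2_compl (t x : ℕ) (h : x < 2 ^ t) : s2 (2 ^ t - 1 - x) + s2 x = t := by
  induction t generalizing x with
  | zero =>
    have hx : x = 0 := by omega
    simp [hx]
  | succ t ih =>
    have hp : (2:ℕ) ^ (t+1) = 2 * 2 ^ t := by ring
    have h2 : x / 2 < 2 ^ t := by omega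
    have h3 : 1 ≤ (2:ℕ) ^ t := Nat.one_le_two_pow
    rcases (by omega : x % 2 = 0 ∨ x % 2 = 1) with hm | hm
    · have key : 2 ^ (t+1) - 1 - x = 2 * (2 ^ t - 1 - x / 2) + 1 := by omega
      rw [key, s2_two_mul_add_one, s2_def x, hm, add_zero]
      have := ih (x / 2) h2
      omega
    · have key : 2 ^ (t+1) - 1 - x = 2 * (2 ^ t - 1 - x / 2) := by omega
      rw [key, s2_two_mul, s2_def x, hm]
      have := ih (x / 2) h2
      omega

lemma s2_le_of_lt_pow (t x : ℕ) (h : x < 2 ^ t) : s2 x ≤ t := by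
  have := s2_compl t x h
  omega

lemma pow_s2_le (n : ℕ) : 2 ^ s2 n ≤ n + 1 := by
  induction n using Nat.strong_induction_on with
  | _ n ih =>
    rcases Nat.eq_zero_or_pos n with h | h
    · simp [h]
    · rw [s2_def n]
      have h1 := ih (n / 2) (Nat.div_lt_self h one_lt_two)
      rcases (by omega : n % 2 = 0 ∨ n % 2 = 1) with hm | hm
      · rw [hm, add_zero]
        omega
      · rw [hm, pow_succ]
        omega

lemma s2_pred_odd (q : ℕ) (h : q % 2 = 1) : s2 (q - 1) + 1 = s2 q := by
  obtain ⟨c, hc⟩ : ∃ c, q = 2 * c + 1 := ⟨q / 2, by omega⟩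
  subst hc
  simp [s2_two_mul_add_one, s2_two_mul]

lemma L3 (v q j : ℕ) (hq : q % 2 = 1) (hj : 1 ≤ j) (hjv : 2 * j ≤ 2 ^ v) :
    s2 (2 ^ v * q - 2 * j) + s2 (j - 1) + 2 = v + s2 q := by
  obtain ⟨c, hc⟩ : ∃ c, q = c + 1 := ⟨q - 1, by omega⟩
  have e0 : 2 ^ v * q = 2 ^ v * c + 2 ^ v := by rw [hc, mul_add, mul_one]
  have e1 : 2 ^ v * q - 2 * j = 2 ^ v * c + (2 ^ v - 2 * j) := by omega
  rw [e1, s2_split v c (2 ^ v - 2 * j) (by omega)]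
  have e2 : 2 ^ v - 2 * j = 2 ^ v - 1 - (2 * j - 1) := by omega
  have e3 : s2 (2 ^ v - 1 - (2 * j - 1)) + s2 (2 * j - 1) = v :=
    s2_compl v (2 * j - 1) (by omega)
  have e4 : 2 * j - 1 = 2 * (j - 1) + 1 := by omega
  have e5 : s2 (2 * j - 1) = s2 (j - 1) + 1 := by rw [e4, s2_two_mul_add_one]
  have e6 : s2 (q - 1) + 1 = s2 q := s2_pred_odd q hq
  have e7 : q - 1 = c := by omega
  rw [e7] at e6
  rw [e2]
  omega

lemma exists_two_factor (m : ℕ) (h : 0 < m) : ∃ v q, m = 2 ^ v * q ∧ q % 2 = 1 := by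
  induction m using Nat.strong_induction_on with
  | _ m ih =>
    rcases (by omega : m % 2 = 1 ∨ m % 2 = 0) with hm | hm
    · exact ⟨0, m, by simp, hm⟩
    · have h2 : m / 2 < m := Nat.div_lt_self h one_lt_two
      have h3 : 0 < m / 2 := by omega
      obtain ⟨v, q, hvq, hq⟩ := ih (m / 2) h2 h3
      refine ⟨v + 1, q, ?_, hq⟩
      have hm2 : m = 2 * (m / 2) := by omega
      rw [hm2, hvq, pow_succ]
      ring

lemma s2_sum_le {α : Type*} (t : Finset α) (f : α → ℕ) :
    s2 (∑ i ∈ t, f i) ≤ ∑ i ∈ t, s2 (f i) := by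
  classical
  induction t using Finset.induction_on with
  | empty => simp
  | insert a t hx ih =>
    rw [Finset.sum_insert hx, Finset.sum_insert hx]
    exact le_trans (s2_add_le _ _) (by omega)

lemma sum_pow_s2_le (r : ℕ) (e : Fin r → ℕ) : s2 (∑ i, 2 ^ e i) ≤ r := by
  calc s2 (∑ i, 2 ^ e i) ≤ ∑ i : Fin r, s2 (2 ^ e i) := s2_sum_le _ _
    _ = ∑ i : Fin r, 1 := by simp [s2_pow]
    _ = r := by simp

lemma le_sum_pow (r : ℕ) (e : Fin r → ℕ) : r ≤ ∑ i, 2 ^ e i := by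
  calc r = ∑ i : Fin r, 1 := by simp
    _ ≤ ∑ i, 2 ^ e i := Finset.sum_le_sum (fun i _ => Nat.one_le_two_pow)

lemma sum_ite_one_zero (r a : ℕ) (h : a ≤ r) :
    ∑ i : Fin r, 2 ^ (if (i : ℕ) < a then 1 else 0) = r + a := by
  induction r with
  | zero => simp at h ⊢; omega
  | succ r ih =>
    rcases (by omega : a = r + 1 ∨ a ≤ r) with ha | ha
    · have hall : ∀ i : Fin (r + 1), (2:ℕ) ^ (if (i : ℕ) < a then 1 else 0) = 2 := by
        intro i
        have : (i : ℕ) < a := by omega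
        simp [this]
      rw [Finset.sum_congr rfl (fun i _ => hall i)]
      simp
      omega
    · rw [Fin.sum_univ_castSucc]
      have hlast : ((Fin.last r : Fin (r+1)) : ℕ) = r := rfl
      have h2 : ¬ ((Fin.last r : Fin (r+1)) : ℕ) < a := by omega
      rw [if_neg h2]
      have h3 : ∀ i : Fin r, ((Fin.castSucc i : Fin (r+1)) : ℕ) = (i : ℕ) := fun i => rfl
      simp only [h3]
      rw [ih ha]
      simp
      omega

lemma exists_rep (M : ℕ) : ∀ r, s2 M ≤ r → r ≤ M → ∃ e : Fin r → ℕ, M = ∑ i, 2 ^ e i := by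
  induction M using Nat.strong_induction_on with
  | _ M ih =>
    intro r h1 h2
    rcases Nat.eq_zero_or_pos M with hM | hM
    · subst hM
      refine ⟨fun _ => 0, ?_⟩
      have : r = 0 := by omega
      subst this
      simp
    · rcases (by omega : r = M ∨ r < M) with hr | hr
      · refine ⟨fun _ => 0, ?_⟩
        simp only [pow_zero, Finset.sum_const, Finset.card_univ, Fintype.card_fin,
          smul_eq_mul, mul_one]
        omega
      · rcases (by omega : M % 2 = 1 ∨ M % 2 = 0) with hm | hm
        · -- M odd : peel a 2^0 term
          have hs : 1 ≤ s2 M := s2_pos M hM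
          obtain ⟨r', hr'⟩ : ∃ r', r = r' + 1 := ⟨r - 1, by omega⟩
          subst hr'
          have hsM : s2 (M - 1) + 1 = s2 M := s2_pred_odd M hm
          obtain ⟨e', he'⟩ := ih (M - 1) (by omega) r' (by omega) (by omega)
          refine ⟨Fin.cons 0 e', ?_⟩
          rw [Fin.sum_univ_succ]
          simp only [Fin.cons_succ, Fin.cons_zero, pow_zero]
          omega
        · -- M even
          obtain ⟨c, hc⟩ : ∃ c, M = 2 * c := ⟨M / 2, by omega⟩
          subst hc
          have hsc : s2 c = s2 (2 * c) := (s2_two_mul c).symm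
          rcases (by omega : r ≤ c ∨ c < r) with hrc | hrc
          · obtain ⟨e', he'⟩ := ih c (by omega) r (by omega) hrc
            refine ⟨fun i => e' i + 1, ?_⟩
            show 2 * c = ∑ i : Fin r, 2 ^ (e' i + 1)
            have : ∑ i : Fin r, 2 ^ (e' i + 1) = 2 * ∑ i : Fin r, 2 ^ e' i := by
              rw [Finset.mul_sum]
              apply Finset.sum_congr rfl
              intro i _
              rw [pow_succ]
              ring
            omega
          · -- c < r < 2c : use (M - r) twos and (2r - M) ones
            refine ⟨fun i => if (i : ℕ) < 2 * c - r then 1 else 0, ?_⟩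
            rw [sum_ite_one_zero r (2 * c - r) (by omega)]
            omega

lemma P_iff (n r : ℕ) :
    (∃ d : Fin r → ℕ, (∀ i, 0 < d i) ∧ n = ∑ i, (2 ^ d i - 1)) ↔
      ((n + r) % 2 = 0 ∧ s2 (n + r) ≤ r ∧ r ≤ n) := by
  constructor
  · rintro ⟨d, hd, hsum⟩
    have h1 : ∑ i : Fin r, (2 ^ d i - 1 + 1) = ∑ i : Fin r, (2 ^ d i - 1) + r := by
      rw [Finset.sum_add_distrib]
      simp
    have h2 : ∀ i : Fin r, 2 ^ d i - 1 + 1 = 2 ^ d i :=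
      fun i => Nat.sub_add_cancel Nat.one_le_two_pow
    have key : n + r = ∑ i, 2 ^ d i := by
      rw [Finset.sum_congr rfl (fun i _ => (h2 i).symm)]
      omega
    have h3 : ∀ i : Fin r, 2 ^ d i = 2 * 2 ^ (d i - 1) := by
      intro i
      obtain ⟨x, hx⟩ : ∃ x, d i = x + 1 := ⟨d i - 1, by have := hd i; omega⟩
      rw [hx, Nat.add_sub_cancel, pow_succ]
      ring
    have key2 : n + r = 2 * ∑ i, 2 ^ (d i - 1) := by
      rw [key, Finset.sum_congr rfl (fun i _ => h3 i), ← Finset.mul_sum]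
    have hK1 : s2 (∑ i : Fin r, 2 ^ (d i - 1)) ≤ r := sum_pow_s2_le r _
    have hK2 : r ≤ ∑ i : Fin r, 2 ^ (d i - 1) := le_sum_pow r _
    have hK3 : s2 (n + r) = s2 (∑ i : Fin r, 2 ^ (d i - 1)) := by
      rw [key2, s2_two_mul]
    refine ⟨by omega, by omega, by omega⟩
  · rintro ⟨h1, h2, h3⟩
    obtain ⟨K, hK⟩ : ∃ K, n + r = 2 * K := ⟨(n + r) / 2, by omega⟩
    have hs2K : s2 K = s2 (n + r) := by rw [hK, s2_two_mul]
    obtain ⟨e, he⟩ := exists_rep K r (by omega) (by omega)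
    refine ⟨fun i => e i + 1, fun i => Nat.succ_pos (e i), ?_⟩
    show n = ∑ i : Fin r, (2 ^ (e i + 1) - 1)
    have h4 : ∑ i : Fin r, 2 ^ (e i + 1) = 2 * ∑ i : Fin r, 2 ^ e i := by
      rw [Finset.mul_sum]
      exact Finset.sum_congr rfl (fun i _ => by rw [pow_succ]; ring)
    have h5 : ∑ i : Fin r, ((2 ^ (e i + 1) - 1) + 1) = ∑ i : Fin r, (2 ^ (e i + 1) - 1) + r := by
      rw [Finset.sum_add_distrib]
      simp
    have h7 : ∑ i : Fin r, ((2 ^ (e i + 1) - 1) + 1) = ∑ i : Fin r, 2 ^ (e i + 1) :=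
      Finset.sum_congr rfl (fun i _ => Nat.sub_add_cancel Nat.one_le_two_pow)
    omega

def GoodT (s : ℕ) (d : Fin s → ℕ) (m : ℕ) : Prop :=
  (∀ i j : Fin s, i < j → (j : ℕ) + 1 < s → d j < d i) ∧
  (∀ i j : Fin s, i < j → d j ≤ d i) ∧
  (∀ i, 0 < d i) ∧
  m = ∑ i, 2 ^ d i

lemma Good_tail {s : ℕ} {d : Fin (s + 1) → ℕ} {m : ℕ} (h : GoodT (s + 1) d m) :
    GoodT s (fun i => d i.succ) (∑ i : Fin s, 2 ^ d i.succ) ∧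
      m = 2 ^ d 0 + ∑ i : Fin s, 2 ^ d i.succ := by
  obtain ⟨h1, h2, h3, h4⟩ := h
  refine ⟨⟨?_, ?_, ?_, rfl⟩, ?_⟩
  · intro i j hij hj
    exact h1 i.succ j.succ (by simpa using hij) (by simp [Fin.val_succ]; omega)
  · intro i j hij
    exact h2 i.succ j.succ (by simpa using hij)
  · intro i; exact h3 i.succ
  · rw [h4, Fin.sum_univ_succ]

lemma Good_le_head {s : ℕ} {d : Fin (s + 1) → ℕ} {m : ℕ} (h : GoodT (s + 1) d m)
    (i : Fin (s + 1)) : d i ≤ d 0 := by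
  rcases eq_or_ne i 0 with rfl | hi
  · exact le_rfl
  · exact h.2.1 0 i (Fin.pos_of_ne_zero hi)

lemma Good_term_le {s : ℕ} {d : Fin s → ℕ} {m : ℕ} (h : GoodT s d m) (i : Fin s) :
    2 ^ d i ≤ m := by
  rw [h.2.2.2]
  exact Finset.single_le_sum (f := fun i => 2 ^ d i) (fun j _ => Nat.zero_le _)
    (Finset.mem_univ i)

lemma Good_bound : ∀ s (d : Fin (s + 1) → ℕ) (m : ℕ), GoodT (s + 1) d m →
    2 ^ d 0 ≤ m ∧ m ≤ 2 ^ (d 0 + 1) := by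
  intro s
  induction s with
  | zero =>
    intro d m h
    have hm : m = 2 ^ d 0 := by rw [h.2.2.2, Fin.sum_univ_one]
    have h1 : (0:ℕ) < 2 ^ d 0 := pow_pos (by norm_num) _
    rw [hm, pow_succ]
    omega
  | succ s ih =>
    intro d m h
    obtain ⟨ht, hm⟩ := Good_tail h
    have ihb := ih _ _ ht
    have hlow : 2 ^ d 0 ≤ m := Good_term_le h 0
    refine ⟨hlow, ?_⟩
    rcases Nat.eq_zero_or_pos s with rfl | hs
    · -- length 2
      have hm1 : (∑ i : Fin (0 + 1), 2 ^ d i.succ) = 2 ^ d (Fin.succ 0) :=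
        Fin.sum_univ_one _
      have hw : d (Fin.succ 0) ≤ d 0 := h.2.1 0 (Fin.succ 0) (Fin.succ_pos 0)
      have h2 : 2 ^ d (Fin.succ 0) ≤ 2 ^ d 0 := Nat.pow_le_pow_right (by norm_num) hw
      rw [pow_succ]
      omega
    · -- length ≥ 3
      have hst : d (Fin.succ 0) < d 0 := by
        apply h.1 0 (Fin.succ 0) (Fin.succ_pos 0)
        simp [Fin.val_succ]
        omega
      have h3 : 2 ^ (d (Fin.succ 0) + 1) ≤ 2 ^ d 0 := Nat.pow_le_pow_right (by norm_num) (by omega)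
      rw [pow_succ]
      omega

lemma Good_unique : ∀ s (d d' : Fin s → ℕ) (m : ℕ), GoodT s d m → GoodT s d' m → d = d' := by
  intro s
  induction s with
  | zero =>
    intro d d' m _ _
    funext i
    exact i.elim0
  | succ s ih =>
    intro d d' m h h'
    have key : ∀ (e e' : Fin (s + 1) → ℕ), GoodT (s + 1) e m → GoodT (s + 1) e' m →
        e 0 < e' 0 → False := by
      intro e e' he he' hlt
      have h1 : 2 ^ e' 0 ≤ m := Good_term_le he' 0
      have h2 : m ≤ 2 ^ (e 0 + 1) := (Good_bound s e m he).2
      have h3 : 2 ^ (e 0 + 1) ≤ 2 ^ e' 0 := Nat.pow_le_pow_right (by norm_num) (by omega)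
      have hme : m = 2 ^ e' 0 := by omega
      obtain ⟨ht', hm'⟩ := Good_tail he'
      rcases Nat.eq_zero_or_pos s with rfl | hs
      · -- length 1 : e 0 and e' 0 both give m exactly
        have hme2 : m = 2 ^ e 0 := by rw [he.2.2.2, Fin.sum_univ_one]
        have : 2 ^ e 0 < 2 ^ e' 0 := Nat.pow_lt_pow_right (by norm_num) hlt
        omega
      · have h4 : (1:ℕ) ≤ ∑ i : Fin s, 2 ^ e' i.succ := by
          calc (1:ℕ) ≤ s := hs
            _ ≤ ∑ i : Fin s, 2 ^ e' i.succ := le_sum_pow s _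
        omega
    have hd0 : d 0 = d' 0 := by
      rcases lt_trichotomy (d 0) (d' 0) with hlt | heq | hlt
      · exact absurd (key d d' h h' hlt) (fun x => x)
      · exact heq
      · exact absurd (key d' d h' h hlt) (fun x => x)
    obtain ⟨ht, hm⟩ := Good_tail h
    obtain ⟨ht', hm'⟩ := Good_tail h'
    have hsum : ∑ i : Fin s, 2 ^ d i.succ = ∑ i : Fin s, 2 ^ d' i.succ := by
      rw [hd0] at hm
      omega
    rw [← hsum] at ht'
    have htails := ih _ _ _ ht ht'
    funext i
    refine Fin.cases ?_ ?_ i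
    · exact hd0
    · intro j
      exact congrFun htails j

lemma Good_cons {s : ℕ} {d' : Fin s → ℕ} {m' : ℕ} (b : ℕ) (h : GoodT s d' m')
    (hs : 1 ≤ s) (hb1 : 0 < b)
    (hw : ∀ i : Fin s, d' i ≤ b) (hst : 2 ≤ s → ∀ i : Fin s, d' i < b) :
    GoodT (s + 1) (Fin.cons b d') (2 ^ b + m') := by
  obtain ⟨h1, h2, h3, h4⟩ := h
  refine ⟨?_, ?_, ?_, ?_⟩
  · intro i j
    refine Fin.cases ?_ (fun j' => ?_) j
    · intro h0 _; exact absurd h0 (Fin.not_lt_zero _)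
    · refine Fin.cases ?_ (fun i' => ?_) i
      · intro _ hjlt
        rw [Fin.cons_succ, Fin.cons_zero]
        have hv : ((j'.succ : Fin (s+1)) : ℕ) = (j' : ℕ) + 1 := Fin.val_succ j'
        have hs2 : 2 ≤ s := by omega
        exact hst hs2 j'
      · intro hij hjlt
        rw [Fin.cons_succ, Fin.cons_succ]
        have hij2 : i' < j' := by simpa using hij
        have hv : ((j'.succ : Fin (s+1)) : ℕ) = (j' : ℕ) + 1 := Fin.val_succ j'
        exact h1 i' j' hij2 (by omega)
  · intro i j
    refine Fin.cases ?_ (fun j' => ?_) j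
    · intro h0; exact absurd h0 (Fin.not_lt_zero _)
    · refine Fin.cases ?_ (fun i' => ?_) i
      · intro _
        rw [Fin.cons_succ, Fin.cons_zero]
        exact hw j'
      · intro hij
        rw [Fin.cons_succ, Fin.cons_succ]
        exact h2 i' j' (by simpa using hij)
  · intro i
    refine Fin.cases ?_ ?_ i
    · rw [Fin.cons_zero]; exact hb1
    · intro i'; rw [Fin.cons_succ]; exact h3 i'
  · rw [Fin.sum_univ_succ, Fin.cons_zero, h4]
    congr 1

lemma pow_le_mono {a b : ℕ} (h : a ≤ b) : (2:ℕ) ^ a ≤ 2 ^ b :=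
  Nat.pow_le_pow_right (by norm_num) h

lemma pow_lt_exp {a b : ℕ} (h : 2 ^ a < 2 ^ b) : a < b := by
  by_contra hab
  push_neg at hab
  exact absurd (pow_le_mono hab) (by omega)

lemma pow_le_exp {a b : ℕ} (h : 2 ^ a ≤ 2 ^ b) : a ≤ b := by
  by_contra hab
  push_neg at hab
  have := pow_le_mono (show b + 1 ≤ a by omega)
  have h2 : (2:ℕ) ^ (b + 1) = 2 ^ b * 2 := pow_succ 2 b
  have h3 : 1 ≤ (2:ℕ) ^ b := Nat.one_le_two_pow
  omega

lemma Good_chain {s : ℕ} {d : Fin s → ℕ} {m : ℕ} (h : GoodT s d m) (h0 : 0 < s) :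
    ∀ jn (hj1 : jn + 1 < s) (hj2 : jn < s), d ⟨jn, hj2⟩ + jn ≤ d ⟨0, h0⟩ := by
  intro jn
  induction jn with
  | zero =>
    intro _ _
    exact le_of_eq rfl
  | succ jn ih =>
    intro hj1 hj2
    have hjn : jn < s := by omega
    have h1 := ih (by omega) hjn
    have h2 : d ⟨jn + 1, hj2⟩ < d ⟨jn, hjn⟩ := by
      apply h.1 ⟨jn, hjn⟩ ⟨jn + 1, hj2⟩ (Fin.mk_lt_mk.mpr (by omega))
      exact hj1
    omega

lemma Good_geom : ∀ s v, 1 ≤ s → s ≤ v →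
    ∃ d : Fin s → ℕ, GoodT s d (2 ^ v) ∧ (∀ i, d i ≤ v) ∧ (2 ≤ s → ∀ i, d i < v) := by
  intro s
  induction s with
  | zero => intro v h; omega
  | succ s ih =>
    intro v hs1 hsv
    rcases Nat.eq_zero_or_pos s with rfl | hs
    · -- s + 1 = 1
      refine ⟨fun _ => v, ⟨?_, ?_, ?_, ?_⟩, fun _ => le_rfl, by omega⟩
      · intro i j hij _
        have := i.isLt; have := j.isLt
        have : (i : ℕ) < (j : ℕ) := hij
        omega
      · intro i j hij
        have := i.isLt; have := j.isLt
        have : (i : ℕ) < (j : ℕ) := hij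
        omega
      · intro _; show 0 < v; omega
      · rw [Fin.sum_univ_one]
    · -- s ≥ 1
      obtain ⟨d', hd', hw', hst'⟩ := ih (v - 1) hs (by omega)
      have hvpos : 1 ≤ v := by omega
      have hcons := Good_cons (v - 1) hd' hs (by omega)
        (fun i => by have := hw' i; omega)
        (fun h2 i => by have := hst' h2 i; omega)
      have hpow : 2 ^ v = 2 ^ (v - 1) + 2 ^ (v - 1) := by
        obtain ⟨v', hv'⟩ : ∃ v', v = v' + 1 := ⟨v - 1, by omega⟩
        subst hv'
        rw [Nat.add_sub_cancel, pow_succ]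
        omega
      refine ⟨Fin.cons (v - 1) d', by rw [hpow]; exact hcons, ?_, ?_⟩
      · intro i
        refine Fin.cases ?_ (fun i' => ?_) i
        · rw [Fin.cons_zero]; omega
        · rw [Fin.cons_succ]; have := hw' i'; omega
      · intro _ i
        refine Fin.cases ?_ (fun i' => ?_) i
        · rw [Fin.cons_zero]; omega
        · rw [Fin.cons_succ]; have := hw' i'; omega

lemma Good_exists : ∀ q, q % 2 = 1 → ∀ v s, 1 ≤ v →
    (s2 q = s ∨ (s2 q < s ∧ s + 1 ≤ v + s2 q)) → ∃ d : Fin s → ℕ, GoodT s d (2 ^ v * q) := by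
  intro q
  induction q using Nat.strong_induction_on with
  | _ q ih =>
    intro hqodd v s hv hyp
    have hq1 : 1 ≤ q := by omega
    have hk : 1 ≤ s2 q := s2_pos q (by omega)
    rcases eq_or_ne q 1 with rfl | hq2
    · -- q = 1
      have hsv : 1 ≤ s ∧ s ≤ v := by
        rcases hyp with h | h
        · simp at h; omega
        · simp at h; omega
      obtain ⟨d, hd, -⟩ := Good_geom s v hsv.1 hsv.2
      exact ⟨d, by rwa [mul_one]⟩
    · -- q ≥ 3
      have hq3 : 3 ≤ q := by omega
      obtain ⟨c', hc⟩ : ∃ c', Nat.log 2 q = c' + 1 := by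
        have : 0 < Nat.log 2 q := Nat.log_pos (by norm_num) (by omega)
        exact ⟨Nat.log 2 q - 1, by omega⟩
      have hc1 : 2 ^ (c' + 1) ≤ q := by
        have := Nat.pow_log_le_self 2 (show q ≠ 0 by omega)
        rwa [hc] at this
      have hc2 : q < 2 ^ (c' + 1) * 2 := by
        have := Nat.lt_pow_succ_log_self (by norm_num : 1 < 2) q
        rw [hc] at this
        rwa [pow_succ] at this
      have hpow : (2:ℕ) ^ (c' + 1) = 2 ^ c' * 2 := pow_succ 2 c'
      set q₁ := q - 2 ^ (c' + 1) with hq₁def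
      have hq₁odd : q₁ % 2 = 1 := by omega
      have hq₁lt : q₁ < 2 ^ (c' + 1) := by omega
      have hqe : q = 2 ^ (c' + 1) * 1 + q₁ := by omega
      have hsplit : s2 q = s2 q₁ + 1 := by
        rw [hqe, s2_split _ _ _ hq₁lt, s2_one]
        omega
      have hk₁ : 1 ≤ s2 q₁ := s2_pos _ (by omega)
      obtain ⟨s', rfl⟩ : ∃ s', s = s' + 1 := by
        rcases hyp with h | h
        · exact ⟨s - 1, by omega⟩
        · exact ⟨s - 1, by omega⟩
      have hyp' : s2 q₁ = s' ∨ (s2 q₁ < s' ∧ s' + 1 ≤ v + s2 q₁) := by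
        rcases hyp with h | h
        · exact Or.inl (by omega)
        · exact Or.inr (by omega)
      have hs'1 : 1 ≤ s' := by
        rcases hyp' with h | h <;> omega
      obtain ⟨d', hd'⟩ := ih q₁ (by omega) hq₁odd v s' hv hyp'
      have hterm : ∀ i, d' i < v + (c' + 1) := by
        intro i
        have h1 : 2 ^ d' i ≤ 2 ^ v * q₁ := Good_term_le hd' i
        have h2 : 2 ^ v * q₁ < 2 ^ (v + (c' + 1)) := by
          rw [pow_add]
          exact mul_lt_mul_of_pos_left hq₁lt (pow_pos (by norm_num) v)
        exact pow_lt_exp (by omega)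
      have hcons := Good_cons (v + (c' + 1)) hd' hs'1 (by omega)
        (fun i => le_of_lt (hterm i)) (fun _ i => hterm i)
      have hm : 2 ^ v * q = 2 ^ (v + (c' + 1)) + 2 ^ v * q₁ := by
        have hql : q = 2 ^ (c' + 1) + q₁ := by omega
        rw [hql, mul_add, ← pow_add]
      exact ⟨Fin.cons (v + (c' + 1)) d', by rw [hm]; exact hcons⟩

lemma Good_to_U : ∀ s (d : Fin (s + 1) → ℕ) (m : ℕ), GoodT (s + 1) d m →
    ∃ v q, m = 2 ^ v * q ∧ q % 2 = 1 ∧ 1 ≤ v ∧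
      (s2 m = s + 1 ∨ (s2 m < s + 1 ∧ s + 2 ≤ v + s2 m)) := by
  intro s
  induction s with
  | zero =>
    intro d m h
    have hm : m = 2 ^ d 0 := by rw [h.2.2.2, Fin.sum_univ_one]
    refine ⟨d 0, 1, by rw [hm, mul_one], rfl, h.2.2.1 0, Or.inl ?_⟩
    rw [hm, s2_pow]
  | succ s ih =>
    intro d m h
    obtain ⟨ht, hm⟩ := Good_tail h
    set m₁ := ∑ i : Fin (s + 1), 2 ^ d i.succ with hm₁def
    obtain ⟨v₁, q₁, hm₁, hq₁, hv₁, halt⟩ := ih (fun i => d i.succ) m₁ ht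
    have hub : m₁ ≤ 2 ^ d 0 := by
      rcases Nat.eq_zero_or_pos s with rfl | hs
      · have hone : m₁ = 2 ^ d (Fin.succ 0) := Fin.sum_univ_one _
        have hwk : d (Fin.succ 0) ≤ d 0 := h.2.1 0 (Fin.succ 0) (Fin.succ_pos 0)
        have := Nat.pow_le_pow_right (show 1 ≤ 2 by norm_num) hwk
        omega
      · have hb := (Good_bound s (fun i => d i.succ) m₁ ht).2
        have hst : d (Fin.succ 0) < d 0 := by
          apply h.1 0 (Fin.succ 0) (Fin.succ_pos 0)
          simp [Fin.val_succ]
          omega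
        have hb2 : m₁ ≤ 2 ^ (d (Fin.succ 0) + 1) := hb
        have := Nat.pow_le_pow_right (show 1 ≤ 2 by norm_num) (show d (Fin.succ 0) + 1 ≤ d 0 by omega)
        omega
    rcases lt_or_eq_of_le hub with hlt | heq
    · -- m₁ < 2 ^ d 0
      have hs2 : s2 m = s2 m₁ + 1 := by
        have hme : m = 2 ^ d 0 * 1 + m₁ := by rw [mul_one]; exact hm
        rw [hme, s2_split _ _ _ hlt, s2_one]
        omega
      have hlow : 2 ^ v₁ ≤ m₁ := by
        rw [hm₁]
        calc 2 ^ v₁ = 2 ^ v₁ * 1 := by ring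
          _ ≤ 2 ^ v₁ * q₁ := Nat.mul_le_mul_left _ (by omega)
      have hv₁lt : v₁ < d 0 := pow_lt_exp (by omega)
      obtain ⟨w, hw, hw1⟩ : ∃ w, d 0 = v₁ + w ∧ 1 ≤ w := ⟨d 0 - v₁, by omega, by omega⟩
      have hmeq : m = 2 ^ v₁ * (2 ^ w + q₁) := by
        rw [hm, hm₁, hw, pow_add, mul_add]
      have hwodd : (2 ^ w + q₁) % 2 = 1 := by
        obtain ⟨w', rfl⟩ : ∃ w', w = w' + 1 := ⟨w - 1, by omega⟩
        have : (2:ℕ) ^ (w' + 1) = 2 ^ w' * 2 := pow_succ 2 w'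
        omega
      refine ⟨v₁, 2 ^ w + q₁, hmeq, hwodd, hv₁, ?_⟩
      rcases halt with hcase | hcase
      · exact Or.inl (by omega)
      · exact Or.inr (by omega)
    · -- m₁ = 2 ^ d 0, so m = 2 ^ (d 0 + 1)
      have hmeq : m = 2 ^ (d 0 + 1) := by rw [hm, ← heq, pow_succ]; omega
      have hd0s : s + 1 ≤ d 0 := by
        rcases Nat.eq_zero_or_pos s with rfl | hs
        · -- length 2 : d 0 ≥ 1
          have := h.2.2.1 0
          omega
        · -- length ≥ 3
          have hj2 : s - 1 < s + 1 := by omega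
          have h0 : 0 < s + 1 := by omega
          have hchain : d (Fin.succ ⟨s - 1, hj2⟩) + (s - 1) ≤ d (Fin.succ ⟨0, h0⟩) :=
            Good_chain ht h0 (s - 1) (by omega) hj2
          have hpos : 1 ≤ d (Fin.succ ⟨s - 1, hj2⟩) := ht.2.2.1 ⟨s - 1, hj2⟩
          have hst : d (Fin.succ ⟨0, h0⟩) < d 0 := by
            apply h.1 0 (Fin.succ ⟨0, h0⟩) (Fin.succ_pos _)
            simp [Fin.val_succ]
            omega
          omega
      refine ⟨d 0 + 1, 1, by rw [hmeq, mul_one], rfl, by omega, Or.inr ?_⟩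
      rw [hmeq, s2_pow]
      omega

/-- `μ(n)`: the smallest `r` such that `n` can be written as a sum of `r` numbers
of the form `2^d - 1` with `d > 0`. -/
noncomputable def muNat (n : ℕ) : ℕ :=
  sInf {r : ℕ | ∃ d : Fin r → ℕ, (∀ i, 0 < d i) ∧ n = ∑ i, (2 ^ d i - 1)}

lemma s2_pow_mul (v q : ℕ) : s2 (2 ^ v * q) = s2 q := by
  have h := s2_split v q 0 (pow_pos (by norm_num : (0:ℕ) < 2) v)
  simpa using h

lemma mu_eq (n s : ℕ) (hn : 0 < n) :
    muNat n = s ↔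
      (((n + s) % 2 = 0 ∧ s2 (n + s) ≤ s ∧ s ≤ n) ∧
        ∀ r, r < s → ¬((n + r) % 2 = 0 ∧ s2 (n + r) ≤ r ∧ r ≤ n)) := by
  unfold muNat
  set S := {r : ℕ | ∃ d : Fin r → ℕ, (∀ i, 0 < d i) ∧ n = ∑ i, (2 ^ d i - 1)} with hS
  have hmem : ∀ r, r ∈ S ↔ ((n + r) % 2 = 0 ∧ s2 (n + r) ≤ r ∧ r ≤ n) := by
    intro r
    rw [hS]
    exact P_iff n r
  have hne : S.Nonempty := by
    refine ⟨n, (hmem n).mpr ⟨by omega, ?_, le_rfl⟩⟩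
    have h1 : n + n = 2 * n := by ring
    rw [h1, s2_two_mul]
    exact s2_le_self n
  constructor
  · intro h
    refine ⟨(hmem s).mp (h ▸ Nat.sInf_mem hne), ?_⟩
    intro r hr hCr
    have : sInf S ≤ r := Nat.sInf_le ((hmem r).mpr hCr)
    omega
  · rintro ⟨hCs, hmin⟩
    have h1 : sInf S ≤ s := Nat.sInf_le ((hmem s).mpr hCs)
    rcases lt_or_eq_of_le h1 with h2 | h2
    · exact absurd ((hmem _).mp (Nat.sInf_mem hne)) (hmin _ h2)
    · exact h2

lemma U_iff_min (n s : ℕ) (hn : 0 < n) (hs : 0 < s) :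
    (((n + s) % 2 = 0 ∧ s2 (n + s) ≤ s ∧ s ≤ n) ∧
      ∀ r, r < s → ¬((n + r) % 2 = 0 ∧ s2 (n + r) ≤ r ∧ r ≤ n)) ↔
    (∃ v q, n + s = 2 ^ v * q ∧ q % 2 = 1 ∧ 1 ≤ v ∧
      (s2 (n + s) = s ∨ (s2 (n + s) < s ∧ s + 1 ≤ v + s2 (n + s)))) := by
  constructor
  · rintro ⟨⟨h1, h2, h3⟩, hmin⟩
    obtain ⟨v, q, hvq, hq⟩ := exists_two_factor (n + s) (by omega)
    have hkq : s2 (n + s) = s2 q := by rw [hvq, s2_pow_mul]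
    have hv : 1 ≤ v := by
      rcases Nat.eq_zero_or_pos v with rfl | h
      · simp at hvq
        omega
      · exact h
    refine ⟨v, q, hvq, hq, hv, ?_⟩
    rcases eq_or_lt_of_le h2 with heq | hlt
    · exact Or.inl heq
    · refine Or.inr ⟨hlt, ?_⟩
      by_contra hcon
      push_neg at hcon
      -- then r = s - 2 works, contradicting minimality
      have hk1 : 1 ≤ s2 (n + s) := s2_pos _ (by omega)
      have hs2 : 2 ≤ s := by omega
      apply hmin (s - 2) (by omega)
      have hL3 := L3 v q 1 hq le_rfl (by
        have := pow_le_mono (show 1 ≤ v by omega)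
        omega)
      have hrw : n + (s - 2) = 2 ^ v * q - 2 * 1 := by omega
      rw [hrw]
      simp only [Nat.sub_self, s2_zero] at hL3
      refine ⟨by omega, by omega, by omega⟩
  · rintro ⟨v, q, hvq, hq, hv, hdisj⟩
    have hkq : s2 (n + s) = s2 q := by rw [hvq, s2_pow_mul]
    obtain ⟨v', rfl⟩ : ∃ v', v = v' + 1 := ⟨v - 1, by omega⟩
    have hpow : (2:ℕ) ^ (v' + 1) * q = 2 * (2 ^ v' * q) := by rw [pow_succ]; ring
    have heven : (n + s) % 2 = 0 := by omega
    have hk1 : 1 ≤ s2 q := s2_pos _ (by omega)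
    have hkle : s2 (n + s) ≤ s := by rcases hdisj with h | h <;> omega
    have hsn : s ≤ n := by
      have f2 : 2 ^ s2 q ≤ q + 1 := pow_s2_le q
      obtain ⟨k', hk'⟩ : ∃ k', s2 q = k' + 1 := ⟨s2 q - 1, by omega⟩
      rw [hk'] at f2
      have hpk : (2:ℕ) ^ (k' + 1) = 2 ^ k' * 2 := pow_succ 2 k'
      have hqk : 2 ^ k' ≤ q := by
        have : 1 ≤ (2:ℕ) ^ k' := Nat.one_le_two_pow
        omega
      have f5 : (2:ℕ) ^ s ≤ 2 ^ (v' + 1 + k') := pow_le_mono (by omega)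
      have f6 : (2:ℕ) ^ (v' + 1 + k') = 2 ^ (v' + 1) * 2 ^ k' := pow_add 2 _ _
      have f7 : 2 ^ (v' + 1) * 2 ^ k' ≤ 2 ^ (v' + 1) * q :=
        Nat.mul_le_mul_left _ hqk
      obtain ⟨s', rfl⟩ : ∃ s', s = s' + 1 := ⟨s - 1, by omega⟩
      have f9 : (2:ℕ) ^ (s' + 1) = 2 ^ s' * 2 := pow_succ 2 s'
      have f10 : s' < 2 ^ s' := Nat.lt_two_pow_self
      omega
    refine ⟨⟨heven, hkle, hsn⟩, ?_⟩
    rintro r hr ⟨g1, g2, g3⟩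
    obtain ⟨j, hj, hj1⟩ : ∃ j, s = r + 2 * j ∧ 1 ≤ j := ⟨(s - r) / 2, by omega, by omega⟩
    have hrw : n + r = 2 ^ (v' + 1) * q - 2 * j := by omega
    rw [hrw] at g2
    have hpm : s2 (2 ^ (v' + 1) * q) = s2 q := s2_pow_mul _ _
    rw [hvq] at hdisj
    rcases hdisj with hcase | hcase
    · -- s2 (n+s) = s
      have f1 := s2_le_sub (2 ^ (v' + 1) * q) (2 * j) (by omega)
      have f2 : s2 (2 * j) = s2 j := s2_two_mul j
      have f3 : s2 j ≤ j := s2_le_self j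
      omega
    · -- s2 (n+s) < s and v + k ≥ s + 1
      rcases (by omega : 2 * j ≤ 2 ^ (v' + 1) ∨ 2 ^ (v' + 1) < 2 * j) with hsmall | hbig
      · have hL3 := L3 (v' + 1) q j hq hj1 hsmall
        have f3 : s2 (j - 1) ≤ j - 1 := s2_le_self (j - 1)
        omega
      · have f1 := s2_le_sub (2 ^ (v' + 1) * q) (2 * j) (by omega)
        have f2 : s2 (2 * j) = s2 j := s2_two_mul j
        have f3 : s2 j ≤ j := s2_le_self j
        have f4 : v' < 2 ^ v' := Nat.lt_two_pow_self
        have f5 : (2:ℕ) ^ (v' + 1) = 2 ^ v' * 2 := pow_succ 2 v'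
        omega

lemma U_iff_good (s : ℕ) (hs : 0 < s) (m : ℕ) (hm : 0 < m) :
    (∃ v q, m = 2 ^ v * q ∧ q % 2 = 1 ∧ 1 ≤ v ∧
      (s2 m = s ∨ (s2 m < s ∧ s + 1 ≤ v + s2 m))) ↔
    ∃! d : Fin s → ℕ, GoodT s d m := by
  constructor
  · rintro ⟨v, q, hvq, hq, hv, hdisj⟩
    have hkq : s2 m = s2 q := by rw [hvq, s2_pow_mul]
    obtain ⟨d, hd⟩ := Good_exists q hq v s hv (by rw [← hkq]; exact hdisj)
    rw [← hvq] at hd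
    exact ⟨d, hd, fun d' hd' => Good_unique s d' d m hd' hd⟩
  · rintro ⟨d, hd, -⟩
    obtain ⟨s', rfl⟩ : ∃ s', s = s' + 1 := ⟨s - 1, by omega⟩
    exact Good_to_U s' d m hd


/-- `μ(n) = s` iff there exists exactly one `s`-tuple `(d_1, …, d_s)` with
`d_1 > d_2 > … > d_{s-1} ≥ d_s > 0` and `n = 2^{d_1} + … + 2^{d_s} - s`. -/
theorem stmt0 (n s : ℕ) (hn : 0 < n) (hs : 0 < s) :
    muNat n = s ↔
      ∃! d : Fin s → ℕ,
        (∀ i j : Fin s, i < j → (j : ℕ) + 1 < s → d j < d i) ∧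
        (∀ i j : Fin s, i < j → d j ≤ d i) ∧
        (∀ i, 0 < d i) ∧
        n + s = ∑ i, 2 ^ d i := by
  rw [mu_eq n s hn, U_iff_min n s hn hs, U_iff_good s hs (n + s) (by omega)]
  exact Iff.rfl
end

section
/- Let n be a positive integer and set s = μ(n). Then n − s is a nonnegative even integer, and if n > s then μ((n − s)/2) ≤ s. -/
lemma muNat_le_list (m : ℕ) (l : List ℕ) (hl : ∀ x ∈ l, 0 < x)
    (hm : m = (l.map (fun x => 2 ^ x - 1)).sum) : muNat m ≤ l.length := by
  apply Nat.sInf_le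
  refine ⟨fun i => l.get i, fun i => hl _ (l.get_mem i), ?_⟩
  rw [hm, ← List.ofFn_getElem_eq_map, Fin.sum_ofFn]
  rfl

lemma filter_sum_aux (L : List ℕ) :
    ((L.filter (fun x => 1 < x)).map ((fun x => 2 ^ x - 1) ∘ fun x => x - 1)).sum
      = (L.map (fun x => 2 ^ (x - 1) - 1)).sum := by
  induction L with
  | nil => simp
  | cons a t ih =>
    by_cases ha : 1 < a
    · simp [List.filter_cons, ha, ih, Function.comp]
    · have ha1 : 2 ^ (a - 1) - 1 = 0 := by interval_cases a <;> simp
      simp [List.filter_cons, ha, ih, ha1]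

/-- For a positive integer `n` with `s = μ(n)`, the number `n - s` is a nonnegative even
integer, and if `n > s` then `μ((n - s)/2) ≤ s`. -/
theorem stmt1 (n : ℕ) (hn : 0 < n) :
    muNat n ≤ n ∧ Even (n - muNat n) ∧
      (muNat n < n → muNat ((n - muNat n) / 2) ≤ muNat n) := by
  have hnS : n ∈ {r : ℕ | ∃ d : Fin r → ℕ, (∀ i, 0 < d i) ∧ n = ∑ i, (2 ^ d i - 1)} :=
    ⟨fun _ => 1, fun _ => one_pos, by simp⟩
  have hle : muNat n ≤ n := Nat.sInf_le hnS
  obtain ⟨d, hd, hsum⟩ :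
      muNat n ∈ {r : ℕ | ∃ d : Fin r → ℕ, (∀ i, 0 < d i) ∧ n = ∑ i, (2 ^ d i - 1)} :=
    Nat.sInf_mem ⟨n, hnS⟩
  set m := ∑ i : Fin (muNat n), (2 ^ (d i - 1) - 1) with hm
  have key : n = 2 * m + muNat n := by
    have h1 : ∀ i : Fin (muNat n), 2 ^ d i - 1 = 2 * (2 ^ (d i - 1) - 1) + 1 := by
      intro i
      have hdi := hd i
      have hpow : 2 ^ d i = 2 * 2 ^ (d i - 1) := by
        rw [← pow_succ']
        congr 1
        omega
      have h2 : 1 ≤ 2 ^ (d i - 1) := Nat.one_le_two_pow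
      omega
    calc n = ∑ i : Fin (muNat n), (2 ^ d i - 1) := hsum
      _ = ∑ i : Fin (muNat n), (2 * (2 ^ (d i - 1) - 1) + 1) :=
          Finset.sum_congr rfl fun i _ => h1 i
      _ = 2 * m + muNat n := by
          rw [Finset.sum_add_distrib, ← Finset.mul_sum]
          simp [hm]
  have hsub : n - muNat n = 2 * m := by omega
  refine ⟨hle, by rw [hsub]; exact even_two_mul m, ?_⟩
  intro hlt
  have hdiv : (n - muNat n) / 2 = m := by omega
  rw [hdiv]
  have hlist : m = ((((List.ofFn d).filter (fun x => 1 < x)).map (fun x => x - 1)).map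
      (fun x => 2 ^ x - 1)).sum := by
    rw [List.map_map, filter_sum_aux, List.map_ofFn, Fin.sum_ofFn, hm]
    rfl
  calc muNat m ≤ _ := muNat_le_list m _ (by
        intro x hx
        simp only [List.mem_map, List.mem_filter] at hx
        obtain ⟨y, ⟨_, hy⟩, rfl⟩ := hx
        simp only [decide_eq_true_eq] at hy
        omega) hlist
    _ ≤ muNat n := by
        rw [List.length_map]
        calc ((List.ofFn d).filter _).length ≤ (List.ofFn d).length :=
              List.length_filter_le _ _
          _ = muNat n := List.length_ofFn (f := d)
end

section
/- For every nonnegative integer t and every polynomial f in P_k one has Sq̃(Sq^{2t}(f)) = Sq^t(Sq̃(f)) and Sq̃(Sq^{2t+1}(f)) = 0. Consequently Sq̃ carries hit polynomials to hit polynomials and maps (P_k)_{2m+k} into (P_k)_m for every m ≥ 0, and hence induces an F_2-linear map Sq̃^0_* : (QP_k)_{2m+k} → (QP_k)_m (Kameko's homomorphism). -/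
open MvPolynomial

/-- The total Steenrod square on `P_k = F_2[x_1,…,x_k]`, the algebra map with
`Sq(x_j) = x_j + x_j^2`. -/
noncomputable def SqTotal (k : ℕ) :
    MvPolynomial (Fin k) (ZMod 2) →ₐ[ZMod 2] MvPolynomial (Fin k) (ZMod 2) :=
  aeval fun j => X j + X j ^ 2

/-- The Steenrod square `Sq^i : P_k → P_k`, sending a homogeneous polynomial `f` of
degree `d` to the degree-`d + i` homogeneous component of `Sq(f)`, extended additively. -/
noncomputable def SqOp (k i : ℕ) (f : MvPolynomial (Fin k) (ZMod 2)) :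
    MvPolynomial (Fin k) (ZMod 2) :=
  ∑ d ∈ Finset.range (f.totalDegree + 1),
    homogeneousComponent (d + i) (SqTotal k (homogeneousComponent d f))

/-- The space of hit polynomials: finite sums of `Sq^i (f_i)` with `i > 0`. -/
noncomputable def hitSubmodule (k : ℕ) :
    Submodule (ZMod 2) (MvPolynomial (Fin k) (ZMod 2)) :=
  Submodule.span (ZMod 2) {g | ∃ i f, 0 < i ∧ g = SqOp k i f}

/-- A polynomial is hit if it is a finite sum of `Sq^i (f_i)` with `i > 0`. -/
def IsHit (k : ℕ) (f : MvPolynomial (Fin k) (ZMod 2)) : Prop := f ∈ hitSubmodule k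

/-- `(QP_k)_n`: the space of homogeneous polynomials of degree `n` modulo hit polynomials. -/
abbrev QP (k n : ℕ) :=
  ↥(homogeneousSubmodule (Fin k) (ZMod 2) n) ⧸
    ((hitSubmodule k).comap (homogeneousSubmodule (Fin k) (ZMod 2) n).subtype)

/-- Kameko's map `Sq̃ : P_k → P_k`, defined on monomials by `Sq̃(x) = y` if
`x = x_1 x_2 ⋯ x_k · y^2` for a monomial `y`, and `Sq̃(x) = 0` otherwise,
extended linearly. -/
noncomputable def kamekoFun (k : ℕ) (f : MvPolynomial (Fin k) (ZMod 2)) :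
    MvPolynomial (Fin k) (ZMod 2) :=
  ∑ a ∈ f.support,
    if ∀ j, Odd (a j) then
      monomial (Finsupp.mapRange (fun t => (t - 1) / 2) (by norm_num) a) (f.coeff a)
    else 0

namespace KamAux

variable {k : ℕ}

lemma zmod2 (r : ZMod 2) : r = 0 ∨ r = 1 := by revert r; decide

noncomputable def halfm (a : Fin k →₀ ℕ) : Fin k →₀ ℕ :=
  Finsupp.mapRange (fun t => (t - 1) / 2) (by norm_num) a

lemma kamekoFun_eq_sum (f : MvPolynomial (Fin k) (ZMod 2)) :
    kamekoFun k f = (AddMonoidAlgebra.coeff f).sum (fun a c =>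
      if ∀ j, Odd (a j) then monomial (halfm a) c else 0) := by
  rw [MvPolynomial.sum_def]
  apply Finset.sum_congr rfl
  intro a _
  split <;> rfl

lemma kamekoFun_monomial (a : Fin k →₀ ℕ) (c : ZMod 2) :
    kamekoFun k (monomial a c) =
      if ∀ j, Odd (a j) then monomial (halfm a) c else 0 := by
  rw [kamekoFun_eq_sum, MvPolynomial.sum_monomial_eq]
  split <;> simp

noncomputable def kamL (k : ℕ) :
    MvPolynomial (Fin k) (ZMod 2) →ₗ[ZMod 2] MvPolynomial (Fin k) (ZMod 2) where
  toFun := kamekoFun k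
  map_add' f g := by
    rw [kamekoFun_eq_sum, kamekoFun_eq_sum, kamekoFun_eq_sum]
    exact Finsupp.sum_add_index' (fun a => by split <;> simp)
      (fun a c d => by split <;> simp)
  map_smul' r f := by
    rcases zmod2 r with rfl | rfl
    · simp [kamekoFun_eq_sum]
    · simp

@[simp] lemma kamL_apply (f : MvPolynomial (Fin k) (ZMod 2)) :
    kamL k f = kamekoFun k f := rfl

end KamAux

namespace KamAux2
variable {k : ℕ}

/-- even-at-j submonoid -/
noncomputable def evenAt (j : Fin k) : AddSubmonoid (Fin k →₀ ℕ) where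
  carrier := {d | d j % 2 = 0}
  zero_mem' := by simp
  add_mem' := by intro a b ha hb; simp only [Set.mem_setOf_eq, Finsupp.add_apply] at *; omega

lemma supp_mul {W V U : Set (Fin k →₀ ℕ)} (h : ∀ x ∈ W, ∀ y ∈ V, x + y ∈ U)
    {p q : MvPolynomial (Fin k) (ZMod 2)}
    (hp : ∀ d ∈ p.support, d ∈ W) (hq : ∀ d ∈ q.support, d ∈ V) :
    ∀ d ∈ (p * q).support, d ∈ U := by
  intro d hd
  have := MvPolynomial.support_mul p q hd
  rw [Finset.mem_add] at this
  obtain ⟨x, hx, y, hy, rfl⟩ := this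
  exact h x (hp x hx) y (hq y hy)

lemma supp_prod (W : AddSubmonoid (Fin k →₀ ℕ)) {ι : Type*} (s : Finset ι)
    (f : ι → MvPolynomial (Fin k) (ZMod 2))
    (h : ∀ i ∈ s, ∀ d ∈ (f i).support, (d : Fin k →₀ ℕ) ∈ W) :
    ∀ d ∈ (∏ i ∈ s, f i).support, d ∈ W := by
  classical
  induction s using Finset.induction with
  | empty =>
      intro d hd
      rw [Finset.prod_empty] at hd
      have : d ∈ ((1 : MvPolynomial (Fin k) (ZMod 2))).support := hd
      rw [show (1 : MvPolynomial (Fin k) (ZMod 2)) = monomial 0 1 by simp,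
        support_monomial, if_neg one_ne_zero] at this
      simp only [Finset.mem_singleton] at this
      subst this; exact W.zero_mem
  | insert _ _ hni ih =>
      rename_i i s'
      intro d hd
      rw [Finset.prod_insert hni] at hd
      exact supp_mul (W := W) (V := W) (fun x hx y hy => W.add_mem hx hy)
        (h i (Finset.mem_insert_self i s'))
        (ih (fun i' hi' => h i' (Finset.mem_insert_of_mem hi'))) d hd

lemma supp_pow (W : AddSubmonoid (Fin k →₀ ℕ)) {p : MvPolynomial (Fin k) (ZMod 2)}
    (hp : ∀ d ∈ p.support, d ∈ W) (n : ℕ) : ∀ d ∈ (p ^ n).support, d ∈ W := by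
  have : p ^ n = ∏ _i ∈ Finset.range n, p := by simp
  rw [this]
  exact supp_prod W _ _ (fun i _ => hp)

lemma sq_eq (p : MvPolynomial (Fin k) (ZMod 2)) :
    p ^ 2 = ∑ a ∈ p.support, monomial (a + a) (coeff a p) := by
  conv_lhs => rw [p.as_sum]
  rw [sum_pow_char]
  apply Finset.sum_congr rfl
  intro a _
  rw [monomial_pow]
  congr 1
  · rw [two_smul]
  · have : ∀ r : ZMod 2, r ^ 2 = r := by decide
    rw [this]

lemma supp_sq {p : MvPolynomial (Fin k) (ZMod 2)} :
    ∀ d ∈ (p ^ 2).support, ∀ j, d j % 2 = 0 := by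
  intro d hd j
  rw [sq_eq] at hd
  have := MvPolynomial.support_sum hd
  rw [Finset.mem_biUnion] at this
  obtain ⟨a, _, hda⟩ := this
  have := support_monomial_subset hda
  simp only [Finset.mem_singleton] at this
  subst this
  simp only [Finsupp.add_apply]
  omega

end KamAux2

namespace KamAux3
variable {k : ℕ}

lemma supp_hc (n : ℕ) (p : MvPolynomial (Fin k) (ZMod 2)) :
    (homogeneousComponent n p).support ⊆ p.support := by
  intro d hd
  rw [mem_support_iff] at hd ⊢
  rw [coeff_homogeneousComponent] at hd
  intro h
  rw [h] at hd
  simp at hd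

lemma hc_of_homog {p : MvPolynomial (Fin k) (ZMod 2)} {n : ℕ} (hp : p.IsHomogeneous n)
    (m : ℕ) : homogeneousComponent m p = if m = n then p else 0 :=
  homogeneousComponent_of_mem ((mem_homogeneousSubmodule _ _).mpr hp)

lemma hc_sq (p : MvPolynomial (Fin k) (ZMod 2)) (e : ℕ) :
    homogeneousComponent e (p ^ 2) =
      if h : 2 ∣ e then (homogeneousComponent (e / 2) p) ^ 2 else 0 := by
  have hps : p ^ 2 = ∑ i ∈ Finset.range (p.totalDegree + 1),
      (homogeneousComponent i p) ^ 2 := by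
    conv_lhs => rw [← sum_homogeneousComponent p]
    exact sum_pow_char _ _ _
  rw [hps, map_sum]
  have hterm : ∀ i, homogeneousComponent e ((homogeneousComponent i p) ^ 2)
      = if e = 2 * i then (homogeneousComponent i p) ^ 2 else 0 := by
    intro i
    have h1 : (homogeneousComponent i p).IsHomogeneous i :=
      homogeneousComponent_isHomogeneous i p
    have h2 := h1.pow 2
    rw [hc_of_homog h2 e]
    congr 1
    simp [mul_comm]
  simp_rw [hterm]
  split
  · rename_i h
    obtain ⟨m, rfl⟩ := h
    rw [Nat.mul_div_cancel_left m (by norm_num)]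
    by_cases hm : m ∈ Finset.range (p.totalDegree + 1)
    · rw [Finset.sum_eq_single_of_mem m hm]
      · rw [if_pos rfl]
      · intro i _ hne
        rw [if_neg]; omega
    · rw [Finset.sum_eq_zero, homogeneousComponent_eq_zero]
      · simp
      · simp only [Finset.mem_range, not_lt] at hm; omega
      · intro i hi
        rw [if_neg]
        intro hmi
        have : i = m := by omega
        subst this; exact hm hi
  · rename_i h
    apply Finset.sum_eq_zero
    intro i hi
    rw [if_neg]
    intro hmi
    exact h ⟨i, hmi⟩

end KamAux3

namespace KamAux4
open KamAux KamAux2 KamAux3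
variable {k : ℕ}

lemma hc_mul {q : MvPolynomial (Fin k) (ZMod 2)} {n : ℕ} (hq : q.IsHomogeneous n)
    (p : MvPolynomial (Fin k) (ZMod 2)) (m : ℕ) :
    homogeneousComponent (n + m) (q * p) = q * homogeneousComponent m p := by
  have hps : q * p = ∑ i ∈ Finset.range (p.totalDegree + 1),
      q * homogeneousComponent i p := by
    conv_lhs => rw [← sum_homogeneousComponent p]
    exact Finset.mul_sum _ _ _
  rw [hps, map_sum]
  have hterm : ∀ i, homogeneousComponent (n + m) (q * homogeneousComponent i p)
      = if m = i then q * homogeneousComponent i p else 0 := by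
    intro i
    have h2 := hq.mul (homogeneousComponent_isHomogeneous i p)
    rw [homogeneousComponent_of_mem ((mem_homogeneousSubmodule _ _).mpr h2)]
    congr 1
    simp only [eq_iff_iff]
    omega
  simp_rw [hterm]
  by_cases hm : m ∈ Finset.range (p.totalDegree + 1)
  · rw [Finset.sum_eq_single_of_mem m hm]
    · rw [if_pos rfl]
    · intro i _ hne
      rw [if_neg (Ne.symm hne)]
  · rw [Finset.sum_eq_zero, homogeneousComponent_eq_zero]
    · simp
    · simp only [Finset.mem_range, not_lt] at hm; omega
    · intro i hi
      rw [if_neg]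
      intro hmi
      subst hmi; exact hm hi

lemma SqOp_zero (i : ℕ) : SqOp k i 0 = 0 := by
  unfold SqOp
  simp

lemma SqOp_homog {f : MvPolynomial (Fin k) (ZMod 2)} {n : ℕ} (hf : f.IsHomogeneous n)
    (i : ℕ) : SqOp k i f = homogeneousComponent (n + i) (SqTotal k f) := by
  by_cases hf0 : f = 0
  · subst hf0; rw [SqOp_zero]; simp
  · have hdeg : f.totalDegree = n := hf.totalDegree hf0
    unfold SqOp
    rw [hdeg]
    rw [Finset.sum_eq_single_of_mem n (Finset.self_mem_range_succ n)]
    · rw [hc_of_homog hf, if_pos rfl]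
    · intro i' _ hne
      rw [hc_of_homog hf, if_neg hne]
      simp

lemma SqOp_eq_of_le {f : MvPolynomial (Fin k) (ZMod 2)} {N : ℕ} (h : f.totalDegree ≤ N)
    (i : ℕ) : SqOp k i f = ∑ d ∈ Finset.range (N + 1),
      homogeneousComponent (d + i) (SqTotal k (homogeneousComponent d f)) := by
  unfold SqOp
  apply Finset.sum_subset
  · intro d hd
    simp only [Finset.mem_range] at *
    omega
  · intro d _ hd
    simp only [Finset.mem_range, not_lt] at hd
    have h0 : homogeneousComponent d f = 0 := homogeneousComponent_eq_zero d f (by omega)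
    rw [h0]
    simp

noncomputable def SqOpL (k i : ℕ) :
    MvPolynomial (Fin k) (ZMod 2) →ₗ[ZMod 2] MvPolynomial (Fin k) (ZMod 2) where
  toFun := SqOp k i
  map_add' f g := by
    set N := max (f + g).totalDegree (max f.totalDegree g.totalDegree) with hN
    rw [SqOp_eq_of_le (le_trans (le_max_left _ _) (le_refl N)) i,
      SqOp_eq_of_le (le_trans (le_max_left _ _) (le_max_right _ _)) i,
      SqOp_eq_of_le (le_trans (le_max_right _ _) (le_max_right _ _)) i,
      ← Finset.sum_add_distrib]
    apply Finset.sum_congr rfl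
    intro d _
    rw [map_add, map_add, map_add]
  map_smul' r f := by
    rcases zmod2 r with rfl | rfl
    · simp [SqOp_zero]
    · simp

@[simp] lemma SqOpL_apply (i : ℕ) (f : MvPolynomial (Fin k) (ZMod 2)) :
    SqOpL k i f = SqOp k i f := rfl

end KamAux4

namespace KamCore
open KamAux KamAux2 KamAux3 KamAux4
variable {k : ℕ}

noncomputable def oneF (k : ℕ) : Fin k →₀ ℕ := Finsupp.equivFunOnFinite.symm fun _ => 1

@[simp] lemma oneF_apply (j : Fin k) : oneF k j = 1 := by
  simp [oneF]

lemma degree_univ (a : Fin k →₀ ℕ) : a.degree = ∑ j, a j := by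
  unfold Finsupp.degree
  exact Finset.sum_subset (Finset.subset_univ _)
    (fun j _ hj => Finsupp.notMem_support_iff.1 hj)

lemma degree_oneF : (oneF k).degree = k := by
  rw [degree_univ]
  simp

lemma monomial_oneF :
    (monomial (oneF k) 1 : MvPolynomial (Fin k) (ZMod 2)) = ∏ j, X j := by
  rw [monomial_eq, C_1, one_mul, Finsupp.prod_fintype _ _ (fun j => pow_zero _)]
  simp

lemma kameko_eq_zero_of {p : MvPolynomial (Fin k) (ZMod 2)}
    (h : ∀ d ∈ p.support, ∃ j, d j % 2 = 0) : kamekoFun k p = 0 := by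
  unfold kamekoFun
  apply Finset.sum_eq_zero
  intro a ha
  obtain ⟨j, hj⟩ := h a ha
  rw [if_neg]
  intro hodd
  have := hodd j
  rw [Nat.odd_iff] at this
  omega

lemma kameko_ck_sq (p : MvPolynomial (Fin k) (ZMod 2)) :
    kamekoFun k (monomial (oneF k) 1 * p ^ 2) = p := by
  rw [sq_eq p, Finset.mul_sum]
  rw [show kamekoFun k = ⇑(kamL k) from rfl, map_sum]
  conv_rhs => rw [p.as_sum]
  apply Finset.sum_congr rfl
  intro a _
  have hexp : halfm (oneF k + (a + a)) = a := by
    ext j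
    simp only [halfm, Finsupp.mapRange_apply, Finsupp.add_apply, oneF_apply]
    omega
  rw [kamL_apply, monomial_mul, one_mul, kamekoFun_monomial, if_pos, hexp]
  intro j
  simp only [Finsupp.add_apply, oneF_apply, Nat.odd_iff]
  omega

lemma SqTotal_monomial (a : Fin k →₀ ℕ) :
    SqTotal k (monomial a (1 : ZMod 2)) = ∏ j, (X j + X j ^ 2) ^ a j := by
  rw [SqTotal, aeval_monomial, map_one, one_mul,
    Finsupp.prod_fintype _ _ (fun j => pow_zero _)]

lemma caseB {a : Fin k →₀ ℕ} {j0 : Fin k} (hj0 : a j0 % 2 = 0) (i : ℕ) :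
    kamekoFun k (SqOp k i (monomial a (1 : ZMod 2))) = 0 := by
  have hhom : (monomial a (1:ZMod 2)).IsHomogeneous a.degree :=
    isHomogeneous_monomial _ rfl
  rw [SqOp_homog hhom i]
  apply kameko_eq_zero_of
  intro d hd
  refine ⟨j0, ?_⟩
  have hd' := supp_hc _ _ hd
  rw [SqTotal_monomial] at hd'
  refine supp_prod (evenAt j0) Finset.univ _ ?_ d hd'
  intro j _
  by_cases hj : j = j0
  · subst hj
    have h2 : (X j + X j ^ 2 : MvPolynomial (Fin k) (ZMod 2)) ^ a j
        = ((X j + X j ^ 2) ^ (a j / 2)) ^ 2 := by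
      rw [← pow_mul]
      congr 1
      omega
    rw [h2]
    intro d hd
    exact supp_sq d hd j
  · apply supp_pow (evenAt j0)
    intro d hd
    have hsub := MvPolynomial.support_add hd
    rw [support_X, support_X_pow, Finset.mem_union] at hsub
    simp only [Finset.mem_singleton] at hsub
    have hz : d j0 = 0 := by
      rcases hsub with rfl | rfl <;> simp [Finsupp.single_apply, hj]
    show d j0 % 2 = 0
    omega

noncomputable def errP (k : ℕ) : MvPolynomial (Fin k) (ZMod 2) :=
  ∑ t ∈ (Finset.univ : Finset (Finset (Fin k))).erase Finset.univ,
    (∏ j ∈ t, X j) * ∏ j ∈ tᶜ, X j ^ 2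

lemma prod_sq_split :
    (∏ j : Fin k, ((X j : MvPolynomial (Fin k) (ZMod 2)) + X j ^ 2))
      = monomial (oneF k) 1 + errP k := by
  rw [Fintype.prod_add]
  rw [← Finset.add_sum_erase _ _ (Finset.mem_univ (Finset.univ : Finset (Fin k)))]
  congr 1
  rw [monomial_oneF, Finset.compl_univ, Finset.prod_empty, mul_one]

lemma errP_supp : ∀ d ∈ (errP k).support, ∃ j, d j % 2 = 0 := by
  intro d hd
  have hb := MvPolynomial.support_sum hd
  rw [Finset.mem_biUnion] at hb
  obtain ⟨t, ht, hdt⟩ := hb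
  have htu : t ≠ Finset.univ := (Finset.mem_erase.mp ht).1
  obtain ⟨j0, hj0⟩ : ∃ j0, j0 ∉ t := by
    by_contra hcon
    push_neg at hcon
    exact htu (Finset.eq_univ_iff_forall.mpr hcon)
  refine ⟨j0, ?_⟩
  have : d ∈ (evenAt j0 : AddSubmonoid (Fin k →₀ ℕ)) := by
    refine supp_mul (W := (evenAt j0 : Set (Fin k →₀ ℕ)))
      (V := (evenAt j0 : Set (Fin k →₀ ℕ))) (U := (evenAt j0 : Set (Fin k →₀ ℕ)))
      (fun x hx y hy => (evenAt j0).add_mem hx hy) ?_ ?_ d hdt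
    · refine supp_prod (evenAt j0) t _ ?_
      intro j hj d hd
      rw [support_X, Finset.mem_singleton] at hd
      subst hd
      have : j ≠ j0 := fun h => hj0 (h ▸ hj)
      show Finsupp.single j 1 j0 % 2 = 0
      simp [Finsupp.single_apply, this]
    · refine supp_prod (evenAt j0) tᶜ _ ?_
      intro j _ d hd
      rw [support_X_pow, Finset.mem_singleton] at hd
      subst hd
      show Finsupp.single j 2 j0 % 2 = 0
      rcases eq_or_ne j j0 with rfl | hne
      · simp [Finsupp.single_apply]
      · simp [Finsupp.single_apply, hne]
  exact this

lemma caseA {a : Fin k →₀ ℕ} (hodd : ∀ j, Odd (a j)) (i : ℕ) :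
    ∃ e : MvPolynomial (Fin k) (ZMod 2),
      (∀ d ∈ e.support, ∃ j, d j % 2 = 0) ∧
      SqOp k i (monomial a (1 : ZMod 2)) = monomial (oneF k) 1 *
        homogeneousComponent (2 * (halfm a).degree + i)
          ((SqTotal k (monomial (halfm a) 1)) ^ 2) + e := by
  set α := halfm a with hα
  have haeq : ∀ j, a j = 1 + (α j + α j) := by
    intro j
    have hj := hodd j
    rw [Nat.odd_iff] at hj
    simp only [hα, halfm, Finsupp.mapRange_apply]
    omega
  have hmono : monomial a (1:ZMod 2) = monomial (oneF k) 1 * (monomial α 1) ^ 2 := by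
    have hexp2 : a = oneF k + 2 • α := by
      ext j
      simp only [Finsupp.add_apply, oneF_apply, Finsupp.smul_apply, smul_eq_mul]
      rw [haeq j]
      ring
    rw [monomial_pow, monomial_mul, ← hexp2]
    norm_num
  have hdeg : a.degree = k + 2 * α.degree := by
    rw [degree_univ, degree_univ]
    calc ∑ j, a j = ∑ j : Fin k, (1 + (α j + α j)) :=
          Finset.sum_congr rfl (fun j _ => haeq j)
      _ = k + 2 * ∑ j, α j := by
          rw [Finset.sum_add_distrib, Finset.sum_add_distrib]
          simp [Finset.card_univ, two_mul]
  have hSq : SqTotal k (monomial a (1:ZMod 2)) =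
      (monomial (oneF k) 1 + errP k) * (SqTotal k (monomial α 1)) ^ 2 := by
    rw [hmono, map_mul, map_pow]
    congr 1
    rw [← prod_sq_split, monomial_oneF, map_prod]
    apply Finset.prod_congr rfl
    intro j _
    simp [SqTotal]
  refine ⟨homogeneousComponent (a.degree + i)
      (errP k * (SqTotal k (monomial α 1)) ^ 2), ?_, ?_⟩
  · intro d hd
    have hd' := supp_hc _ _ hd
    refine supp_mul (W := {d : Fin k →₀ ℕ | ∃ j, d j % 2 = 0})
      (V := {d : Fin k →₀ ℕ | ∀ j, d j % 2 = 0})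
      (U := {d : Fin k →₀ ℕ | ∃ j, d j % 2 = 0}) ?_ errP_supp ?_ d hd'
    · rintro x ⟨j, hj⟩ y hy
      refine ⟨j, ?_⟩
      have := hy j
      simp only [Finsupp.add_apply]
      omega
    · intro d hd j
      exact supp_sq d hd j
  · rw [SqOp_homog (isHomogeneous_monomial _ rfl) i, hSq, add_mul, map_add]
    congr 1
    have hk : (monomial (oneF k) (1:ZMod 2)).IsHomogeneous k :=
      isHomogeneous_monomial _ degree_oneF
    have hmul := hc_mul hk ((SqTotal k (monomial α 1)) ^ 2) (2 * α.degree + i)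
    have hidx : a.degree + i = k + (2 * α.degree + i) := by omega
    rw [hidx]
    exact hmul

end KamCore


namespace KamFinal
open KamAux KamAux2 KamAux3 KamAux4 KamCore
variable {k : ℕ}

lemma kameko_zero : kamekoFun k 0 = 0 := (kamL k).map_zero

lemma kameko_add (f g : MvPolynomial (Fin k) (ZMod 2)) :
    kamekoFun k (f + g) = kamekoFun k f + kamekoFun k g := (kamL k).map_add f g

lemma kameko_sum {ι : Type*} (s : Finset ι) (g : ι → MvPolynomial (Fin k) (ZMod 2)) :
    kamekoFun k (∑ i ∈ s, g i) = ∑ i ∈ s, kamekoFun k (g i) := map_sum (kamL k) g s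

lemma SqOp_sum (i : ℕ) {ι : Type*} (s : Finset ι) (g : ι → MvPolynomial (Fin k) (ZMod 2)) :
    SqOp k i (∑ j ∈ s, g j) = ∑ j ∈ s, SqOp k i (g j) := map_sum (SqOpL k i) g s

lemma mono_even (a : Fin k →₀ ℕ) (c : ZMod 2) (t : ℕ) :
    kamekoFun k (SqOp k (2 * t) (monomial a c))
      = SqOp k t (kamekoFun k (monomial a c)) := by
  rcases zmod2 c with rfl | rfl
  · rw [(monomial a).map_zero, SqOp_zero, kameko_zero, SqOp_zero]
  · by_cases hodd : ∀ j, Odd (a j)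
    · obtain ⟨e, he, heq⟩ := caseA hodd (2 * t)
      rw [heq, kameko_add, kameko_eq_zero_of he, add_zero]
      rw [show 2 * (halfm a).degree + 2 * t = 2 * ((halfm a).degree + t) from by ring]
      rw [hc_sq, dif_pos (dvd_mul_right 2 ((halfm a).degree + t))]
      rw [Nat.mul_div_cancel_left _ (by norm_num : 0 < 2)]
      rw [kameko_ck_sq]
      rw [kamekoFun_monomial, if_pos hodd]
      rw [SqOp_homog (isHomogeneous_monomial _ rfl) t]
    · obtain ⟨j0, hj0⟩ := not_forall.mp hodd
      have hj0' : a j0 % 2 = 0 := by rw [Nat.odd_iff] at hj0; omega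
      rw [caseB hj0' (2 * t), kamekoFun_monomial, if_neg hodd, SqOp_zero]

lemma mono_odd (a : Fin k →₀ ℕ) (c : ZMod 2) (t : ℕ) :
    kamekoFun k (SqOp k (2 * t + 1) (monomial a c)) = 0 := by
  rcases zmod2 c with rfl | rfl
  · rw [(monomial a).map_zero, SqOp_zero, kameko_zero]
  · by_cases hodd : ∀ j, Odd (a j)
    · obtain ⟨e, he, heq⟩ := caseA hodd (2 * t + 1)
      rw [heq, kameko_add, kameko_eq_zero_of he, add_zero]
      rw [show 2 * (halfm a).degree + (2 * t + 1)
          = 2 * ((halfm a).degree + t) + 1 from by ring]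
      rw [hc_sq, dif_neg (by omega), mul_zero, kameko_zero]
    · obtain ⟨j0, hj0⟩ := not_forall.mp hodd
      have hj0' : a j0 % 2 = 0 := by rw [Nat.odd_iff] at hj0; omega
      exact caseB hj0' _

lemma part1 (t : ℕ) (f : MvPolynomial (Fin k) (ZMod 2)) :
    kamekoFun k (SqOp k (2 * t) f) = SqOp k t (kamekoFun k f) := by
  conv_lhs => rw [f.as_sum]
  conv_rhs => rw [f.as_sum]
  rw [SqOp_sum, kameko_sum, kameko_sum, SqOp_sum]
  exact Finset.sum_congr rfl fun a _ => mono_even a _ t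

lemma part2 (t : ℕ) (f : MvPolynomial (Fin k) (ZMod 2)) :
    kamekoFun k (SqOp k (2 * t + 1) f) = 0 := by
  conv_lhs => rw [f.as_sum]
  rw [SqOp_sum, kameko_sum]
  exact Finset.sum_eq_zero fun a _ => mono_odd a _ t

lemma part3 (f : MvPolynomial (Fin k) (ZMod 2)) (h : f ∈ hitSubmodule k) :
    kamekoFun k f ∈ hitSubmodule k := by
  induction h using Submodule.span_induction with
  | mem x hx =>
      obtain ⟨i, f0, hi, rfl⟩ := hx
      rcases Nat.even_or_odd i with he | ho
      · obtain ⟨t, rfl⟩ := he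
        rw [show t + t = 2 * t from by ring, part1]
        exact Submodule.subset_span ⟨t, kamekoFun k f0, by omega, rfl⟩
      · obtain ⟨t, rfl⟩ := ho
        rw [part2]
        exact Submodule.zero_mem _
  | zero => rw [kameko_zero]; exact Submodule.zero_mem _
  | add x y hx hy ihx ihy => rw [kameko_add]; exact add_mem ihx ihy
  | smul r x hx ih =>
      rcases zmod2 r with rfl | rfl
      · rw [zero_smul, kameko_zero]; exact Submodule.zero_mem _
      · rw [one_smul]; exact ih

lemma part4 (m : ℕ) (f : MvPolynomial (Fin k) (ZMod 2))
    (hf : f ∈ homogeneousSubmodule (Fin k) (ZMod 2) (2 * m + k)) :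
    kamekoFun k f ∈ homogeneousSubmodule (Fin k) (ZMod 2) m := by
  have hf' : f.IsHomogeneous (2 * m + k) := (mem_homogeneousSubmodule _ _).mp hf
  unfold kamekoFun
  apply Submodule.sum_mem
  intro a ha
  split
  · rename_i hodd
    rw [mem_homogeneousSubmodule]
    apply isHomogeneous_monomial
    have hw : (Finsupp.weight 1) a = 2 * m + k := hf' (mem_support_iff.mp ha)
    have hdeg : a.degree = 2 * m + k := by
      rw [Finsupp.degree_eq_weight_one]
      exact hw
    rw [degree_univ] at hdeg ⊢
    have hpt : ∀ j : Fin k, a j = 2 * ((a j - 1) / 2) + 1 := by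
      intro j
      have := hodd j
      rw [Nat.odd_iff] at this
      omega
    have h2 : ∑ j : Fin k, a j = 2 * (∑ j : Fin k, (a j - 1) / 2) + k := by
      calc ∑ j : Fin k, a j = ∑ j : Fin k, (2 * ((a j - 1) / 2) + 1) :=
            Finset.sum_congr rfl fun j _ => hpt j
        _ = 2 * (∑ j : Fin k, (a j - 1) / 2) + k := by
            rw [Finset.sum_add_distrib, ← Finset.mul_sum]
            simp [Finset.card_univ]
    simp only [Finsupp.mapRange_apply]
    omega
  · exact Submodule.zero_mem _

end KamFinal

namespace KamFinal

lemma part5 {k : ℕ} (m : ℕ) : ∃ L : QP k (2 * m + k) →ₗ[ZMod 2] QP k m,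
    ∀ (f : homogeneousSubmodule (Fin k) (ZMod 2) (2 * m + k))
      (g : homogeneousSubmodule (Fin k) (ZMod 2) m),
      (g : MvPolynomial (Fin k) (ZMod 2)) =
          kamekoFun k (f : MvPolynomial (Fin k) (ZMod 2)) →
      L (Submodule.Quotient.mk f) = Submodule.Quotient.mk g := by
  classical
  let φ0 : ↥(homogeneousSubmodule (Fin k) (ZMod 2) (2 * m + k)) →ₗ[ZMod 2]
      ↥(homogeneousSubmodule (Fin k) (ZMod 2) m) :=
    (KamAux.kamL k).restrict (p := homogeneousSubmodule (Fin k) (ZMod 2) (2 * m + k))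
      (q := homogeneousSubmodule (Fin k) (ZMod 2) m) (fun x hx => part4 m x hx)
  let φ : ↥(homogeneousSubmodule (Fin k) (ZMod 2) (2 * m + k)) →ₗ[ZMod 2] QP k m :=
    (Submodule.mkQ _) ∘ₗ φ0
  refine ⟨Submodule.liftQ _ φ ?_, ?_⟩
  · intro x hx
    rw [LinearMap.mem_ker]
    show Submodule.mkQ _ (φ0 x) = 0
    rw [Submodule.mkQ_apply, Submodule.Quotient.mk_eq_zero, Submodule.mem_comap]
    have hco : ((φ0 x : ↥(homogeneousSubmodule (Fin k) (ZMod 2) m)) :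
        MvPolynomial (Fin k) (ZMod 2)) = kamekoFun k (x : MvPolynomial (Fin k) (ZMod 2)) :=
      LinearMap.restrict_coe_apply _ _ _
    show ((φ0 x : ↥(homogeneousSubmodule (Fin k) (ZMod 2) m)) :
        MvPolynomial (Fin k) (ZMod 2)) ∈ hitSubmodule k
    rw [hco]
    exact part3 _ (Submodule.mem_comap.mp hx)
  · intro f g hg
    rw [Submodule.liftQ_apply]
    show Submodule.Quotient.mk (φ0 f) = Submodule.Quotient.mk g
    congr 1
    refine Subtype.ext ?_
    rw [hg]
    exact LinearMap.restrict_coe_apply _ _ _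

end KamFinal


/-- `Sq̃ ∘ Sq^{2t} = Sq^t ∘ Sq̃` and `Sq̃ ∘ Sq^{2t+1} = 0`; consequently `Sq̃` carries hit
polynomials to hit polynomials and maps `(P_k)_{2m+k}` into `(P_k)_m`, and hence induces
an `F_2`-linear map `Sq̃^0_* : (QP_k)_{2m+k} → (QP_k)_m` (Kameko's homomorphism). -/
theorem stmt3 (k : ℕ) :
    (∀ (t : ℕ) (f : MvPolynomial (Fin k) (ZMod 2)),
        kamekoFun k (SqOp k (2 * t) f) = SqOp k t (kamekoFun k f)) ∧
    (∀ (t : ℕ) (f : MvPolynomial (Fin k) (ZMod 2)),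
        kamekoFun k (SqOp k (2 * t + 1) f) = 0) ∧
    (∀ f, IsHit k f → IsHit k (kamekoFun k f)) ∧
    (∀ m : ℕ, ∀ f ∈ homogeneousSubmodule (Fin k) (ZMod 2) (2 * m + k),
        kamekoFun k f ∈ homogeneousSubmodule (Fin k) (ZMod 2) m) ∧
    (∀ m : ℕ, ∃ L : QP k (2 * m + k) →ₗ[ZMod 2] QP k m,
        ∀ (f : homogeneousSubmodule (Fin k) (ZMod 2) (2 * m + k))
          (g : homogeneousSubmodule (Fin k) (ZMod 2) m),
          (g : MvPolynomial (Fin k) (ZMod 2)) =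
              kamekoFun k (f : MvPolynomial (Fin k) (ZMod 2)) →
          L (Submodule.Quotient.mk f) = Submodule.Quotient.mk g) := by
  exact ⟨KamFinal.part1, KamFinal.part2, fun f h => KamFinal.part3 f h,
    fun m f hf => KamFinal.part4 m f hf, fun m => KamFinal.part5 m⟩
end

section
/- Let k ≥ 3, let d_1 > d_2 > … > d_{k−2} ≥ d_{k−1} > 0 be integers, and set n = Σ_{i=1}^{k−1}(2^{d_i} − 1). If x is a monomial of degree n in P_k that is not hit, then ω_i(x) = k − 1 for every i with 1 ≤ i ≤ d_{k−1}. -/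
open MvPolynomial

/-- `ω_{i+1}(x)` for the monomial with exponent vector `a`: the number of variables whose
exponent has `i`-th binary digit equal to `1`. -/
def wvec (k : ℕ) (a : Fin k →₀ ℕ) (i : ℕ) : ℕ :=
  (Finset.univ.filter fun j : Fin k => Nat.testBit (a j) i).card

/-- Left lexicographic strict order on weight vectors. -/
def wlt (u v : ℕ → ℕ) : Prop := ∃ i, (∀ j, j < i → u j = v j) ∧ u i < v i


/-! ### Binary digit count -/

def bitc (n : ℕ) : ℕ := (Nat.digits 2 n).sum

lemma bitc_zero : bitc 0 = 0 := by simp [bitc]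

lemma bitc_two_mul (n : ℕ) : bitc (2 * n) = bitc n := by
  rcases Nat.eq_zero_or_pos n with h | h
  · simp [h]
  · unfold bitc
    rw [Nat.digits_def' (by norm_num) (by omega)]
    simp [Nat.mul_div_cancel_left _ (by norm_num : 0 < 2), Nat.mul_mod_right]

lemma bitc_two_mul_add_one (n : ℕ) : bitc (2 * n + 1) = bitc n + 1 := by
  unfold bitc
  rw [Nat.digits_def' (by norm_num) (by omega)]
  have h1 : (2 * n + 1) % 2 = 1 := by omega
  have h2 : (2 * n + 1) / 2 = n := by omega
  rw [h1, h2]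
  simp [Nat.add_comm]

lemma bitc_pos {n : ℕ} (h : 0 < n) : 0 < bitc n := by
  induction n using Nat.strong_induction_on with
  | _ n ih =>
    rcases Nat.even_or_odd n with ⟨c, hc⟩ | ⟨c, hc⟩
    · subst hc
      rw [(by ring : c + c = 2 * c), bitc_two_mul]
      exact ih c (by omega) (by omega)
    · subst hc
      rw [bitc_two_mul_add_one]; omega

lemma bitc_two_pow_mul_add {e m b : ℕ} (hb : b < 2 ^ e) :
    bitc (2 ^ e * m + b) = bitc m + bitc b := by
  induction e generalizing b with
  | zero =>
    interval_cases b
    simp [bitc_zero]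
  | succ e ih =>
    have hb2 : b / 2 < 2 ^ e := by
      have := Nat.pow_succ 2 e
      omega
    have key : 2 ^ (e + 1) * m + b = 2 * (2 ^ e * m + b / 2) + b % 2 := by
      have h3 : 2 ^ (e + 1) * m = 2 * (2 ^ e * m) := by ring
      omega
    rw [key]
    rcases Nat.even_or_odd b with ⟨c, hc⟩ | ⟨c, hc⟩
    · have hb2' : b % 2 = 0 := by omega
      have hbd : b = 2 * (b / 2) := by omega
      rw [hb2', Nat.add_zero, bitc_two_mul, ih hb2]
      conv_rhs => rw [hbd, bitc_two_mul]
    · have hb2' : b % 2 = 1 := by omega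
      have hbd : b = 2 * (b / 2) + 1 := by omega
      rw [hb2', bitc_two_mul_add_one, ih hb2]
      conv_rhs => rw [hbd, bitc_two_mul_add_one]
      omega

lemma bitc_two_pow_mul (e m : ℕ) : bitc (2 ^ e * m) = bitc m := by
  have := bitc_two_pow_mul_add (e := e) (m := m) (b := 0) (Nat.pow_pos (by norm_num))
  simpa [bitc_zero] using this

lemma bitc_one : bitc 1 = 1 := by
  rw [show (1:ℕ) = 2 * 0 + 1 by ring, bitc_two_mul_add_one, bitc_zero]

lemma bitc_two_pow (e : ℕ) : bitc (2 ^ e) = 1 := by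
  have := bitc_two_pow_mul e 1
  simpa [bitc_one] using this

lemma bitc_two_pow_sub_one (e : ℕ) : bitc (2 ^ e - 1) = e := by
  induction e with
  | zero => simp [bitc_zero]
  | succ e ih =>
    have : 2 ^ (e + 1) - 1 = 2 * (2 ^ e - 1) + 1 := by
      have : 1 ≤ 2 ^ e := Nat.one_le_two_pow
      have h2 : 2 ^ (e + 1) = 2 * 2 ^ e := by ring
      omega
    rw [this, bitc_two_mul_add_one, ih]

lemma bitc_succ_le (x : ℕ) : bitc (x + 1) ≤ bitc x + 1 := by
  induction x using Nat.strong_induction_on with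
  | _ x ih =>
    rcases Nat.even_or_odd x with ⟨c, hc⟩ | ⟨c, hc⟩
    · have : x + 1 = 2 * c + 1 := by omega
      rw [this, bitc_two_mul_add_one, (by omega : x = 2 * c), bitc_two_mul]
    · have hx1 : x + 1 = 2 * (c + 1) := by omega
      have hx : x = 2 * c + 1 := by omega
      rw [hx1, bitc_two_mul, hx, bitc_two_mul_add_one]
      have := ih c (by omega)
      omega

lemma bitc_two_pow_add_le (t x : ℕ) : bitc (2 ^ t + x) ≤ 1 + bitc x := by
  induction t generalizing x with
  | zero =>
    simpa [Nat.add_comm] using bitc_succ_le x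
  | succ t ih =>
    have key : 2 ^ (t + 1) + x = 2 * (2 ^ t + x / 2) + x % 2 := by
      have h2 : 2 ^ (t + 1) = 2 * 2 ^ t := by ring
      omega
    rcases Nat.even_or_odd x with ⟨c, hc⟩ | ⟨c, hc⟩
    · have hx2 : x % 2 = 0 := by omega
      rw [key, hx2, Nat.add_zero, bitc_two_mul]
      have hbx : bitc x = bitc (x / 2) := by
        conv_lhs => rw [(by omega : x = 2 * (x / 2)), bitc_two_mul]
      have := ih (x / 2)
      omega
    · have hx2 : x % 2 = 1 := by omega
      rw [key, hx2, bitc_two_mul_add_one]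
      have h3 : bitc x = bitc (x / 2) + 1 := by
        conv_lhs => rw [(by omega : x = 2 * (x / 2) + 1), bitc_two_mul_add_one]
      have := ih (x / 2)
      omega

lemma bitc_sum_pow_le {ι : Type*} (F : Finset ι) (t : ι → ℕ) :
    bitc (∑ j ∈ F, 2 ^ t j) ≤ F.card := by
  classical
  induction F using Finset.induction_on with
  | empty => simp [bitc_zero]
  | insert _ _ hne ih =>
    rename_i a s
    rw [Finset.sum_insert hne, Finset.card_insert_of_notMem hne]
    calc bitc (2 ^ t a + ∑ j ∈ s, 2 ^ t j) ≤ 1 + bitc (∑ j ∈ s, 2 ^ t j) := bitc_two_pow_add_le _ _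
      _ ≤ 1 + s.card := by omega
      _ = s.card + 1 := by omega

/-! ### Sums of powers of two with (almost) distinct exponents -/

def npow (L : List ℕ) : ℕ := (L.map (2 ^ ·)).sum

lemma npow_cons (e : ℕ) (L : List ℕ) : npow (e :: L) = 2 ^ e + npow L := by simp [npow]

lemma npow_dvd {e : ℕ} {L : List ℕ} (h : ∀ x ∈ L, e < x) : 2 ^ (e + 1) ∣ npow L := by
  apply List.dvd_sum
  intro x hx
  simp only [List.mem_map] at hx
  obtain ⟨y, hy, rfl⟩ := hx
  exact pow_dvd_pow 2 (by exact h y hy)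

lemma bitc_npow_sorted {L : List ℕ} (h : L.Pairwise (· < ·)) : bitc (npow L) = L.length := by
  induction L with
  | nil => simp [npow, bitc_zero]
  | cons e L ih =>
    rw [List.pairwise_cons] at h
    obtain ⟨M, hM⟩ := npow_dvd h.1
    have h2e : (2:ℕ) ^ e < 2 ^ (e + 1) := Nat.pow_lt_pow_succ (by norm_num)
    rw [npow_cons, hM, Nat.add_comm (2 ^ e) _, bitc_two_pow_mul_add h2e, bitc_two_pow]
    have hbM : bitc (npow L) = bitc M := by rw [hM, bitc_two_pow_mul]
    rw [ih h.2] at hbM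
    simp [← hbM]
/-! ### The key lower bound on digit counts -/

lemma la_strict : ∀ (L : List ℕ), L.Pairwise (· < ·) → (∀ x ∈ L, 1 ≤ x) →
    ∀ t, 1 ≤ t → t ≤ npow L → L.length + 1 ≤ bitc (npow L - t) + t := by
  intro L
  induction L with
  | nil => intro _ _ t ht1 htN; simp [npow] at htN; omega
  | cons e L ih =>
    intro hs h1 t ht1 htN
    rw [List.pairwise_cons] at hs
    have he1 : 1 ≤ e := h1 e (by simp)
    have hL1 : ∀ x ∈ L, 1 ≤ x := fun x hx => h1 x (by simp [hx])
    obtain ⟨M, hM⟩ := npow_dvd hs.1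
    have hbN' : bitc (npow L) = L.length := bitc_npow_sorted hs.2
    have hbM : bitc M = L.length := by
      rw [hM, bitc_two_pow_mul] at hbN'; exact hbN'
    have h2e : (2:ℕ) ^ e < 2 ^ (e + 1) := Nat.pow_lt_pow_succ (by norm_num)
    have h2e2 : (2:ℕ) ≤ 2 ^ e := by
      calc (2:ℕ) = 2 ^ 1 := by norm_num
      _ ≤ 2 ^ e := Nat.pow_le_pow_right (by norm_num) he1
    rw [npow_cons] at htN ⊢
    rcases lt_trichotomy t (2 ^ e) with hlt | heq | hgt
    · have hsplit : 2 ^ e + npow L - t = npow L + (2 ^ e - t) := by omega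
      rw [hsplit, hM, bitc_two_pow_mul_add (by omega)]
      have : 0 < bitc (2 ^ e - t) := bitc_pos (by omega)
      simp only [List.length_cons]
      omega
    · have hsplit : 2 ^ e + npow L - t = npow L := by omega
      rw [hsplit, hbN']
      simp only [List.length_cons]
      omega
    · have ht' : 1 ≤ t - 2 ^ e := by omega
      have htN' : t - 2 ^ e ≤ npow L := by omega
      have := ih hs.2 hL1 (t - 2 ^ e) ht' htN'
      have hsplit : 2 ^ e + npow L - t = npow L - (t - 2 ^ e) := by omega
      rw [hsplit]
      simp only [List.length_cons]
      omega

lemma la_beta (e₁ e₂ : ℕ) (L : List ℕ) (h12 : e₁ ≤ e₂) (he1 : 1 ≤ e₁)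
    (hs : (e₂ :: L).Pairwise (· < ·)) (h1 : ∀ x ∈ e₂ :: L, 1 ≤ x) :
    ∀ t, 2 ≤ t → t ≤ npow (e₁ :: e₂ :: L) →
      (e₁ :: e₂ :: L).length + 1 ≤ bitc (npow (e₁ :: e₂ :: L) - t) + t := by
  intro t ht2 htN
  rcases h12.lt_or_eq with hlt | heq
  · have hsort : (e₁ :: e₂ :: L).Pairwise (· < ·) := by
      rw [List.pairwise_cons]
      refine ⟨?_, hs⟩
      intro b hb
      rcases List.mem_cons.mp hb with rfl | hb'
      · exact hlt
      · rw [List.pairwise_cons] at hs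
        exact lt_trans hlt (hs.1 b hb')
    exact la_strict _ hsort (by
      intro x hx
      rcases List.mem_cons.mp hx with rfl | hx'
      · exact he1
      · exact h1 x hx') t (by omega) htN
  · subst heq
    rw [List.pairwise_cons] at hs
    have hLgt : ∀ x ∈ L, e₁ < x := hs.1
    obtain ⟨M, hM⟩ := npow_dvd hLgt
    have hbL : bitc (npow L) = L.length := bitc_npow_sorted hs.2
    have hbM : bitc M = L.length := by rw [hM, bitc_two_pow_mul] at hbL; exact hbL
    have hNfull : npow (e₁ :: e₁ :: L) = 2 ^ (e₁ + 1) + npow L := by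
      rw [npow_cons, npow_cons]
      have : (2:ℕ) ^ (e₁ + 1) = 2 ^ e₁ + 2 ^ e₁ := by ring
      omega
    have h4 : (4:ℕ) ≤ 2 ^ (e₁ + 1) := by
      calc (4:ℕ) = 2 ^ 2 := by norm_num
      _ ≤ 2 ^ (e₁ + 1) := Nat.pow_le_pow_right (by norm_num) (by omega)
    rw [hNfull] at htN ⊢
    rcases lt_trichotomy t (2 ^ (e₁ + 1)) with hlt' | heq' | hgt'
    · have hsplit : 2 ^ (e₁ + 1) + npow L - t = npow L + (2 ^ (e₁ + 1) - t) := by omega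
      rw [hsplit, hM, bitc_two_pow_mul_add (by omega)]
      have hb1 : 0 < bitc (2 ^ (e₁ + 1) - t) := bitc_pos (by omega)
      simp only [List.length_cons]
      omega
    · have hsplit : 2 ^ (e₁ + 1) + npow L - t = npow L := by omega
      rw [hsplit, hbL]
      simp only [List.length_cons]
      omega
    · have ht' : 1 ≤ t - 2 ^ (e₁ + 1) := by omega
      have htN' : t - 2 ^ (e₁ + 1) ≤ npow L := by omega
      have := la_strict L hs.2 (fun x hx => by have := hLgt x hx; omega) _ ht' htN'
      have hsplit : 2 ^ (e₁ + 1) + npow L - t = npow L - (t - 2 ^ (e₁ + 1)) := by omega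
      rw [hsplit]
      simp only [List.length_cons]
      omega
/-! ### Arithmetic consequences for the degree `n` -/

section Arith

variable (k : ℕ) (d : ℕ → ℕ)

lemma list_map_range_sum (m : ℕ) (f : ℕ → ℕ) :
    ((List.range m).map f).sum = ∑ j ∈ Finset.range m, f j := by
  induction m with
  | zero => simp
  | succ m ih => rw [List.range_succ, Finset.sum_range_succ, List.map_append, List.sum_append, ih]; simp

variable (hk : 3 ≤ k)
    (hpos : ∀ i, 1 ≤ i → i ≤ k - 1 → 0 < d i)
    (hstrict : ∀ i, 2 ≤ i → i ≤ k - 2 → d i < d (i - 1))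
    (hweak : d (k - 1) ≤ d (k - 2))

include hk hstrict in
lemma d_strict_anti : ∀ b a, 1 ≤ a → a < b → b ≤ k - 2 → d b < d a := by
  intro b
  induction b with
  | zero => omega
  | succ b ih =>
    intro a ha hab hb
    have hstep : d (b + 1) < d b := by
      have := hstrict (b + 1) (by omega) hb
      simpa using this
    rcases eq_or_lt_of_le (Nat.lt_succ_iff.mp hab) with rfl | hab'
    · exact hstep
    · exact lt_trans hstep (ih a ha hab' (by omega))

include hk hpos hstrict hweak in
lemma arith_main : ∀ s', s' + 2 ≤ k - 1 →
    s' + 1 ≤ bitc ((∑ i ∈ Finset.Icc 1 (k - 1), (2 ^ d i - 1)) + s') := by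
  intro s' hs'
  set n := ∑ i ∈ Finset.Icc 1 (k - 1), (2 ^ d i - 1) with hn
  set N := ∑ i ∈ Finset.Icc 1 (k - 1), 2 ^ d i with hN
  have hnN : n + (k - 1) = N := by
    rw [hn, hN]
    have hcard : (Finset.Icc 1 (k - 1)).card = k - 1 := by
      rw [Nat.card_Icc]; omega
    calc ∑ i ∈ Finset.Icc 1 (k-1), (2 ^ d i - 1) + (k - 1)
        = ∑ i ∈ Finset.Icc 1 (k-1), (2 ^ d i - 1) + ∑ _i ∈ Finset.Icc 1 (k-1), 1 := by
          rw [Finset.sum_const, hcard, smul_eq_mul, mul_one]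
      _ = ∑ i ∈ Finset.Icc 1 (k-1), ((2 ^ d i - 1) + 1) := by rw [Finset.sum_add_distrib]
      _ = ∑ i ∈ Finset.Icc 1 (k-1), 2 ^ d i := by
          apply Finset.sum_congr rfl
          intro i _
          have : 1 ≤ 2 ^ d i := Nat.one_le_two_pow
          omega
  -- the list of exponents
  set Lt := (List.range (k - 2)).map (fun j => d (k - 2 - j)) with hLt
  set Lt2 := (List.range (k - 3)).map (fun j => d (k - 3 - j)) with hLt2
  have hLtdecomp : Lt = d (k - 2) :: Lt2 := by
    rw [hLt, hLt2, (by omega : k - 2 = (k - 3) + 1), List.range_succ_eq_map]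
    simp only [List.map_cons, List.map_map, Nat.sub_zero]
    congr 1
    apply List.map_congr_left
    intro j hj
    simp only [Function.comp_apply]
    congr 1
    rw [List.mem_range] at hj
    omega
  have hLtsorted : Lt.Pairwise (· < ·) := by
    rw [hLt]
    rw [List.pairwise_map]
    apply List.Pairwise.imp_of_mem ?_ ((List.pairwise_lt_range (n := k - 2)))
    intro a b ha hb hab
    rw [List.mem_range] at ha hb
    exact d_strict_anti k d hk hstrict (k - 2 - a) (k - 2 - b) (by omega) (by omega) (by omega)
  have hLtpos : ∀ x ∈ Lt, 1 ≤ x := by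
    rw [hLt]
    intro x hx
    rw [List.mem_map] at hx
    obtain ⟨j, hj, rfl⟩ := hx
    rw [List.mem_range] at hj
    exact hpos (k - 2 - j) (by omega) (by omega)
  have hnpow : npow (d (k - 1) :: Lt) = N := by
    rw [npow_cons, hLt, npow, List.map_map, list_map_range_sum]
    have h1 : ∑ j ∈ Finset.range (k - 2), ((fun x => 2 ^ x) ∘ fun j => d (k - 2 - j)) j
        = ∑ j ∈ Finset.range (k - 2), 2 ^ d (j + 1) := by
      rw [← Finset.sum_range_reflect]
      apply Finset.sum_congr rfl
      intro j hj
      rw [Finset.mem_range] at hj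
      simp only [Function.comp_apply]
      congr 2
      omega
    rw [h1, hN]
    have h2 : Finset.Icc 1 (k - 1) = Finset.Ico 1 (k - 1 + 1) := by
      rw [Finset.Ico_add_one_right_eq_Icc]
    rw [h2, Finset.sum_Ico_eq_sum_range]
    have h3 : k - 1 + 1 - 1 = (k - 2) + 1 := by omega
    rw [h3, Finset.sum_range_succ]
    have h4 : ∀ j, 1 + j = j + 1 := by omega
    simp only [h4]
    have h5 : k - 2 + 1 = k - 1 := by omega
    rw [h5]
    omega
  -- apply la_beta
  have hNk : k - 1 ≤ N := by omega
  set t := (k - 1) - s' with ht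
  have hbeta := la_beta (d (k - 1)) (d (k - 2)) Lt2 hweak
    (hpos (k - 1) (by omega) (by omega))
    (by rw [← hLtdecomp]; exact hLtsorted)
    (by rw [← hLtdecomp]; exact hLtpos)
    t (by omega) (by
      have : npow (d (k-1) :: d (k-2) :: Lt2) = N := by rw [← hLtdecomp]; exact hnpow
      omega)
  rw [show (d (k-1) :: d (k-2) :: Lt2) = d (k-1) :: Lt by rw [hLtdecomp]] at hbeta
  rw [hnpow] at hbeta
  have hlen : (d (k - 1) :: Lt).length = k - 1 := by
    simp only [List.length_cons, hLt, List.length_map, List.length_range]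
    omega
  rw [hlen] at hbeta
  have hsub : N - t = n + s' := by omega
  rw [hsub] at hbeta
  omega

include hk hpos hstrict hweak in
lemma arith_not_rep {ι : Type*} (F : Finset ι) (t : ι → ℕ) (hF : F.card + 2 ≤ k - 1) :
    (∑ i ∈ Finset.Icc 1 (k - 1), (2 ^ d i - 1)) + F.card ≠ ∑ j ∈ F, 2 ^ t j := by
  intro heq
  have h1 := bitc_sum_pow_le F t
  have h2 := arith_main k d hk hpos hstrict hweak F.card hF
  rw [heq] at h2
  omega

end Arith
/-! ### Infrastructure on homogeneous components -/

namespace SteenrodAux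

open MvPolynomial Finset

variable {k : ℕ}

local notation "P" => MvPolynomial (Fin k) (ZMod 2)

lemma degU (v : Fin k →₀ ℕ) : v.degree = ∑ j, v j :=
  Finset.sum_subset (Finset.subset_univ _) (fun _ _ hx => Finsupp.notMem_support_iff.mp hx)

lemma deg_sub {v m : Fin k →₀ ℕ} (h : v ≤ m) : m.degree = v.degree + (m - v).degree := by
  rw [degU, degU, degU, ← Finset.sum_add_distrib]
  apply Finset.sum_congr rfl
  intro j _
  have := Finsupp.le_def.mp h j
  rw [Finsupp.tsub_apply]
  omega

lemma deg_le_of_le {v m : Fin k →₀ ℕ} (h : v ≤ m) : v.degree ≤ m.degree := by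
  rw [deg_sub h]; omega

lemma hC_monomial_mul (v : Fin k →₀ ℕ) (c : ZMod 2) (h : P) (D : ℕ) :
    homogeneousComponent D (monomial v c * h) =
      if v.degree ≤ D then monomial v c * homogeneousComponent (D - v.degree) h else 0 := by
  ext m
  rw [coeff_homogeneousComponent]
  by_cases hvD : v.degree ≤ D
  · rw [if_pos hvD, coeff_monomial_mul', coeff_monomial_mul', coeff_homogeneousComponent]
    by_cases hvm : v ≤ m
    · have hdm := deg_sub hvm
      rw [if_pos hvm, if_pos hvm]
      by_cases hd : (m - v).degree = D - v.degree
      · rw [if_pos hd, if_pos (by omega : m.degree = D)]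
      · rw [if_neg hd, if_neg (by omega : ¬ m.degree = D), mul_zero]
    · rw [if_neg hvm, if_neg hvm, ite_self]
  · rw [if_neg hvD, coeff_monomial_mul', coeff_zero]
    by_cases hdm : m.degree = D
    · rw [if_pos hdm]
      have hvm : ¬ v ≤ m := fun hle => hvD (by have := deg_le_of_le hle; omega)
      rw [if_neg hvm]
    · rw [if_neg hdm]

lemma hC_of_homog {f : P} {e : ℕ} (hf : f.IsHomogeneous e) (D : ℕ) :
    homogeneousComponent D f = if D = e then f else 0 := by
  ext m
  rw [coeff_homogeneousComponent]
  by_cases h1 : D = e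
  · rw [if_pos h1]
    by_cases h2 : m.degree = D
    · rw [if_pos h2]
    · rw [if_neg h2]
      exact (hf.coeff_eq_zero (by omega)).symm
  · rw [if_neg h1, coeff_zero]
    by_cases h2 : m.degree = D
    · rw [if_pos h2]
      exact hf.coeff_eq_zero (by omega)
    · rw [if_neg h2]

lemma sum_hC_le {f : P} {N : ℕ} (h : f.totalDegree ≤ N) :
    ∑ i ∈ range (N + 1), homogeneousComponent i f = f := by
  conv_rhs => rw [← sum_homogeneousComponent f]
  apply (Finset.sum_subset ?_ ?_).symm
  · intro x hx
    rw [Finset.mem_range] at *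
    omega
  · intro x _ hx
    rw [Finset.mem_range] at hx
    exact homogeneousComponent_eq_zero x f (by omega)

lemma hC_mul_top {p q : P} {dp dq : ℕ} (hp : p.totalDegree ≤ dp) (hq : q.totalDegree ≤ dq) :
    homogeneousComponent (dp + dq) (p * q) =
      homogeneousComponent dp p * homogeneousComponent dq q := by
  conv_lhs => rw [← sum_hC_le hp, ← sum_hC_le hq]
  rw [Finset.sum_mul_sum, map_sum]
  have key : ∀ i j : ℕ, homogeneousComponent (dp + dq)
      (homogeneousComponent i p * homogeneousComponent j q) =
      if dp + dq = i + j then homogeneousComponent i p * homogeneousComponent j q else 0 :=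
    fun i j => hC_of_homog ((homogeneousComponent_isHomogeneous i p).mul
      (homogeneousComponent_isHomogeneous j q)) _
  rw [Finset.sum_eq_single dp]
  · rw [map_sum, Finset.sum_eq_single dq]
    · rw [key, if_pos rfl]
    · intro b hb hbne
      rw [Finset.mem_range] at hb
      rw [key, if_neg (by omega)]
    · intro hdq
      exact absurd (Finset.self_mem_range_succ dq) hdq
  · intro b hb hbne
    rw [Finset.mem_range] at hb
    rw [map_sum]
    apply Finset.sum_eq_zero
    intro j hj
    rw [Finset.mem_range] at hj
    rw [key, if_neg (by omega)]
  · intro hdp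
    exact absurd (Finset.self_mem_range_succ dp) hdp

lemma hC_prod_top {ι : Type*} (F : Finset ι) (p : ι → P) (e : ι → ℕ)
    (h : ∀ j ∈ F, (p j).totalDegree ≤ e j) :
    homogeneousComponent (∑ j ∈ F, e j) (∏ j ∈ F, p j) =
      ∏ j ∈ F, homogeneousComponent (e j) (p j) := by
  classical
  induction F using Finset.induction_on with
  | empty =>
    simp only [Finset.sum_empty, Finset.prod_empty]
    rw [homogeneousComponent_zero]
    simp
  | insert _ _ hne ih =>
    rename_i a s
    rw [Finset.prod_insert hne, Finset.sum_insert hne, Finset.prod_insert hne]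
    rw [hC_mul_top (h a (Finset.mem_insert_self a s))
      (le_trans (totalDegree_finset_prod s p) (Finset.sum_le_sum
        (fun j hj => h j (Finset.mem_insert_of_mem hj))))]
    rw [ih (fun j hj => h j (Finset.mem_insert_of_mem hj))]

lemma prod_X_pow_monomial {ι : Type*} (F : Finset ι) (var : ι → Fin k) (m : ι → ℕ) :
    (∏ x ∈ F, (X (var x) : P) ^ m x) =
      monomial (∑ x ∈ F, Finsupp.single (var x) (m x)) 1 := by
  classical
  induction F using Finset.induction_on with
  | empty => simp
  | insert _ _ hne ih =>
    rename_i a s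
    rw [Finset.prod_insert hne, Finset.sum_insert hne, ih, X_pow_eq_monomial, monomial_mul,
      one_mul]

lemma deg_sum_single {ι : Type*} (F : Finset ι) (var : ι → Fin k) (m : ι → ℕ) :
    (∑ x ∈ F, Finsupp.single (var x) (m x)).degree = ∑ x ∈ F, m x := by
  rw [degU]
  calc ∑ j : Fin k, (∑ x ∈ F, Finsupp.single (var x) (m x)) j
      = ∑ j : Fin k, ∑ x ∈ F, (Finsupp.single (var x) (m x)) j := by
        apply Finset.sum_congr rfl; intro j _; rw [Finset.sum_apply']
    _ = ∑ x ∈ F, ∑ j : Fin k, (Finsupp.single (var x) (m x)) j := Finset.sum_comm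
    _ = ∑ x ∈ F, m x := by
        apply Finset.sum_congr rfl; intro x _
        simp [Finsupp.single_apply, Finset.sum_ite_eq]

end SteenrodAux
namespace SteenrodAux

open MvPolynomial Finset

variable {k : ℕ}

local notation "P" => MvPolynomial (Fin k) (ZMod 2)

lemma zmod2_mul_self (c : ZMod 2) : c * c = c := by revert c; decide

lemma sum_single_apply (g : Fin k → ℕ) (i : Fin k) :
    (∑ j, Finsupp.single j (g j)) i = g i := by
  rw [Finset.sum_apply']
  simp [Finsupp.single_apply, Finset.sum_ite_eq]

lemma sum_single_eq (v : Fin k →₀ ℕ) : ∑ j, Finsupp.single j (v j) = v := by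
  ext i; rw [sum_single_apply]

lemma Sq_monomial (v : Fin k →₀ ℕ) (c : ZMod 2) :
    SqTotal k (monomial v c) = C c * ∏ j, ((X j + X j ^ 2 : P) ^ v j) := by
  unfold SqTotal
  rw [aeval_monomial, algebraMap_eq]
  congr 1
  rw [Finsupp.prod_fintype]
  intro j; exact pow_zero _

lemma factor_split (j : Fin k) (a : ℕ) :
    ((X j + X j ^ 2 : P)) ^ a = X j ^ a * (1 + X j) ^ a := by
  rw [← mul_pow]; congr 1; ring

lemma Sq_monomial' (v : Fin k →₀ ℕ) (c : ZMod 2) :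
    SqTotal k (monomial v c) = C c * (monomial v 1 * ∏ j, ((1 + X j : P) ^ v j)) := by
  rw [Sq_monomial]
  congr 1
  calc ∏ j, ((X j + X j ^ 2 : P) ^ v j)
      = ∏ j, ((X j : P) ^ v j * (1 + X j) ^ v j) := by
        apply Finset.prod_congr rfl; intro j _; exact factor_split j (v j)
    _ = (∏ j, (X j : P) ^ v j) * ∏ j, ((1 + X j : P) ^ v j) := Finset.prod_mul_distrib
    _ = monomial v 1 * ∏ j, ((1 + X j : P) ^ v j) := by
        rw [prod_X_pow_monomial univ (fun j => j) (fun j => v j), sum_single_eq]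

lemma deg_single (j : Fin k) (a : ℕ) : (Finsupp.single j a).degree = a := by
  rw [degU]
  simp [Finsupp.single_apply, Finset.sum_ite_eq]

lemma isHomog_X_pow (j : Fin k) (a : ℕ) : ((X j : P) ^ a).IsHomogeneous a := by
  rw [X_pow_eq_monomial]
  exact isHomogeneous_monomial _ (deg_single j a)

lemma hC_one_add_X_top (j : Fin k) (a : ℕ) :
    homogeneousComponent a ((1 + X j : P) ^ a) = X j ^ a := by
  rw [add_pow, map_sum]
  rw [Finset.sum_eq_single 0]
  · simp only [pow_zero, one_mul, Nat.choose_zero_right, Nat.cast_one, mul_one, Nat.sub_zero]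
    rw [hC_of_homog (isHomog_X_pow j a), if_pos rfl]
  · intro b hb hbne
    rw [Finset.mem_range] at hb
    have hhom : ((1 : P) ^ b * X j ^ (a - b) * ((a.choose b : ℕ) : P)).IsHomogeneous (a - b) := by
      rw [one_pow]
      have h1 : ((X j : P) ^ (a - b)).IsHomogeneous (a - b) := isHomog_X_pow j (a - b)
      have h2 : (((a.choose b : ℕ) : P)).IsHomogeneous 0 := by
        rw [show ((a.choose b : ℕ) : P) = C ((a.choose b : ℕ) : ZMod 2) by push_cast; rfl]
        exact isHomogeneous_C _ _
      simpa using h1.mul h2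
    rw [hC_of_homog hhom, if_neg (by omega)]
  · intro h
    exact absurd (Finset.mem_range.mpr (by omega)) h

lemma tdeg_one_add_X (j : Fin k) (a : ℕ) : ((1 + X j : P) ^ a).totalDegree ≤ a := by
  refine le_trans (totalDegree_pow _ _) ?_
  have h : (1 + X j : P).totalDegree ≤ 1 := by
    refine le_trans (totalDegree_add _ _) ?_
    simp [totalDegree_one, totalDegree_X]
  calc a * (1 + X j : P).totalDegree ≤ a * 1 := Nat.mul_le_mul_left a h
    _ = a := by omega

lemma tdeg_factor (j : Fin k) (a : ℕ) : ((X j + X j ^ 2 : P) ^ a).totalDegree ≤ 2 * a := by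
  refine le_trans (totalDegree_pow _ _) ?_
  have h : (X j + X j ^ 2 : P).totalDegree ≤ 2 := by
    refine le_trans (totalDegree_add _ _) ?_
    simp [totalDegree_X, totalDegree_X_pow]
  calc a * (X j + X j ^ 2 : P).totalDegree ≤ a * 2 := Nat.mul_le_mul_left a h
    _ = 2 * a := by omega

lemma hC_factor_top (j : Fin k) (a : ℕ) :
    homogeneousComponent (2 * a) ((X j + X j ^ 2 : P) ^ a) = X j ^ (2 * a) := by
  have h1 : ((X j : P) ^ a).totalDegree ≤ a := by rw [totalDegree_X_pow]
  rw [factor_split, show 2 * a = a + a by ring, hC_mul_top h1 (tdeg_one_add_X j a),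
    hC_of_homog (isHomog_X_pow j a), if_pos rfl, hC_one_add_X_top, ← pow_add]

lemma mem_support_degree {f : P} {e : ℕ} (hf : f.IsHomogeneous e) {v : Fin k →₀ ℕ}
    (hv : v ∈ f.support) : v.degree = e := by
  by_contra hne
  exact (mem_support_iff.mp hv) (hf.coeff_eq_zero hne)

lemma hC_Sq_top {f : P} {e : ℕ} (hf : f.IsHomogeneous e) :
    homogeneousComponent (2 * e) (SqTotal k f) = f ^ 2 := by
  conv_lhs => rw [as_sum f]
  conv_rhs => rw [as_sum f]
  rw [map_sum, map_sum, sum_pow_char]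
  apply Finset.sum_congr rfl
  intro v hv
  have hvdeg : v.degree = e := mem_support_degree hf hv
  rw [Sq_monomial, C_mul', map_smul]
  have hmain : homogeneousComponent (2*e) (∏ j, ((X j + X j ^ 2 : P) ^ v j))
      = monomial (v + v) 1 := by
    have hsum : ∑ j, 2 * v j = 2 * e := by
      rw [← Finset.mul_sum, ← degU, hvdeg]
    rw [show (2*e) = ∑ j, 2 * v j from hsum.symm,
      hC_prod_top univ _ _ (fun j _ => tdeg_factor j (v j))]
    have : ∀ j ∈ univ, homogeneousComponent (2 * v j) ((X j + X j ^ 2 : P) ^ v j)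
        = X j ^ (2 * v j) := fun j _ => hC_factor_top j (v j)
    have hexp : (∑ x : Fin k, Finsupp.single x (2 * v x)) = v + v := by
      ext i
      rw [sum_single_apply, Finsupp.add_apply]
      omega
    rw [Finset.prod_congr rfl this, prod_X_pow_monomial univ (fun j => j) (fun j => 2 * v j),
      hexp]
  rw [hmain, pow_two, monomial_mul, zmod2_mul_self, smul_monomial, smul_eq_mul, mul_one]

lemma hC_Sq_self {f : P} {e : ℕ} (hf : f.IsHomogeneous e) :
    homogeneousComponent e (SqTotal k f) = f := by
  conv_lhs => rw [as_sum f]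
  conv_rhs => rw [as_sum f]
  rw [map_sum, map_sum]
  apply Finset.sum_congr rfl
  intro v hv
  have hvdeg : v.degree = e := mem_support_degree hf hv
  rw [Sq_monomial', C_mul', map_smul, hC_monomial_mul, if_pos (by omega)]
  rw [show e - v.degree = 0 by omega, homogeneousComponent_zero]
  have hcc : coeff 0 (∏ j, ((1 + X j : P) ^ v j)) = 1 := by
    have : coeff (0 : Fin k →₀ ℕ) (∏ j, ((1 + X j : P) ^ v j))
        = constantCoeff (∏ j, ((1 + X j : P) ^ v j)) := rfl
    rw [this, map_prod]
    simp [constantCoeff_X]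
  rw [hcc, C_1, mul_one, smul_monomial, smul_eq_mul, mul_one]

lemma hC_Sq_lt {f : P} {e D : ℕ} (hf : f.IsHomogeneous e) (hD : D < e) :
    homogeneousComponent D (SqTotal k f) = 0 := by
  conv_lhs => rw [as_sum f]
  rw [map_sum, map_sum]
  apply Finset.sum_eq_zero
  intro v hv
  have hvdeg : v.degree = e := mem_support_degree hf hv
  rw [Sq_monomial', C_mul', map_smul, hC_monomial_mul, if_neg (by omega), smul_zero]

end SteenrodAux
namespace SteenrodAux

open MvPolynomial Finset

variable {k : ℕ}

local notation "P" => MvPolynomial (Fin k) (ZMod 2)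

lemma deg_add (u v : Fin k →₀ ℕ) : (u + v).degree = u.degree + v.degree := by
  rw [degU, degU, degU, ← Finset.sum_add_distrib]
  apply Finset.sum_congr rfl
  intro j _
  simp [Finsupp.add_apply]

lemma SqOp_zero (i : ℕ) : SqOp k i (0 : P) = 0 := by
  unfold SqOp
  apply Finset.sum_eq_zero
  intro d _
  rw [map_zero, map_zero, map_zero]

lemma SqOp_homog {f : P} {e : ℕ} (hf : f.IsHomogeneous e) (i : ℕ) :
    SqOp k i f = homogeneousComponent (e + i) (SqTotal k f) := by
  by_cases hf0 : f = 0
  · subst hf0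
    rw [SqOp_zero, map_zero, map_zero]
  · unfold SqOp
    rw [hf.totalDegree hf0, Finset.sum_eq_single e]
    · rw [hC_of_homog hf, if_pos rfl]
    · intro b hb hbne
      rw [hC_of_homog hf, if_neg hbne, map_zero, map_zero]
    · intro h
      exact absurd (Finset.self_mem_range_succ e) h

lemma SqOp_mem_hit {i : ℕ} (hi : 0 < i) (f : P) : SqOp k i f ∈ hitSubmodule k :=
  Submodule.subset_span ⟨i, f, hi, rfl⟩

lemma SqOp_top {f : P} {e : ℕ} (hf : f.IsHomogeneous e) : SqOp k e f = f ^ 2 := by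
  rw [SqOp_homog hf, show e + e = 2 * e by ring, hC_Sq_top hf]

lemma hC_sq (E : ℕ) (p : P) :
    homogeneousComponent (2 * E) (p ^ 2) = (homogeneousComponent E p) ^ 2 := by
  have hN : p.totalDegree ≤ max p.totalDegree E := le_max_left _ _
  conv_lhs => rw [← sum_hC_le hN]
  rw [sum_pow_char, map_sum, Finset.sum_eq_single E]
  · rw [hC_of_homog ((homogeneousComponent_isHomogeneous E p).pow 2), if_pos (by ring)]
  · intro b hb hbne
    rw [hC_of_homog ((homogeneousComponent_isHomogeneous b p).pow 2), if_neg (by omega)]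
  · intro h
    exact absurd (Finset.mem_range.mpr (by omega)) h

lemma SqOp_double {g : P} {μ : ℕ} (hg : g.IsHomogeneous μ) (c : ℕ) :
    SqOp k (2 * c) (g ^ 2) = (SqOp k c g) ^ 2 := by
  have hg2 : (g ^ 2).IsHomogeneous (2 * μ) := by
    have := hg.pow 2
    rwa [mul_comm] at this
  rw [SqOp_homog hg2, SqOp_homog hg, map_pow, show 2 * μ + 2 * c = 2 * (μ + c) by ring, hC_sq]

lemma hC_mul_homog_right {w : P} {e : ℕ} (hw : w.IsHomogeneous e) (Kp : P) (D : ℕ) (he : e ≤ D) :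
    homogeneousComponent D (Kp * w) = homogeneousComponent (D - e) Kp * w := by
  conv_lhs => rw [as_sum Kp]
  conv_rhs => rw [as_sum Kp]
  rw [Finset.sum_mul, map_sum, map_sum, Finset.sum_mul]
  apply Finset.sum_congr rfl
  intro v hv
  rw [hC_monomial_mul, hC_of_homog (isHomogeneous_monomial (coeff v Kp) rfl) (D - e)]
  by_cases h1 : v.degree = D - e
  · rw [if_pos (by omega : v.degree ≤ D), hC_of_homog hw, if_pos (by omega : D - v.degree = e),
      if_pos (by omega : D - e = v.degree)]
  · by_cases h2 : v.degree ≤ D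
    · rw [if_pos h2, hC_of_homog hw, if_neg (by omega), mul_zero, if_neg (by omega), zero_mul]
    · rw [if_neg h2, if_neg (by omega), zero_mul]

lemma Sq_X (j : Fin k) : SqTotal k (X j : P) = X j + X j ^ 2 := by
  unfold SqTotal
  rw [aeval_X]

lemma Sq_geom (j : Fin k) (T : ℕ) :
    SqTotal k (∑ t ∈ range (T + 1), (X j : P) ^ (2 ^ t)) = X j + X j ^ (2 ^ (T + 1)) := by
  induction T with
  | zero =>
    rw [Finset.sum_range_one, pow_zero, pow_one, Sq_X, pow_one]
  | succ T ih =>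
    rw [Finset.sum_range_succ, map_add, ih, map_pow, Sq_X, add_pow_char_pow]
    have h2 : ((X j : P) ^ 2) ^ (2 ^ (T + 1)) = X j ^ (2 ^ (T + 2)) := by
      rw [← pow_mul]
      congr 1
      ring
    rw [h2]
    have hcancel : ∀ x y z : P, (x + y) + (y + z) = (x + z) + (y + y) := fun x y z => by ring
    rw [hcancel, CharTwo.add_self_eq_zero, add_zero]

lemma master (S : Finset (Fin k)) (A e : ℕ) (w : P) (hw : w.IsHomogeneous e) :
    (∏ j ∈ S, (X j : P)) * SqOp k A w +
      homogeneousComponent (S.card + A)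
        (∏ j ∈ S, ∑ t ∈ range (S.card + e + A + 1), (X j : P) ^ (2 ^ t)) * w
      ∈ hitSubmodule k := by
  classical
  set s := S.card with hs
  set D := s + e + A with hD
  set K : P := ∏ j ∈ S, ∑ t ∈ range (D + 1), (X j : P) ^ (2 ^ t) with hK
  have hSqK : SqTotal k K = ∏ j ∈ S, ((X j : P) + X j ^ (2 ^ (D + 1))) := by
    rw [hK, map_prod]
    exact Finset.prod_congr rfl (fun j _ => Sq_geom j D)
  have h2D : D < 2 ^ (D + 1) := lt_of_lt_of_le (Nat.lt_two_pow_self (n := D)) (Nat.pow_le_pow_right (by norm_num) (by omega))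
  have hu : (∏ j ∈ S, (X j : P)) = monomial (∑ j ∈ S, Finsupp.single j 1) 1 := by
    have := prod_X_pow_monomial S (fun j => j) (fun _ => 1)
    simpa [pow_one] using this
  have hdegu : (∑ j ∈ S, Finsupp.single j (1:ℕ)).degree = s := by
    rw [deg_sum_single S (fun j => j) (fun _ => 1), Finset.sum_const, smul_eq_mul, mul_one]
  have hSqK' : SqTotal k K = ∏ j ∈ S, ((X j : P) ^ (2 ^ (D + 1)) + X j) := by
    rw [hSqK]
    exact Finset.prod_congr rfl fun j _ => add_comm _ _
  have hstep2 : homogeneousComponent D (SqTotal k (K * w)) =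
      (∏ j ∈ S, (X j : P)) * SqOp k A w := by
    rw [map_mul, hSqK']
    rw [Finset.prod_add, Finset.sum_mul, map_sum, Finset.sum_eq_single (∅ : Finset (Fin k))]
    · rw [Finset.prod_empty, one_mul, Finset.sdiff_empty, hu, hC_monomial_mul, hdegu,
        if_pos (by omega : s ≤ D), show D - s = e + A by omega, ← SqOp_homog hw A, ← hu]
    · intro t ht htne
      have htne' : t.Nonempty := Finset.nonempty_iff_ne_empty.mpr htne
      have h1 : (∏ j ∈ t, (X j : P) ^ (2 ^ (D + 1)))
          = monomial (∑ j ∈ t, Finsupp.single j (2 ^ (D + 1))) 1 :=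
        prod_X_pow_monomial t (fun j => j) (fun _ => 2 ^ (D + 1))
      have h2 : (∏ j ∈ S \ t, (X j : P)) = monomial (∑ j ∈ S \ t, Finsupp.single j 1) 1 := by
        have := prod_X_pow_monomial (S \ t) (fun j => j) (fun _ => 1)
        simpa [pow_one] using this
      rw [h1, h2, monomial_mul, one_mul, hC_monomial_mul, if_neg ?_]
      rw [deg_add, deg_sum_single t (fun j => j) (fun _ => 2 ^ (D + 1)), Finset.sum_const,
        smul_eq_mul]
      have hcard : 1 ≤ t.card := Finset.card_pos.mpr htne'
      have : 2 ^ (D + 1) ≤ t.card * 2 ^ (D + 1) := Nat.le_mul_of_pos_left _ (by omega)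
      omega
    · intro h
      exact absurd (Finset.empty_mem_powerset S) h
  set N := (K * w).totalDegree with hN
  have hstep3 : homogeneousComponent D (SqTotal k (K * w)) =
      ∑ e' ∈ range (N + 1),
        homogeneousComponent D (SqTotal k (homogeneousComponent e' (K * w))) := by
    conv_lhs => rw [← sum_homogeneousComponent (K * w)]
    rw [map_sum, map_sum]
  have hsum : (∏ j ∈ S, (X j : P)) * SqOp k A w =
      ∑ e' ∈ range (N + 1),
        homogeneousComponent D (SqTotal k (homogeneousComponent e' (K * w))) := by
    rw [← hstep3, hstep2]
  have hKw : homogeneousComponent (s + A) K * w = homogeneousComponent D (K * w) := by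
    rw [hC_mul_homog_right hw K D (by omega), show D - e = s + A by omega]
  have hterm_mem : ∀ e' : ℕ, e' ≠ D →
      homogeneousComponent D (SqTotal k (homogeneousComponent e' (K * w))) ∈ hitSubmodule k := by
    intro e' hne
    by_cases hlt : e' < D
    · have heq : homogeneousComponent D (SqTotal k (homogeneousComponent e' (K * w)))
          = SqOp k (D - e') (homogeneousComponent e' (K * w)) := by
        rw [SqOp_homog (homogeneousComponent_isHomogeneous e' _) (D - e'),
          Nat.add_sub_cancel' hlt.le]
      rw [heq]
      exact SqOp_mem_hit (by omega) _
    · rw [hC_Sq_lt (homogeneousComponent_isHomogeneous e' _) (by omega)]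
      exact Submodule.zero_mem _
  rw [hKw, hsum]
  by_cases hDN : D ≤ N
  · have hDmem : D ∈ range (N + 1) := Finset.mem_range.mpr (by omega)
    rw [← Finset.sum_erase_add _ _ hDmem,
      hC_Sq_self (homogeneousComponent_isHomogeneous D (K * w)), add_assoc,
      CharTwo.add_self_eq_zero, add_zero]
    apply Submodule.sum_mem
    intro e' he'
    exact hterm_mem e' (Finset.ne_of_mem_erase he')
  · rw [homogeneousComponent_eq_zero D (K * w) (by omega), add_zero]
    apply Submodule.sum_mem
    intro e' he'
    rw [Finset.mem_range] at he'
    exact hterm_mem e' (by omega)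

end SteenrodAux
namespace SteenrodAux

open MvPolynomial Finset

variable {k : ℕ}

local notation "P" => MvPolynomial (Fin k) (ZMod 2)

lemma hC_K_eq (S : Finset (Fin k)) (T P' : ℕ) :
    homogeneousComponent P' (∏ j ∈ S, ∑ t ∈ range (T + 1), (X j : P) ^ (2 ^ t)) =
      ∑ p ∈ S.pi (fun _ => range (T + 1)),
        if (∑ x ∈ S.attach, 2 ^ p x.1 x.2) = P'
        then monomial (∑ x ∈ S.attach, Finsupp.single x.1 (2 ^ p x.1 x.2)) (1 : ZMod 2) else 0 := by
  classical
  rw [Finset.prod_sum, map_sum]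
  apply Finset.sum_congr rfl
  intro p hp
  rw [prod_X_pow_monomial S.attach (fun x => x.1) (fun x => 2 ^ p x.1 x.2)]
  rw [hC_of_homog (isHomogeneous_monomial _
    (deg_sum_single S.attach (fun x => x.1) (fun x => 2 ^ p x.1 x.2))) P']
  by_cases h : (∑ x ∈ S.attach, 2 ^ p x.1 x.2) = P'
  · rw [if_pos h.symm, if_pos h]
  · rw [if_neg (fun hh => h hh.symm), if_neg h]

lemma corA (S : Finset (Fin k)) (m' : ℕ) (w : P) (hw : w.IsHomogeneous m')
    (harith : ∀ g : Fin k → ℕ, (∑ j ∈ S, 2 ^ g j) ≠ S.card + m') :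
    (∏ j ∈ S, (X j : P)) * w ^ 2 ∈ hitSubmodule k := by
  classical
  have hm := master S m' m' w hw
  rw [SqOp_top hw, hC_K_eq] at hm
  have hz : (∑ p ∈ S.pi (fun _ => range (S.card + m' + m' + 1)),
      if (∑ x ∈ S.attach, 2 ^ p x.1 x.2) = S.card + m'
      then monomial (∑ x ∈ S.attach, Finsupp.single x.1 (2 ^ p x.1 x.2)) (1 : ZMod 2) else 0)
      = 0 := by
    apply Finset.sum_eq_zero
    intro p hp
    rw [if_neg]
    intro heq
    apply harith (fun j => if h : j ∈ S then p j h else 0)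
    rw [← heq, ← Finset.sum_attach S (fun j => 2 ^ (if h : j ∈ S then p j h else 0))]
    apply Finset.sum_congr rfl
    intro x _
    rw [dif_pos x.2]
  rw [hz, zero_mul, add_zero] at hm
  exact hm

lemma corB (S : Finset (Fin k)) (c μ : ℕ) (hc : 0 < c) (g : P) (hg : g.IsHomogeneous μ)
    (HA : ∀ (S₀ : Finset (Fin k)) (m' : ℕ) (t : Fin k → ℕ), S₀.card + 2 ≤ S.card →
      S₀.card + 2 * m' = S.card + 2 * μ + 2 * c → (∑ j ∈ S₀, 2 ^ t j) ≠ S₀.card + m') :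
    (∏ j ∈ S, (X j : P)) * (SqOp k c g) ^ 2 ∈ hitSubmodule k := by
  classical
  rw [← SqOp_double hg c]
  have hg2 : (g ^ 2).IsHomogeneous (2 * μ) := by
    have := hg.pow 2
    rwa [mul_comm] at this
  have hm := master S (2 * c) (2 * μ) (g ^ 2) hg2
  have hKmem : homogeneousComponent (S.card + 2 * c)
      (∏ j ∈ S, ∑ t ∈ range (S.card + 2 * μ + 2 * c + 1), (X j : P) ^ (2 ^ t)) * (g ^ 2)
      ∈ hitSubmodule k := by
    rw [hC_K_eq, Finset.sum_mul]
    apply Submodule.sum_mem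
    intro p hp
    by_cases hmatch : (∑ x ∈ S.attach, 2 ^ p x.1 x.2) = S.card + 2 * c
    · rw [if_pos hmatch]
      set t : Fin k → ℕ := fun j => if h : j ∈ S then p j h else 0 with hT
      have hsum_t : (∑ j ∈ S, 2 ^ t j) = S.card + 2 * c := by
        rw [← hmatch, ← Finset.sum_attach S (fun j => 2 ^ t j)]
        apply Finset.sum_congr rfl
        intro x _
        simp only [hT]
        rw [dif_pos x.2]
      have hexp2 : (∑ x ∈ S.attach, Finsupp.single x.1 (2 ^ p x.1 x.2))
          = ∑ j ∈ S, Finsupp.single j (2 ^ t j) := by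
        rw [← Finset.sum_attach S (fun j => Finsupp.single j (2 ^ t j))]
        apply Finset.sum_congr rfl
        intro x _
        simp only [hT]
        rw [dif_pos x.2]
      have hmono : monomial (∑ x ∈ S.attach, Finsupp.single x.1 (2 ^ p x.1 x.2)) (1 : ZMod 2)
          = ∏ j ∈ S, (X j : P) ^ (2 ^ t j) := by
        rw [prod_X_pow_monomial S (fun j => j) (fun j => 2 ^ t j), hexp2]
      rw [hmono]
      set S₀ := S.filter (fun j => t j = 0) with hS0
      set S₁ := S.filter (fun j => ¬ t j = 0) with hS1
      have hsplit : (∏ j ∈ S, (X j : P) ^ (2 ^ t j))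
          = (∏ j ∈ S₀, (X j : P)) * (∏ j ∈ S₁, (X j : P) ^ (2 ^ (t j - 1))) ^ 2 := by
        rw [← Finset.prod_filter_mul_prod_filter_not S (fun j => t j = 0)
          (fun j => (X j : P) ^ (2 ^ t j))]
        congr 1
        · apply Finset.prod_congr rfl
          intro j hj
          rw [Finset.mem_filter] at hj
          rw [hj.2, pow_zero, pow_one]
        · rw [← Finset.prod_pow]
          apply Finset.prod_congr rfl
          intro j hj
          rw [Finset.mem_filter] at hj
          rw [← pow_mul]
          congr 1
          have hne : t j ≠ 0 := hj.2
          have h2 : 2 ^ (t j - 1) * 2 = 2 ^ t j := by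
            rw [← pow_succ]
            congr 1
            omega
          omega
      rw [hsplit, mul_assoc, ← mul_pow]
      set h1 : P := ∏ j ∈ S₁, (X j : P) ^ (2 ^ (t j - 1)) with hh1
      have hh1deg : h1.IsHomogeneous (∑ j ∈ S₁, 2 ^ (t j - 1)) := by
        rw [hh1, prod_X_pow_monomial S₁ (fun j => j) (fun j => 2 ^ (t j - 1))]
        exact isHomogeneous_monomial _ (deg_sum_single _ _ _)
      set mh := ∑ j ∈ S₁, 2 ^ (t j - 1) with hmh
      have hcards : S₀.card + S₁.card = S.card :=
        Finset.card_filter_add_card_filter_not _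
      have hsum_split : (∑ j ∈ S₀, 2 ^ t j) + (∑ j ∈ S₁, 2 ^ t j) = S.card + 2 * c := by
        rw [Finset.sum_filter_add_sum_filter_not S (fun j => t j = 0) (fun j => 2 ^ t j), hsum_t]
      have hS0sum : (∑ j ∈ S₀, 2 ^ t j) = S₀.card := by
        rw [Finset.sum_congr rfl (fun j hj => by
          rw [Finset.mem_filter] at hj
          rw [hj.2, pow_zero] : ∀ j ∈ S₀, 2 ^ t j = 1)]
        rw [Finset.sum_const, smul_eq_mul, mul_one]
      have hS1sum : (∑ j ∈ S₁, 2 ^ t j) = 2 * mh := by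
        rw [hmh, Finset.mul_sum]
        apply Finset.sum_congr rfl
        intro j hj
        rw [Finset.mem_filter] at hj
        have hne : t j ≠ 0 := hj.2
        have h2 : 2 * 2 ^ (t j - 1) = 2 ^ t j := by
          rw [mul_comm, ← pow_succ]
          congr 1
          omega
        omega
      have hS1pos : S₁.card ≠ 0 := by
        intro h0
        have hS1e : S₁ = ∅ := Finset.card_eq_zero.mp h0
        rw [hS1e, Finset.sum_empty] at hsum_split
        omega
      apply corA S₀ (mh + μ) _ (hh1deg.mul hg)
      intro gf
      apply HA S₀ (mh + μ) gf (by omega) (by omega)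
    · rw [if_neg hmatch, zero_mul]
      exact Submodule.zero_mem _
  have hrw : (∏ j ∈ S, (X j : P)) * SqOp k (2 * c) (g ^ 2) =
      ((∏ j ∈ S, (X j : P)) * SqOp k (2 * c) (g ^ 2) +
        homogeneousComponent (S.card + 2 * c)
          (∏ j ∈ S, ∑ t ∈ range (S.card + 2 * μ + 2 * c + 1), (X j : P) ^ (2 ^ t)) * (g ^ 2)) +
        homogeneousComponent (S.card + 2 * c)
          (∏ j ∈ S, ∑ t ∈ range (S.card + 2 * μ + 2 * c + 1), (X j : P) ^ (2 ^ t)) * (g ^ 2) := by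
    rw [add_assoc, CharTwo.add_self_eq_zero, add_zero]
  rw [hrw]
  exact Submodule.add_mem _ hm hKmem

lemma desc (S : Finset (Fin k)) (m₀ : ℕ)
    (HA : ∀ (S₀ : Finset (Fin k)) (m' : ℕ) (t : Fin k → ℕ), S₀.card + 2 ≤ S.card →
      S₀.card + 2 * m' = S.card + 2 * m₀ → (∑ j ∈ S₀, 2 ^ t j) ≠ S₀.card + m')
    {y : P} (hy : y ∈ hitSubmodule k) :
    (∏ j ∈ S, (X j : P)) * (homogeneousComponent m₀ y) ^ 2 ∈ hitSubmodule k := by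
  induction hy using Submodule.span_induction with
  | mem z hz =>
    obtain ⟨i, f, hi, rfl⟩ := hz
    by_cases hile : i ≤ m₀
    · by_cases hdin : m₀ - i ≤ f.totalDegree
      · have hEq : homogeneousComponent m₀ (SqOp k i f) =
            SqOp k i (homogeneousComponent (m₀ - i) f) := by
          have hunfold : SqOp k i f = ∑ d ∈ range (f.totalDegree + 1),
              homogeneousComponent (d + i) (SqTotal k (homogeneousComponent d f)) := rfl
          rw [hunfold, map_sum, Finset.sum_eq_single (m₀ - i)]
          · rw [SqOp_homog (homogeneousComponent_isHomogeneous (m₀ - i) f) i]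
            rw [hC_of_homog (homogeneousComponent_isHomogeneous ((m₀ - i) + i)
              (SqTotal k (homogeneousComponent (m₀ - i) f))) m₀, if_pos (by omega)]
          · intro b hb hbne
            rw [hC_of_homog (homogeneousComponent_isHomogeneous (b + i)
              (SqTotal k (homogeneousComponent b f))) m₀, if_neg (by omega)]
          · intro h
            exact absurd (Finset.mem_range.mpr (by omega)) h
        rw [hEq]
        exact corB S i (m₀ - i) hi _ (homogeneousComponent_isHomogeneous (m₀ - i) f)
          (fun S₀ m' t h1 h2 => HA S₀ m' t h1 (by omega))
      · have hEq0 : homogeneousComponent m₀ (SqOp k i f) = 0 := by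
          unfold SqOp
          rw [map_sum]
          apply Finset.sum_eq_zero
          intro b hb
          rw [Finset.mem_range] at hb
          rw [hC_of_homog (homogeneousComponent_isHomogeneous (b + i)
            (SqTotal k (homogeneousComponent b f))) m₀, if_neg (by omega)]
        rw [hEq0]
        simpa using Submodule.zero_mem (hitSubmodule k)
    · have hEq0 : homogeneousComponent m₀ (SqOp k i f) = 0 := by
        unfold SqOp
        rw [map_sum]
        apply Finset.sum_eq_zero
        intro b hb
        rw [hC_of_homog (homogeneousComponent_isHomogeneous (b + i)
          (SqTotal k (homogeneousComponent b f))) m₀, if_neg (by omega)]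
      rw [hEq0]
      simpa using Submodule.zero_mem (hitSubmodule k)
  | zero =>
    rw [map_zero]
    simpa using Submodule.zero_mem (hitSubmodule k)
  | add y z hy' hz' hmy hmz =>
    rw [map_add, add_pow_char, mul_add]
    exact Submodule.add_mem _ hmy hmz
  | smul r z hz' hmz =>
    rcases (by decide : ∀ r : ZMod 2, r = 0 ∨ r = 1) r with rfl | rfl
    · rw [zero_smul, map_zero]
      simpa using Submodule.zero_mem (hitSubmodule k)
    · rw [one_smul]
      exact hmz

end SteenrodAux
section MainProof

open MvPolynomial Finset SteenrodAux

lemma sum_pow_sub_one_add (k : ℕ) (d : ℕ → ℕ) :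
    (∑ i ∈ Finset.Icc 1 (k - 1), (2 ^ d i - 1)) + (k - 1)
      = ∑ i ∈ Finset.Icc 1 (k - 1), 2 ^ d i := by
  have hcard : (Finset.Icc 1 (k - 1)).card = k - 1 := by rw [Nat.card_Icc]; omega
  calc (∑ i ∈ Finset.Icc 1 (k-1), (2 ^ d i - 1)) + (k - 1)
      = ∑ i ∈ Finset.Icc 1 (k-1), (2 ^ d i - 1) + ∑ _i ∈ Finset.Icc 1 (k-1), 1 := by
        rw [Finset.sum_const, hcard, smul_eq_mul, mul_one]
    _ = ∑ i ∈ Finset.Icc 1 (k-1), ((2 ^ d i - 1) + 1) := by rw [Finset.sum_add_distrib]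
    _ = ∑ i ∈ Finset.Icc 1 (k-1), 2 ^ d i := by
        apply Finset.sum_congr rfl
        intro i _
        have : 1 ≤ 2 ^ d i := Nat.one_le_two_pow
        omega

theorem main_aux : ∀ n : ℕ, ∀ k : ℕ, 3 ≤ k → ∀ d : ℕ → ℕ,
    (∀ i, 1 ≤ i → i ≤ k - 1 → 0 < d i) →
    (∀ i, 2 ≤ i → i ≤ k - 2 → d i < d (i - 1)) →
    (d (k - 1) ≤ d (k - 2)) →
    (∑ i ∈ Finset.Icc 1 (k - 1), (2 ^ d i - 1)) = n →
    ∀ a : Fin k →₀ ℕ, (∑ j, a j) = n →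
    (monomial a (1 : ZMod 2)) ∉ hitSubmodule k →
    ∀ i, i < d (k - 1) → wvec k a i = k - 1 := by
  intro n
  induction n using Nat.strong_induction_on with
  | _ n IH =>
  intro k hk d hpos hstrict hweak hn a ha hnothit i hi
  classical
  -- the odd-support set
  set S : Finset (Fin k) := Finset.univ.filter (fun j => Nat.testBit (a j) 0) with hS
  have hwvec0 : wvec k a 0 = S.card := rfl
  -- the halved exponent vector
  set b : Fin k →₀ ℕ := Finsupp.mapRange (· / 2) (Nat.zero_div 2) a with hb
  have hbj : ∀ j, b j = a j / 2 := fun j => Finsupp.mapRange_apply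
  have hmemS : ∀ j, j ∈ S ↔ a j % 2 = 1 := by
    intro j
    rw [hS, Finset.mem_filter]
    simp [Nat.testBit_zero]
  have hpoint : ∀ j, a j = 2 * b j + (if j ∈ S then 1 else 0) := by
    intro j
    have h1 := hmemS j
    have h2 := Nat.div_add_mod (a j) 2
    rw [hbj j]
    by_cases hj : j ∈ S
    · rw [if_pos hj]; have := h1.mp hj; omega
    · rw [if_neg hj]
      have : ¬ a j % 2 = 1 := fun hcon => hj (h1.mpr hcon)
      omega
  have hsum : n = 2 * (∑ j, b j) + S.card := by
    rw [← ha, Finset.sum_congr rfl (fun j _ => hpoint j), Finset.sum_add_distrib,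
      ← Finset.mul_sum, Finset.sum_ite_mem]
    congr 1
    rw [Finset.univ_inter, Finset.sum_const, smul_eq_mul, mul_one]
  -- the factorization x = u * y^2
  have hx : monomial a (1 : ZMod 2) = (∏ j ∈ S, (X j : MvPolynomial (Fin k) (ZMod 2)))
      * (monomial b (1 : ZMod 2)) ^ 2 := by
    have hu : (∏ j ∈ S, (X j : MvPolynomial (Fin k) (ZMod 2)))
        = monomial (∑ j ∈ S, Finsupp.single j 1) 1 := by
      have := prod_X_pow_monomial S (fun j => j) (fun _ => 1)
      simpa [pow_one] using this
    have hexpa : a = (∑ j ∈ S, Finsupp.single j 1) + (b + b) := by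
      ext j
      rw [Finsupp.add_apply, Finsupp.add_apply, Finset.sum_apply']
      have hsingle : ∑ j' ∈ S, (Finsupp.single j' (1:ℕ)) j = if j ∈ S then 1 else 0 := by
        simp only [Finsupp.single_apply]
        rw [Finset.sum_ite_eq' S j (fun _ => 1)]
      rw [hsingle]
      have := hpoint j
      omega
    rw [hu, pow_two, monomial_mul, monomial_mul, one_mul, one_mul, hexpa]
  -- arithmetic facts
  have hnN := sum_pow_sub_one_add k d
  rw [hn] at hnN
  have heven : 2 ∣ ∑ i ∈ Finset.Icc 1 (k - 1), 2 ^ d i := by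
    apply Finset.dvd_sum
    intro i hi'
    rw [Finset.mem_Icc] at hi'
    exact dvd_pow_self 2 (by have := hpos i hi'.1 hi'.2; omega)
  have hsk : S.card ≤ k := by
    calc S.card ≤ Finset.univ.card := Finset.card_filter_le _ _
    _ = k := by rw [Finset.card_univ, Fintype.card_fin]
  -- Step 1 : S.card = k - 1
  have hscard : S.card = k - 1 := by
    by_contra hne
    obtain ⟨M, hM⟩ := heven
    have hs3 : S.card + 2 ≤ k - 1 := by omega
    apply hnothit
    rw [hx]
    apply corA S (∑ j, b j) _ (isHomogeneous_monomial 1 (degU b))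
    intro g heq
    have h2 : ∑ j ∈ S, 2 ^ (g j + 1) = 2 * ∑ j ∈ S, 2 ^ g j := by
      rw [Finset.mul_sum]
      exact Finset.sum_congr rfl (fun j _ => by rw [pow_succ]; omega)
    exact arith_not_rep k d hk hpos hstrict hweak S (fun j => g j + 1) hs3
      (by
        rw [hn]
        have h3 : ∑ j ∈ S, 2 ^ ((fun j => g j + 1) j) = ∑ j ∈ S, 2 ^ (g j + 1) := rfl
        omega)
  rcases i with _ | i'
  · rw [hwvec0, hscard]
  · -- inductive step
    have hd2 : 2 ≤ d (k - 1) := by omega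
    have hallp : ∀ ii, 1 ≤ ii → ii ≤ k - 1 → 2 ≤ d ii := by
      intro ii h1 h2
      rcases Nat.lt_or_ge ii (k - 1) with hlt | hge
      · have hii2 : ii ≤ k - 2 := by omega
        rcases Nat.lt_or_ge ii (k - 2) with hlt2 | hge2
        · have := d_strict_anti k d hk hstrict (k - 2) ii h1 hlt2 (le_refl _)
          omega
        · have : ii = k - 2 := by omega
          subst this
          omega
      · have : ii = k - 1 := by omega
        subst this
        omega
    set m₀ := ∑ i ∈ Finset.Icc 1 (k - 1), (2 ^ (d i - 1) - 1) with hm₀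
    have hm0 : n = 2 * m₀ + (k - 1) := by
      rw [← hn, hm₀]
      have hcard : (Finset.Icc 1 (k - 1)).card = k - 1 := by rw [Nat.card_Icc]; omega
      calc ∑ i ∈ Finset.Icc 1 (k-1), (2 ^ d i - 1)
          = ∑ i ∈ Finset.Icc 1 (k-1), (2 * (2 ^ (d i - 1) - 1) + 1) := by
            apply Finset.sum_congr rfl
            intro i hi'
            rw [Finset.mem_Icc] at hi'
            have h1 := hpos i hi'.1 hi'.2
            have h2 : 2 ^ d i = 2 * 2 ^ (d i - 1) := by
              rw [← pow_succ']
              congr 1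
              omega
            have h3 : 1 ≤ 2 ^ (d i - 1) := Nat.one_le_two_pow
            omega
        _ = 2 * (∑ i ∈ Finset.Icc 1 (k-1), (2 ^ (d i - 1) - 1)) + (k - 1) := by
            rw [Finset.sum_add_distrib, ← Finset.mul_sum, Finset.sum_const, hcard,
              smul_eq_mul, mul_one]
    have hsb : (∑ j, b j) = m₀ := by omega
    have HAmain : ∀ (S₀ : Finset (Fin k)) (m' : ℕ) (t : Fin k → ℕ), S₀.card + 2 ≤ S.card →
        S₀.card + 2 * m' = S.card + 2 * m₀ → (∑ j ∈ S₀, 2 ^ t j) ≠ S₀.card + m' := by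
      intro S₀ m' t hcard2 hdeg heq
      have h2 : n + S₀.card = ∑ j ∈ S₀, 2 ^ (t j + 1) := by
        have : ∑ j ∈ S₀, 2 ^ (t j + 1) = 2 * ∑ j ∈ S₀, 2 ^ t j := by
          rw [Finset.mul_sum]
          apply Finset.sum_congr rfl
          intro j _
          rw [pow_succ]
          omega
        omega
      exact arith_not_rep k d hk hpos hstrict hweak S₀ (fun j => t j + 1)
        (by omega) (by
          rw [hn]
          have h3 : ∑ j ∈ S₀, 2 ^ ((fun j => t j + 1) j) = ∑ j ∈ S₀, 2 ^ (t j + 1) := rfl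
          omega)
    have hbnothit : monomial b (1 : ZMod 2) ∉ hitSubmodule k := by
      intro hmem
      apply hnothit
      have hdesc := desc S m₀ HAmain hmem
      have hCb : homogeneousComponent m₀ (monomial b (1 : ZMod 2)) = monomial b 1 := by
        rw [hC_of_homog (isHomogeneous_monomial 1 (by rw [degU, hsb])), if_pos rfl]
      rw [hCb] at hdesc
      rw [hx]
      exact hdesc
    have hIH := IH m₀ (by omega) k hk (fun i => d i - 1)
      (fun i h1 h2 => by
        have := hallp i h1 h2
        show 0 < d i - 1
        omega)
      (fun i h1 h2 => by
        have h3 := hstrict i h1 h2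
        have h4 := hallp i (by omega) (by omega)
        show d i - 1 < d (i - 1) - 1
        omega)
      (by
        have := hweak
        show d (k - 1) - 1 ≤ d (k - 2) - 1
        omega)
      rfl b hsb hbnothit i' (by
        show i' < d (k - 1) - 1
        omega)
    have hw : wvec k a (i' + 1) = wvec k b i' := by
      unfold wvec
      congr 1
      apply Finset.filter_congr
      intro j _
      have hbool : Nat.testBit (a j) (i' + 1) = Nat.testBit (b j) i' := by
        rw [show (i' : ℕ) + 1 = Nat.succ i' from rfl, Nat.testBit_succ, hbj j]
      rw [hbool]
    rw [hw, hIH]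

end MainProof

/-- Lemma 2.12: for `k ≥ 3`, integers `d_1 > … > d_{k-2} ≥ d_{k-1} > 0` and
`n = Σ_{i=1}^{k-1} (2^{d_i} - 1)`, if a monomial `x` of degree `n` in `P_k` is not hit,
then `ω_i(x) = k - 1` for `1 ≤ i ≤ d_{k-1}`. -/
theorem stmt14 (k : ℕ) (hk : 3 ≤ k) (d : ℕ → ℕ)
    (hpos : ∀ i, 1 ≤ i → i ≤ k - 1 → 0 < d i)
    (hstrict : ∀ i, 2 ≤ i → i ≤ k - 2 → d i < d (i - 1))
    (hweak : d (k - 1) ≤ d (k - 2))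
    (a : Fin k →₀ ℕ)
    (ha : ∑ j, a j = ∑ i ∈ Finset.Icc 1 (k - 1), (2 ^ d i - 1))
    (hnothit : ¬ IsHit k (MvPolynomial.monomial a (1 : ZMod 2))) :
    ∀ i, i < d (k - 1) → wvec k a i = k - 1 := by
  intro i hi
  exact main_aux (∑ i ∈ Finset.Icc 1 (k - 1), (2 ^ d i - 1)) k hk d hpos hstrict hweak rfl a ha
    hnothit i hi
end

section
/- Let x be an admissible monomial in P_k. (i) If ω_{i_0}(x) = 0 for some index i_0 ≥ 1, then ω_i(x) = 0 for all i > i_0. (ii) If ω_{i_0}(x) < k for some index i_0 ≥ 1, then ω_i(x) < k for all i > i_0. -/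
open MvPolynomial

/-- Left lexicographic order on the exponent vectors themselves, and the order `x < y`
on monomials of the same degree: either `ω(x) < ω(y)` lexicographically, or
`ω(x) = ω(y)` and `(ν_1(x), …, ν_k(x))` precedes `(ν_1(y), …, ν_k(y))`
lexicographically. -/
def monLT (k : ℕ) (a b : Fin k →₀ ℕ) : Prop :=
  wlt (wvec k a) (wvec k b) ∨
    ((∀ i, wvec k a i = wvec k b i) ∧ ∃ j : Fin k, (∀ i, i < j → a i = b i) ∧ a j < b j)

/-- A monomial (given by its exponent vector `a`) is inadmissible: there are monomials
`y_1, …, y_t` of the same degree with `y_j < x` such that `x - (y_1 + … + y_t)` is hit. -/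
def Inadmissible (k : ℕ) (a : Fin k →₀ ℕ) : Prop :=
  ∃ (t : ℕ) (y : Fin t → (Fin k →₀ ℕ)),
    (∀ j, (∑ i : Fin k, y j i) = ∑ i : Fin k, a i) ∧
    (∀ j, monLT k (y j) a) ∧
    IsHit k (MvPolynomial.monomial a (1 : ZMod 2) +
      ∑ j, MvPolynomial.monomial (y j) (1 : ZMod 2))

/-- A monomial is admissible if it is not inadmissible. -/
def Admissible (k : ℕ) (a : Fin k →₀ ℕ) : Prop := ¬ Inadmissible k a


set_option maxHeartbeats 1000000

/-! ### Bit arithmetic lemmas -/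

/-- submask relation -/
def Sub2 (s b : ℕ) : Prop := ∀ i, s.testBit i = true → b.testBit i = true

lemma testBit_div_pow (x r i : ℕ) : (x / 2 ^ r).testBit i = x.testBit (r + i) := by
  simp [Nat.testBit_eq_decide_div_mod_eq, Nat.div_div_eq_div_mul, ← pow_add]

lemma bits_decomp (c q r : ℕ) (hc : c < 2 ^ r) (i : ℕ) :
    (c + 2 ^ r * q).testBit i = if i < r then c.testBit i else q.testBit (i - r) := by
  rw [add_comm, Nat.testBit_two_pow_mul_add _ hc]

/-- Adding `2^r` to a number whose bit `r` is set and bit `r+1` is clear. -/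
lemma bits_add_pow {q : ℕ} (r : ℕ) (h1 : q.testBit r = true) (h2 : q.testBit (r+1) = false) :
    (∀ i, i < r → (q + 2 ^ r).testBit i = q.testBit i) ∧
    (q + 2 ^ r).testBit r = false ∧ (q + 2 ^ r).testBit (r+1) = true ∧
    (∀ i, r + 2 ≤ i → (q + 2 ^ r).testBit i = q.testBit i) := by
  have hq : q = q % 2 ^ r + 2 ^ r * (q / 2 ^ r) := (Nat.mod_add_div _ _).symm
  have hd1 : (q / 2 ^ r) % 2 = 1 := by
    have := h1; rw [Nat.testBit_eq_decide_div_mod_eq] at this; simpa using this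
  have hd2 : (q / 2 ^ r / 2) % 2 = 0 := by
    have := h2
    rw [Nat.testBit_eq_decide_div_mod_eq] at this
    have h' : q / 2 ^ (r+1) = q / 2 ^ r / 2 := by
      rw [pow_succ, Nat.div_div_eq_div_mul]
    rw [h'] at this; simpa using this
  set d := q / 2 ^ r with hdd
  have hd4 : d % 4 = 1 := by omega
  have hmod : q % 2 ^ r < 2 ^ r := Nat.mod_lt _ (Nat.two_pow_pos r)
  set m := d / 4 with hm
  have hd : d = 1 + 4 * m := by omega
  have hqe : q = q % 2 ^ r + 2 ^ r * (1 + 4 * m) := by rw [← hd]; exact hq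
  have hkey : 2 ^ r * (2 + 4 * m) = 2 ^ r * (1 + 4 * m) + 2 ^ r := by ring
  have hq' : q + 2 ^ r = q % 2 ^ r + 2 ^ r * (2 + 4 * m) := by omega
  refine ⟨?_, ?_, ?_, ?_⟩
  · intro i hi
    rw [hq', bits_decomp _ _ _ hmod, if_pos hi]
    conv_rhs => rw [hqe]
    rw [bits_decomp _ _ _ hmod, if_pos hi]
  · rw [hq', bits_decomp _ _ _ hmod, if_neg (lt_irrefl r), Nat.sub_self]
    simp [Nat.testBit_eq_decide_div_mod_eq]; omega
  · rw [hq', bits_decomp _ _ _ hmod, if_neg (by omega : ¬ r + 1 < r)]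
    have : r + 1 - r = 1 := by omega
    rw [this]
    simp [Nat.testBit_eq_decide_div_mod_eq]; omega
  · intro i hi
    rw [hq', bits_decomp _ _ _ hmod, if_neg (by omega)]
    conv_rhs => rw [hqe]
    rw [bits_decomp _ _ _ hmod, if_neg (by omega)]
    have h2' : i - r = (i - r - 2) + 2 := by omega
    rw [h2']
    have e1 : (2 + 4 * m) / 2 / 2 = m := by omega
    have e2 : (1 + 4 * m) / 2 / 2 = m := by omega
    simp only [Nat.testBit_add_one, e1, e2]

/-- Adding `2^r` to a number whose bits `r` and `r+1` are both set. -/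
lemma bits_add_pow' {q : ℕ} (r : ℕ) (h1 : q.testBit r = true) (h2 : q.testBit (r+1) = true) :
    (∀ i, i < r → (q + 2 ^ r).testBit i = q.testBit i) ∧
    (q + 2 ^ r).testBit r = false ∧ (q + 2 ^ r).testBit (r+1) = false := by
  have hd1 : (q / 2 ^ r) % 2 = 1 := by
    have := h1; rw [Nat.testBit_eq_decide_div_mod_eq] at this; simpa using this
  have hd2 : (q / 2 ^ r / 2) % 2 = 1 := by
    have := h2
    rw [Nat.testBit_eq_decide_div_mod_eq] at this
    have h' : q / 2 ^ (r+1) = q / 2 ^ r / 2 := by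
      rw [pow_succ, Nat.div_div_eq_div_mul]
    rw [h'] at this; simpa using this
  set d := q / 2 ^ r with hdd
  have hd4 : d % 4 = 3 := by omega
  have hmod : q % 2 ^ r < 2 ^ r := Nat.mod_lt _ (Nat.two_pow_pos r)
  set m := d / 4 with hm
  have hq0 : q = q % 2 ^ r + 2 ^ r * d := (Nat.mod_add_div _ _).symm
  have hd : d = 3 + 4 * m := by omega
  have hqe : q = q % 2 ^ r + 2 ^ r * (3 + 4 * m) := by rw [← hd]; exact hq0
  have hkey : 2 ^ r * (4 + 4 * m) = 2 ^ r * (3 + 4 * m) + 2 ^ r := by ring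
  have hq' : q + 2 ^ r = q % 2 ^ r + 2 ^ r * (4 + 4 * m) := by omega
  refine ⟨?_, ?_, ?_⟩
  · intro i hi
    rw [hq', bits_decomp _ _ _ hmod, if_pos hi]
    conv_rhs => rw [hqe]
    rw [bits_decomp _ _ _ hmod, if_pos hi]
  · rw [hq', bits_decomp _ _ _ hmod, if_neg (lt_irrefl r), Nat.sub_self]
    simp [Nat.testBit_eq_decide_div_mod_eq]; omega
  · rw [hq', bits_decomp _ _ _ hmod, if_neg (by omega : ¬ r + 1 < r)]
    have : r + 1 - r = 1 := by omega
    rw [this]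
    simp [Nat.testBit_eq_decide_div_mod_eq]; omega

/-- Subtracting `2^r` from a number whose bit `r` is clear and bit `r+1` is set. -/
lemma bits_sub_pow {B : ℕ} (r : ℕ) (h0 : B.testBit r = false) (h1 : B.testBit (r+1) = true) :
    2 ^ r ≤ B ∧ (B - 2 ^ r).testBit r = true ∧ (B - 2 ^ r).testBit (r+1) = false := by
  have hd1 : (B / 2 ^ r) % 2 = 0 := by
    have := h0; rw [Nat.testBit_eq_decide_div_mod_eq] at this; simpa using this
  have hd2 : (B / 2 ^ r / 2) % 2 = 1 := by
    have := h1
    rw [Nat.testBit_eq_decide_div_mod_eq] at this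
    have h' : B / 2 ^ (r+1) = B / 2 ^ r / 2 := by
      rw [pow_succ, Nat.div_div_eq_div_mul]
    rw [h'] at this; simpa using this
  set d := B / 2 ^ r with hdd
  have hd4 : d % 4 = 2 := by omega
  have hmod : B % 2 ^ r < 2 ^ r := Nat.mod_lt _ (Nat.two_pow_pos r)
  set m := d / 4 with hm
  have hq0 : B = B % 2 ^ r + 2 ^ r * d := (Nat.mod_add_div _ _).symm
  have hd : d = 2 + 4 * m := by omega
  have hqe : B = B % 2 ^ r + 2 ^ r * (2 + 4 * m) := by rw [← hd]; exact hq0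
  have hkey : 2 ^ r * (2 + 4 * m) = 2 ^ r * (1 + 4 * m) + 2 ^ r := by ring
  have hle : 2 ^ r ≤ B := by omega
  have hq' : B - 2 ^ r = B % 2 ^ r + 2 ^ r * (1 + 4 * m) := by omega
  refine ⟨hle, ?_, ?_⟩
  · rw [hq', bits_decomp _ _ _ hmod, if_neg (lt_irrefl r), Nat.sub_self]
    simp [Nat.testBit_eq_decide_div_mod_eq]; omega
  · rw [hq', bits_decomp _ _ _ hmod, if_neg (by omega : ¬ r + 1 < r)]
    have : r + 1 - r = 1 := by omega
    rw [this]
    simp [Nat.testBit_eq_decide_div_mod_eq]; omega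

/-- Adding a number all of whose bits below `w` vanish: low bits unchanged;
bit `w` behaves like xor. -/
lemma bits_add_low {q s : ℕ} (w : ℕ) (hs : ∀ i, i < w → s.testBit i = false) :
    (∀ i, i < w → (q + s).testBit i = q.testBit i) ∧
    (s.testBit w = false → (q + s).testBit w = q.testBit w) ∧
    (s.testBit w = true → q.testBit w = true → (q + s).testBit w = false) := by
  have hdvd : s % 2 ^ w = 0 := by
    have h' : ∀ i, (s % 2 ^ w).testBit i = false := by
      intro i
      rcases lt_or_ge i w with hi | hi
      · rw [Nat.testBit_mod_two_pow]
        simp [hs i hi]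
      · exact Nat.testBit_lt_two_pow (lt_of_lt_of_le
          (Nat.mod_lt _ (Nat.two_pow_pos w))
          (Nat.pow_le_pow_right (by norm_num) hi))
    exact Nat.zero_of_testBit_eq_false h'
  obtain ⟨S, rfl⟩ : ∃ S, s = 2 ^ w * S :=
    ⟨s / 2 ^ w, by have := Nat.div_add_mod s (2 ^ w); omega⟩
  have hmod : q % 2 ^ w < 2 ^ w := Nat.mod_lt _ (Nat.two_pow_pos w)
  have hq : q + 2 ^ w * S = q % 2 ^ w + 2 ^ w * (q / 2 ^ w + S) := by
    have h1 := Nat.div_add_mod q (2 ^ w)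
    have hk : 2 ^ w * (q / 2 ^ w + S) = 2 ^ w * (q / 2 ^ w) + 2 ^ w * S := by ring
    omega
  have hsbit : (2 ^ w * S).testBit w = decide (S % 2 = 1) := by
    have h0 : 2 ^ w * S = 0 + 2 ^ w * S := by omega
    rw [h0, bits_decomp _ _ _ (Nat.two_pow_pos w), if_neg (lt_irrefl w),
      Nat.sub_self, Nat.testBit_zero]
  have hqbit : q.testBit w = decide (q / 2 ^ w % 2 = 1) := Nat.testBit_eq_decide_div_mod_eq
  have hqsbit : (q + 2 ^ w * S).testBit w = decide ((q / 2 ^ w + S) % 2 = 1) := by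
    rw [hq, bits_decomp _ _ _ hmod, if_neg (lt_irrefl w), Nat.sub_self, Nat.testBit_zero]
  refine ⟨?_, ?_, ?_⟩
  · intro i hi
    have hqe : q = q % 2 ^ w + 2 ^ w * (q / 2 ^ w) := (Nat.mod_add_div _ _).symm
    rw [hq, bits_decomp _ _ _ hmod, if_pos hi]
    conv_rhs => rw [hqe]
    rw [bits_decomp _ _ _ hmod, if_pos hi]
  · intro h0
    rw [hsbit, decide_eq_false_iff_not] at h0
    rw [hqsbit, hqbit, decide_eq_decide]
    omega
  · intro h1 h2
    rw [hsbit, decide_eq_true_eq] at h1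
    rw [hqbit, decide_eq_true_eq] at h2
    rw [hqsbit, decide_eq_false_iff_not]
    omega

/-! ### Lucas' theorem mod 2 -/

lemma lucas_two : ∀ N n t, n + t ≤ N →
    (((n.choose t : ℕ) : ZMod 2) = 1 ↔ Sub2 t n) := by
  intro N
  induction N with
  | zero =>
    intro n t h
    have hn : n = 0 := by omega
    have ht : t = 0 := by omega
    subst hn; subst ht
    simp [Sub2]
  | succ N ih =>
    intro n t h
    have key : ((n.choose t : ℕ) : ZMod 2) =
        ((((n % 2).choose (t % 2)) * ((n / 2).choose (t / 2)) : ℕ) : ZMod 2) := by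
      have : Fact (Nat.Prime 2) := ⟨Nat.prime_two⟩
      exact (ZMod.natCast_eq_natCast_iff _ _ _).mpr
        (Choose.choose_modEq_choose_mod_mul_choose_div_nat (p := 2))
    rw [key, Nat.cast_mul]
    have hmul : ∀ x y : ZMod 2, x * y = 1 ↔ x = 1 ∧ y = 1 := by decide
    rw [hmul]
    have ihr : (((n / 2).choose (t / 2) : ℕ) : ZMod 2) = 1 ↔ Sub2 (t / 2) (n / 2) :=
      ih (n / 2) (t / 2) (by omega)
    have hlow : ((((n % 2).choose (t % 2)) : ℕ) : ZMod 2) = 1 ↔ (t % 2 = 1 → n % 2 = 1) := by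
      have h2 : n % 2 = 0 ∨ n % 2 = 1 := Nat.mod_two_eq_zero_or_one n
      have h3 : t % 2 = 0 ∨ t % 2 = 1 := Nat.mod_two_eq_zero_or_one t
      rcases h2 with h2 | h2 <;> rcases h3 with h3 | h3 <;> rw [h2, h3] <;> simp <;> decide
    rw [ihr, hlow]
    constructor
    · rintro ⟨h1, h2⟩ i hi
      cases i with
      | zero =>
        simp only [Nat.testBit_zero, decide_eq_true_eq] at *
        exact h1 hi
      | succ i =>
        rw [Nat.testBit_add_one] at *
        exact h2 i hi
    · intro hsub
      constructor
      · intro ht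
        have := hsub 0 (by simp [Nat.testBit_zero, ht])
        simpa using this
      · intro i hi
        have := hsub (i+1) (by rwa [Nat.testBit_add_one])
        rwa [Nat.testBit_add_one] at this

lemma choose_zmod_two_eq_one {n t : ℕ} (h : Sub2 t n) : ((n.choose t : ℕ) : ZMod 2) = 1 :=
  (lucas_two (n + t) n t le_rfl).mpr h

lemma sub2_of_choose_ne_zero {n t : ℕ} (h : ((n.choose t : ℕ) : ZMod 2) ≠ 0) : Sub2 t n := by
  have : ((n.choose t : ℕ) : ZMod 2) = 1 := by
    have := h; revert this; generalize ((n.choose t : ℕ) : ZMod 2) = x; revert x; decide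
  exact (lucas_two (n + t) n t le_rfl).mp this

section Alg
variable {k : ℕ}

lemma sq_X_pow (j : Fin k) (n : ℕ) :
    SqTotal k ((X j : MvPolynomial (Fin k) (ZMod 2)) ^ n) =
      ∑ t ∈ Finset.range (n + 1),
        monomial (Finsupp.single j (n + t)) ((n.choose t : ℕ) : ZMod 2) := by
  rw [map_pow]
  have h1 : SqTotal k (X j) = X j + X j ^ 2 := aeval_X _ _
  rw [h1, add_pow]
  rw [← Finset.sum_range_reflect]
  refine Finset.sum_congr rfl ?_
  intro t ht
  rw [Finset.mem_range] at ht
  have ht' : t ≤ n := by omega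
  have e0 : n + 1 - 1 - t = n - t := by omega
  have e1 : n - (n - t) = t := by omega
  rw [e0, e1, Nat.choose_symm ht']
  have e2 : (X j : MvPolynomial (Fin k) (ZMod 2)) ^ (n - t) * (X j ^ 2) ^ t =
      X j ^ (n + t) := by
    rw [← pow_mul, ← pow_add]
    congr 1
    omega
  rw [e2]
  rw [show ((n.choose t : MvPolynomial (Fin k) (ZMod 2))) = C ((n.choose t : ℕ) : ZMod 2) from
    (map_natCast (C : ZMod 2 →+* MvPolynomial (Fin k) (ZMod 2)) (n.choose t)).symm]
  rw [mul_comm, C_mul_X_pow_eq_monomial]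

lemma prod_monomial {ι : Type*} (s : Finset ι) (d : ι → (Fin k →₀ ℕ)) (c : ι → ZMod 2) :
    (∏ i ∈ s, (monomial (d i) (c i) : MvPolynomial (Fin k) (ZMod 2))) =
      monomial (∑ i ∈ s, d i) (∏ i ∈ s, c i) := by
  classical
  induction s using Finset.induction_on with
  | empty => simp [monomial_zero']
  | insert _ _ hnot ih =>
    rw [Finset.prod_insert hnot, Finset.sum_insert hnot, Finset.prod_insert hnot, ih,
      monomial_mul]

lemma univ_sum_single (v : Fin k → ℕ) :
    (∑ j : Fin k, Finsupp.single j (v j)) = Finsupp.equivFunOnFinite.symm v := by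
  ext i
  rw [Finsupp.finset_sum_apply]
  simp only [Finsupp.single_apply]
  rw [Finset.sum_ite_eq' (Finset.univ) i (fun j => v j)]
  simp [Finsupp.equivFunOnFinite]; rfl

lemma sq_monomial (b : Fin k →₀ ℕ) :
    SqTotal k (monomial b 1) =
      ∑ p ∈ Fintype.piFinset (fun j : Fin k => Finset.range (b j + 1)),
        monomial (b + Finsupp.equivFunOnFinite.symm p)
          (∏ j, (((b j).choose (p j) : ℕ) : ZMod 2)) := by
  have h0 : (monomial b 1 : MvPolynomial (Fin k) (ZMod 2)) = ∏ j, X j ^ b j := by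
    rw [monomial_eq, C_1, one_mul]
    rw [Finsupp.prod_fintype]
    intro i; exact pow_zero _
  rw [h0, map_prod]
  simp_rw [sq_X_pow]
  rw [Finset.prod_univ_sum]
  refine Finset.sum_congr rfl ?_
  intro p hp
  rw [prod_monomial]
  congr 1
  have : (∑ j : Fin k, Finsupp.single j (b j + p j)) =
      (∑ j : Fin k, Finsupp.single j (b j)) + ∑ j : Fin k, Finsupp.single j (p j) := by
    rw [← Finset.sum_add_distrib]
    refine Finset.sum_congr rfl fun j _ => ?_
    rw [Finsupp.single_add]
  rw [this, univ_sum_single, univ_sum_single]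
  congr 1
  ext i
  simp [Finsupp.equivFunOnFinite]

lemma coeff_sq_monomial_ne (b : Fin k →₀ ℕ) (μ : Fin k →₀ ℕ)
    (h : coeff μ (SqTotal k (monomial b 1)) ≠ 0) :
    ∃ p : Fin k → ℕ, (∀ j, Sub2 (p j) (b j)) ∧ μ = b + Finsupp.equivFunOnFinite.symm p := by
  rw [sq_monomial] at h
  rw [coeff_sum] at h
  have : ∃ p ∈ Fintype.piFinset (fun j : Fin k => Finset.range (b j + 1)),
      coeff μ (monomial (b + Finsupp.equivFunOnFinite.symm p)
        (∏ j, (((b j).choose (p j) : ℕ) : ZMod 2))) ≠ 0 := by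
    by_contra hc
    push_neg at hc
    exact h (Finset.sum_eq_zero hc)
  obtain ⟨p, _, hp⟩ := this
  rw [coeff_monomial] at hp
  split_ifs at hp with he
  · refine ⟨p, ?_, he.symm⟩
    intro j
    refine sub2_of_choose_ne_zero ?_
    intro hzero
    refine hp ?_
    exact Finset.prod_eq_zero (Finset.mem_univ j) hzero
  · exact absurd rfl hp

lemma coeff_sq_monomial_self (b : Fin k →₀ ℕ) (j₀ : Fin k) (r : ℕ)
    (hbit : (b j₀).testBit r = true) :
    coeff (b + Finsupp.single j₀ (2 ^ r)) (SqTotal k (monomial b 1)) = 1 := by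
  classical
  rw [sq_monomial, coeff_sum]
  set p₀ : Fin k → ℕ := fun j => if j = j₀ then 2 ^ r else 0 with hp₀
  have hsymm : Finsupp.equivFunOnFinite.symm p₀ = Finsupp.single j₀ (2 ^ r) := by
    ext i
    simp only [Finsupp.equivFunOnFinite, Finsupp.single_apply, hp₀]
    by_cases hi : i = j₀
    · subst hi; simp
    · simp [hi, Ne.symm hi]
  have hge : 2 ^ r ≤ b j₀ := Nat.ge_two_pow_of_testBit hbit
  have hmem : p₀ ∈ Fintype.piFinset (fun j : Fin k => Finset.range (b j + 1)) := by
    rw [Fintype.mem_piFinset]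
    intro j
    rw [Finset.mem_range, hp₀]
    by_cases hj : j = j₀ <;> simp [hj] <;> omega
  rw [Finset.sum_eq_single_of_mem p₀ hmem]
  · rw [hsymm, coeff_monomial, if_pos rfl]
    rw [Finset.prod_eq_single j₀]
    · have hsub : Sub2 (2 ^ r) (b j₀) := by
        intro i hi
        rw [Nat.testBit_two_pow] at hi
        have : r = i := by simpa using hi
        rwa [← this]
      have : p₀ j₀ = 2 ^ r := by simp [hp₀]
      rw [this]
      exact choose_zmod_two_eq_one hsub
    · intro j _ hj
      have : p₀ j = 0 := by simp [hp₀, hj]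
      rw [this, Nat.choose_zero_right, Nat.cast_one]
    · intro h; exact absurd (Finset.mem_univ j₀) h
  · intro p hp hne
    rw [coeff_monomial, if_neg]
    intro he
    have h2 : Finsupp.equivFunOnFinite.symm p = Finsupp.single j₀ (2 ^ r) :=
      add_left_cancel he
    refine hne ?_
    rw [← hsymm] at h2
    have := Finsupp.equivFunOnFinite.symm.injective h2
    exact this
end Alg

section Part3
variable {k : ℕ}

lemma degree_univ_sum (μ : Fin k →₀ ℕ) : μ.degree = ∑ j, μ j := by
  rw [Finsupp.degree]
  exact Finset.sum_subset (Finset.subset_univ _)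
    (fun x _ hx => Finsupp.notMem_support_iff.mp hx)

lemma homComp_monomial (b : Fin k →₀ ℕ) (d : ℕ) :
    homogeneousComponent d (monomial b (1 : ZMod 2)) =
      if b.degree = d then monomial b (1 : ZMod 2) else 0 := by
  by_cases h : b.degree = d
  · rw [if_pos h]
    ext μ
    rw [coeff_homogeneousComponent]
    by_cases h2 : μ.degree = d
    · rw [if_pos h2]
    · rw [if_neg h2, coeff_monomial, if_neg]
      intro he; subst he; exact h2 h
  · rw [if_neg h]
    ext μ
    rw [coeff_homogeneousComponent, coeff_zero]
    by_cases h2 : μ.degree = d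
    · rw [if_pos h2, coeff_monomial, if_neg]
      intro he; subst he; exact h h2
    · rw [if_neg h2]

lemma sqOp_monomial (i : ℕ) (b : Fin k →₀ ℕ) :
    SqOp k i (monomial b 1) =
      homogeneousComponent (b.degree + i) (SqTotal k (monomial b (1 : ZMod 2))) := by
  rw [SqOp]
  have htd : (monomial b (1 : ZMod 2)).totalDegree = b.degree := by
    rw [totalDegree_monomial _ (one_ne_zero)]
    rfl
  rw [htd]
  rw [Finset.sum_eq_single_of_mem b.degree (Finset.mem_range.mpr (Nat.lt_succ_self _))]
  · rw [homComp_monomial, if_pos rfl]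
  · intro d _ hd
    rw [homComp_monomial, if_neg (fun h => hd h.symm), map_zero, map_zero]

/-- The order lemma: each non-leading monomial in `Sq^{2^r}(x^b)` is smaller than
`a = b + 2^r e_{j₀}` in the weight-vector order. -/
lemma order_lemma (r : ℕ) (b : Fin k →₀ ℕ) (j₀ : Fin k)
    (hbr : (b j₀).testBit r = true) (hbr1 : (b j₀).testBit (r+1) = false)
    (a : Fin k →₀ ℕ) (ha : a = b + Finsupp.single j₀ (2 ^ r))
    (hAB : (∀ j, (a j).testBit r = false) ∨ (∀ j, (a j).testBit (r+1) = true))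
    (p : Fin k → ℕ) (hsub : ∀ j, Sub2 (p j) (b j))
    (hsum : ∑ j, p j = 2 ^ r)
    (μ : Fin k →₀ ℕ) (hμ : ∀ j, μ j = b j + p j)
    (hne : μ ≠ a) :
    wlt (wvec k μ) (wvec k a) := by
  classical
  have haj : ∀ j, j ≠ j₀ → a j = b j := by
    intro j hj
    rw [ha, Finsupp.add_apply, Finsupp.single_apply, if_neg (Ne.symm hj), add_zero]
  have haj₀ : a j₀ = b j₀ + 2 ^ r := by
    rw [ha, Finsupp.add_apply, Finsupp.single_apply, if_pos rfl]
  obtain ⟨hAlo, hAr, hAr1, _⟩ := bits_add_pow r hbr hbr1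
  by_cases hcase : ∃ j₁, p j₁ = 2 ^ r
  · -- Case 1
    obtain ⟨j₁, hj₁⟩ := hcase
    have hall : ∀ j, j ≠ j₁ → p j = 0 := by
      have hsplit := Finset.add_sum_erase Finset.univ p (Finset.mem_univ j₁)
      have hzero : ∑ j ∈ Finset.univ.erase j₁, p j = 0 := by omega
      intro j hj
      exact (Finset.sum_eq_zero_iff.mp hzero) j
        (Finset.mem_erase.mpr ⟨hj, Finset.mem_univ j⟩)
    have hj₁j₀ : j₁ ≠ j₀ := by
      intro he
      subst he
      apply hne
      ext j
      by_cases hj : j = j₁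
      · subst hj; rw [hμ, hj₁, haj₀]
      · rw [hμ, hall j hj, haj j hj, add_zero]
    have hb1r : (b j₁).testBit r = true := by
      apply hsub j₁ r
      rw [hj₁]
      exact Nat.testBit_two_pow_self
    have ha1r : (a j₁).testBit r = true := by rw [haj j₁ hj₁j₀]; exact hb1r
    have condB : ∀ j, (a j).testBit (r+1) = true := by
      rcases hAB with hA | hB
      · exact absurd ha1r (by rw [hA j₁]; simp)
      · exact hB
    have hb1r1 : (b j₁).testBit (r+1) = true := by
      rw [← haj j₁ hj₁j₀]; exact condB j₁
    obtain ⟨hBlo, hBr, hBr1⟩ := bits_add_pow' r hb1r hb1r1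
    have hμj₀ : μ j₀ = b j₀ := by rw [hμ, hall j₀ (Ne.symm hj₁j₀), add_zero]
    have hμj₁ : μ j₁ = b j₁ + 2 ^ r := by rw [hμ, hj₁]
    have hμother : ∀ j, j ≠ j₀ → j ≠ j₁ → μ j = a j := by
      intro j h1 h2
      rw [hμ, hall j h2, add_zero, haj j h1]
    refine ⟨r + 1, ?_, ?_⟩
    · intro m hm
      rcases Nat.lt_or_ge m r with hmr | hmr
      · -- pointwise equality of bits
        unfold wvec
        congr 1
        apply Finset.filter_congr
        intro j _
        by_cases h1 : j = j₀
        · subst h1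
          rw [hμj₀, haj₀, hAlo m hmr]
        · by_cases h2 : j = j₁
          · rw [h2, hμj₁, hBlo m hmr, haj j₁ hj₁j₀]
          · rw [hμother j h1 h2]
      · have hmr' : m = r := by omega
        subst hmr'
        unfold wvec
        have hset : Finset.univ.filter (fun j => (μ j).testBit m) =
            insert j₀ ((Finset.univ.filter (fun j => (a j).testBit m)).erase j₁) := by
          ext j
          simp only [Finset.mem_filter, Finset.mem_univ, true_and, Finset.mem_insert,
            Finset.mem_erase]
          by_cases h1 : j = j₀
          · subst h1
            simp only [hμj₀, hbr]
            tauto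
          · by_cases h2 : j = j₁
            · rw [h2, hμj₁, hBr]
              simp [hj₁j₀]
            · rw [hμother j h1 h2]
              constructor
              · intro hb; right; exact ⟨h2, hb⟩
              · rintro (hc | ⟨_, hb⟩)
                · exact absurd hc h1
                · exact hb
        rw [hset]
        have hj₀notin : j₀ ∉ (Finset.univ.filter (fun j => (a j).testBit m)).erase j₁ := by
          intro hc
          have := (Finset.mem_erase.mp hc).2
          rw [Finset.mem_filter] at this
          rw [haj₀, hAr] at this
          simpa using this.2
        rw [Finset.card_insert_of_notMem hj₀notin]
        have hj₁in : j₁ ∈ Finset.univ.filter (fun j => (a j).testBit m) := by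
          rw [Finset.mem_filter]
          exact ⟨Finset.mem_univ _, ha1r⟩
        rw [Finset.card_erase_of_mem hj₁in]
        have : 1 ≤ (Finset.univ.filter (fun j => (a j).testBit m)).card :=
          Finset.card_pos.mpr ⟨j₁, hj₁in⟩
        omega
    · -- strict inequality at r+1
      unfold wvec
      have hak : (Finset.univ.filter (fun j => (a j).testBit (r+1))).card = k := by
        rw [Finset.filter_true_of_mem (fun j _ => condB j), Finset.card_univ, Fintype.card_fin]
      rw [hak]
      have hsubset : Finset.univ.filter (fun j => (μ j).testBit (r+1)) ⊆
          (Finset.univ.erase j₀).erase j₁ := by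
        intro j hj
        rw [Finset.mem_filter] at hj
        rw [Finset.mem_erase, Finset.mem_erase]
        refine ⟨?_, ?_, Finset.mem_univ _⟩
        · intro he; subst he
          rw [hμj₁, hBr1] at hj
          simpa using hj.2
        · intro he; subst he
          rw [hμj₀, hbr1] at hj
          simpa using hj.2
      have hcard := Finset.card_le_card hsubset
      have h1 : j₁ ∈ Finset.univ.erase j₀ := Finset.mem_erase.mpr ⟨hj₁j₀, Finset.mem_univ _⟩
      rw [Finset.card_erase_of_mem h1, Finset.card_erase_of_mem (Finset.mem_univ j₀),
        Finset.card_univ, Fintype.card_fin] at hcard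
      have hk : 0 < k := Fin.pos j₀
      omega
  · -- Case 2
    push_neg at hcase
    have hple : ∀ j, p j ≤ 2 ^ r := by
      intro j
      rw [← hsum]
      exact Finset.single_le_sum (fun i _ => Nat.zero_le _) (Finset.mem_univ j)
    have hpne : ∃ j, p j ≠ 0 := by
      by_contra hc
      push_neg at hc
      have h0 : ∑ j, p j = 0 := Finset.sum_eq_zero (fun j _ => hc j)
      have hpow : 0 < 2 ^ r := Nat.two_pow_pos r
      omega
    obtain ⟨j₂, hj₂⟩ := hpne
    have hex : ∃ w, ∃ j, (p j).testBit w = true := by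
      obtain ⟨i, hi⟩ := Nat.exists_testBit_of_ne_zero hj₂
      exact ⟨i, j₂, hi⟩
    set w := Nat.find hex with hwdef
    obtain ⟨j₁, hj₁⟩ := Nat.find_spec hex
    have hmin : ∀ v, v < w → ∀ j, (p j).testBit v = false := by
      intro v hv j
      have := Nat.find_min hex hv
      push_neg at this
      exact Bool.not_eq_true _ ▸ (by simpa using this j)
    have hwr : w < r := by
      have h1 : 2 ^ w ≤ p j₁ := Nat.ge_two_pow_of_testBit hj₁
      have h2 : p j₁ < 2 ^ r := lt_of_le_of_ne (hple j₁) (hcase j₁)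
      have := lt_of_le_of_lt h1 h2
      exact (Nat.pow_lt_pow_iff_right (by norm_num)).mp this
    have lows : ∀ j, (∀ i, i < w → ((b j) + (p j)).testBit i = (b j).testBit i) ∧
        ((p j).testBit w = false → ((b j) + (p j)).testBit w = (b j).testBit w) ∧
        ((p j).testBit w = true → (b j).testBit w = true →
          ((b j) + (p j)).testBit w = false) := by
      intro j
      exact bits_add_low w (fun i hi => hmin i hi j)
    have habit : ∀ j, ∀ i, i < r → (a j).testBit i = (b j).testBit i := by
      intro j i hi
      by_cases h1 : j = j₀
      · subst h1; rw [haj₀]; exact hAlo i hi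
      · rw [haj j h1]
    refine ⟨w, ?_, ?_⟩
    · intro m hm
      unfold wvec
      congr 1
      apply Finset.filter_congr
      intro j _
      rw [hμ, (lows j).1 m hm, habit j m (by omega)]
    · unfold wvec
      apply Finset.card_lt_card
      rw [Finset.ssubset_iff_of_subset]
      · refine ⟨j₁, ?_, ?_⟩
        · rw [Finset.mem_filter]
          refine ⟨Finset.mem_univ _, ?_⟩
          rw [habit j₁ w hwr]
          exact hsub j₁ w hj₁
        · rw [Finset.mem_filter]
          push_neg
          intro _
          rw [hμ, (lows j₁).2.2 hj₁ (hsub j₁ w hj₁)]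
          simp
      · intro j hj
        rw [Finset.mem_filter] at hj
        obtain ⟨_, hbit⟩ := hj
        rw [Finset.mem_filter]
        refine ⟨Finset.mem_univ _, ?_⟩
        rw [hμ] at hbit
        by_cases hp : (p j).testBit w = true
        · rw [(lows j).2.2 hp (hsub j w hp)] at hbit
          simpa using hbit
        · rw [(lows j).2.1 (Bool.not_eq_true _ ▸ (by simpa using hp))] at hbit
          rw [habit j w hwr]
          exact hbit
end Part3
section Part4
variable {k : ℕ}

lemma zmod2_ne_zero {x : ZMod 2} (h : x ≠ 0) : x = 1 := by revert h; revert x; decide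

lemma key_lemma (r : ℕ) (a : Fin k →₀ ℕ) (j₀ : Fin k)
    (h0 : (a j₀).testBit r = false) (h1 : (a j₀).testBit (r+1) = true)
    (hAB : (∀ j, (a j).testBit r = false) ∨ (∀ j, (a j).testBit (r+1) = true)) :
    Inadmissible k a := by
  classical
  obtain ⟨hle, hbr, hbr1⟩ := bits_sub_pow r h0 h1
  set b : Fin k →₀ ℕ := a.update j₀ (a j₀ - 2 ^ r) with hbdef
  have hbapp : ∀ j, b j = if j = j₀ then a j₀ - 2 ^ r else a j := by
    intro j
    by_cases hj : j = j₀
    · subst hj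
      simp [hbdef, Finsupp.coe_update, Function.update_apply]
    · simp [hbdef, Finsupp.coe_update, Function.update_apply, hj]
  have hbj₀ : b j₀ = a j₀ - 2 ^ r := by rw [hbapp]; simp
  have hbj : ∀ j, j ≠ j₀ → b j = a j := by
    intro j hj; rw [hbapp, if_neg hj]
  have ha : a = b + Finsupp.single j₀ (2 ^ r) := by
    ext j
    rw [Finsupp.add_apply, Finsupp.single_apply]
    by_cases hj : j = j₀
    · subst hj; rw [hbj₀, if_pos rfl]; omega
    · rw [hbj j hj, if_neg (Ne.symm hj), add_zero]
  have hbrt : (b j₀).testBit r = true := by rw [hbj₀]; exact hbr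
  have hbrf : (b j₀).testBit (r+1) = false := by rw [hbj₀]; exact hbr1
  set h : MvPolynomial (Fin k) (ZMod 2) := SqOp k (2 ^ r) (monomial b 1) with hh
  have hN : h = homogeneousComponent (b.degree + 2 ^ r) (SqTotal k (monomial b 1)) :=
    sqOp_monomial _ _
  have hadeg : a.degree = b.degree + 2 ^ r := by
    rw [degree_univ_sum, degree_univ_sum, ha]
    simp only [Finsupp.add_apply]
    rw [Finset.sum_add_distrib]
    congr 1
    simp only [Finsupp.single_apply]
    rw [Finset.sum_ite_eq Finset.univ j₀ (fun _ => 2 ^ r), if_pos (Finset.mem_univ _)]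
  -- coefficient of a in h is 1
  have F1 : coeff a h = 1 := by
    rw [hN, coeff_homogeneousComponent, if_pos hadeg, ha]
    exact coeff_sq_monomial_self b j₀ r hbrt
  have haSupp : a ∈ h.support := by
    rw [mem_support_iff, F1]; exact one_ne_zero
  -- all support monomials have the right degree
  have F2 : ∀ μ ∈ h.support, μ.degree = a.degree := by
    intro μ hμ
    rw [mem_support_iff, hN, coeff_homogeneousComponent] at hμ
    by_cases hd : μ.degree = b.degree + 2 ^ r
    · rw [hd, hadeg]
    · rw [if_neg hd] at hμ; exact absurd rfl hμ
  -- all other support monomials are strictly smaller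
  have F3 : ∀ μ ∈ h.support, μ ≠ a → wlt (wvec k μ) (wvec k a) := by
    intro μ hμs hμne
    have hc : coeff μ (SqTotal k (monomial b 1)) ≠ 0 := by
      rw [mem_support_iff, hN, coeff_homogeneousComponent] at hμs
      by_cases hd : μ.degree = b.degree + 2 ^ r
      · rwa [if_pos hd] at hμs
      · rw [if_neg hd] at hμs; exact absurd rfl hμs
    obtain ⟨p, hsub, hpe⟩ := coeff_sq_monomial_ne b μ hc
    have hμj : ∀ j, μ j = b j + p j := by
      intro j
      rw [hpe, Finsupp.add_apply]
      congr 1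
    have hsum : ∑ j, p j = 2 ^ r := by
      have e1 : ∑ j, μ j = ∑ j, (b j + p j) :=
        Finset.sum_congr rfl (fun j _ => hμj j)
      rw [Finset.sum_add_distrib] at e1
      have e2 : ∑ j, μ j = ∑ j, b j + 2 ^ r := by
        rw [← degree_univ_sum, ← degree_univ_sum, F2 μ hμs, hadeg]
      omega
    exact order_lemma r b j₀ hbrt hbrf a ha hAB p hsub hsum μ hμj hμne
  -- assemble the Inadmissible witness
  set s : Finset (Fin k →₀ ℕ) := h.support.erase a with hsdef
  have hcard : Fintype.card ↥s = s.card := Fintype.card_coe s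
  set e : ↥s ≃ Fin s.card := Fintype.equivFinOfCardEq hcard with hedef
  refine ⟨s.card, fun i => ((e.symm i : ↥s) : Fin k →₀ ℕ), ?_, ?_, ?_⟩
  · intro i
    have hmem : ((e.symm i : ↥s) : Fin k →₀ ℕ) ∈ s := (e.symm i).2
    have := F2 _ (Finset.mem_of_mem_erase hmem)
    rw [degree_univ_sum, degree_univ_sum] at this
    exact this
  · intro i
    have hmem : ((e.symm i : ↥s) : Fin k →₀ ℕ) ∈ s := (e.symm i).2
    exact Or.inl (F3 _ (Finset.mem_of_mem_erase hmem) (Finset.ne_of_mem_erase hmem))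
  · have heq : (MvPolynomial.monomial a (1 : ZMod 2)) +
        ∑ i : Fin s.card, MvPolynomial.monomial ((e.symm i : ↥s) : Fin k →₀ ℕ) (1 : ZMod 2)
        = h := by
      have e1 : (∑ i : Fin s.card,
          MvPolynomial.monomial ((e.symm i : ↥s) : Fin k →₀ ℕ) (1 : ZMod 2)) =
          ∑ x : ↥s, MvPolynomial.monomial (x : Fin k →₀ ℕ) (1 : ZMod 2) :=
        Equiv.sum_comp e.symm (fun x : ↥s => MvPolynomial.monomial (x : Fin k →₀ ℕ) (1 : ZMod 2))
      rw [e1, Finset.sum_coe_sort s (fun μ => MvPolynomial.monomial μ (1 : ZMod 2))]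
      have e2 : (MvPolynomial.monomial a (1 : ZMod 2)) + ∑ μ ∈ s, MvPolynomial.monomial μ 1 =
          ∑ μ ∈ insert a s, MvPolynomial.monomial μ 1 := by
        rw [Finset.sum_insert (Finset.notMem_erase a h.support)]
      rw [e2, hsdef, Finset.insert_erase haSupp]
      have e3 : ∀ μ ∈ h.support, (MvPolynomial.monomial μ (1 : ZMod 2)) =
          MvPolynomial.monomial μ (coeff μ h) := by
        intro μ hμ
        rw [zmod2_ne_zero (mem_support_iff.mp hμ)]
      rw [Finset.sum_congr rfl e3]
      exact support_sum_monomial_coeff h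
    rw [heq]
    exact Submodule.subset_span ⟨2 ^ r, monomial b 1, Nat.two_pow_pos r, rfl⟩

lemma wvec_le (a : Fin k →₀ ℕ) (i : ℕ) : wvec k a i ≤ k := by
  unfold wvec
  calc (Finset.univ.filter fun j : Fin k => Nat.testBit (a j) i).card
      ≤ Finset.univ.card := Finset.card_filter_le _ _
    _ = k := by rw [Finset.card_univ, Fintype.card_fin]

lemma wvec_zero_bits {a : Fin k →₀ ℕ} {i : ℕ} (h : wvec k a i = 0) :
    ∀ j, (a j).testBit i = false := by
  intro j
  unfold wvec at h
  rw [Finset.card_eq_zero] at h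
  by_contra hc
  have : j ∈ Finset.univ.filter fun j : Fin k => Nat.testBit (a j) i :=
    Finset.mem_filter.mpr ⟨Finset.mem_univ _, by simpa using hc⟩
  rw [h] at this
  exact absurd this (Finset.notMem_empty j)

lemma wvec_pos_bit {a : Fin k →₀ ℕ} {i : ℕ} (h : wvec k a i ≠ 0) :
    ∃ j, (a j).testBit i = true := by
  unfold wvec at h
  obtain ⟨j, hj⟩ := Finset.card_pos.mp (Nat.pos_of_ne_zero h)
  exact ⟨j, (Finset.mem_filter.mp hj).2⟩

lemma wvec_eq_k_bits {a : Fin k →₀ ℕ} {i : ℕ} (h : wvec k a i = k) :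
    ∀ j, (a j).testBit i = true := by
  intro j
  unfold wvec at h
  have : Finset.univ.filter (fun j : Fin k => Nat.testBit (a j) i) = Finset.univ := by
    apply Finset.eq_univ_of_card
    rw [h, Fintype.card_fin]
  have hj : j ∈ Finset.univ.filter (fun j : Fin k => Nat.testBit (a j) i) := by
    rw [this]; exact Finset.mem_univ _
  exact (Finset.mem_filter.mp hj).2

lemma wvec_lt_k_bit {a : Fin k →₀ ℕ} {i : ℕ} (h : wvec k a i < k) :
    ∃ j, (a j).testBit i = false := by
  by_contra hc
  push_neg at hc
  have : ∀ j, (a j).testBit i = true := fun j => by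
    have := hc j; revert this; cases (a j).testBit i <;> simp
  have : wvec k a i = k := by
    unfold wvec
    rw [Finset.filter_true_of_mem (fun j _ => this j), Finset.card_univ, Fintype.card_fin]
  omega
/-- Proposition 2.10: let `x` be an admissible monomial in `P_k`.
(i) If `ω_{i_0}(x) = 0` then `ω_i(x) = 0` for all `i > i_0`.
(ii) If `ω_{i_0}(x) < k` then `ω_i(x) < k` for all `i > i_0`. -/
theorem stmt15 (k : ℕ) (a : Fin k →₀ ℕ) (ha : Admissible k a) :
    (∀ i₀, wvec k a i₀ = 0 → ∀ i, i₀ < i → wvec k a i = 0) ∧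
    (∀ i₀, wvec k a i₀ < k → ∀ i, i₀ < i → wvec k a i < k) := by
  constructor
  · intro i₀ h0 i hi
    have key : ∀ d, wvec k a (i₀ + d) = 0 := by
      intro d
      induction d with
      | zero => simpa using h0
      | succ d ih =>
        by_contra hne
        have hzero := wvec_zero_bits ih
        obtain ⟨j₀, hj₀⟩ := wvec_pos_bit (show wvec k a ((i₀ + d) + 1) ≠ 0 from hne)
        exact ha (key_lemma (i₀ + d) a j₀ (hzero j₀) hj₀ (Or.inl hzero))
    have he : i = i₀ + (i - i₀) := by omega
    rw [he]
    exact key _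
  · intro i₀ h0 i hi
    have key : ∀ d, wvec k a (i₀ + d) < k := by
      intro d
      induction d with
      | zero => simpa using h0
      | succ d ih =>
        by_contra hge
        push_neg at hge
        have hk : wvec k a ((i₀ + d) + 1) = k := le_antisymm (wvec_le a _) hge
        have hall := wvec_eq_k_bits hk
        obtain ⟨j₀, hj₀⟩ := wvec_lt_k_bit ih
        exact ha (key_lemma (i₀ + d) a j₀ hj₀ (hall j₀) (Or.inr hall))
    have he : i = i₀ + (i - i₀) := by omega
    rw [he]
    exact key _
end Part4
end
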